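/- arXiv:2408.15417 — 8 statements merged into one kernel-verified Lean document; each statement's English description precedes it below -/
import Mathlib

section
/- For every λ > 0, the optimal value of the NTP-UFM problem, min over W ∈ ℝ^{V×d} and H ∈ ℝ^{d×m} of CE(WH) + (λ/2)‖W‖_F² + (λ/2)‖H‖_F², equals the optimal value of the rank-constrained nuclear-norm-regularized logit problem, min over L ∈ ℝ^{V×m} with rank(L) ≤ d of CE(L) + λ‖L‖_*. -/
open Filter Topology Matrix

noncomputable section

/-- Frobenius norm of a real matrix. -/
def frobNorm {a b : ℕ} (A : Matrix (Fin a) (Fin b) ℝ) : ℝ :=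
  Real.sqrt (∑ i, ∑ j, (A i j) ^ 2)

/-- Nuclear norm: sum of the singular values of `A`, i.e. of the square roots of the
eigenvalues of `Aᴴ * A`. -/
def nuclearNorm {a b : ℕ} (A : Matrix (Fin a) (Fin b) ℝ) : ℝ :=
  ∑ i, Real.sqrt ((Matrix.isHermitian_conjTranspose_mul_self A).eigenvalues i)

/-- The NTP cross-entropy loss. -/
def CEloss {V m : ℕ} (piv : Fin m → ℝ) (p : Fin m → Fin V → ℝ)
    (L : Matrix (Fin V) (Fin m) ℝ) : ℝ :=
  - ∑ j, piv j * ∑ z ∈ Finset.univ.filter (fun z => 0 < p j z),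
      p j z * Real.log (Real.exp (L z j) / ∑ v, Real.exp (L v j))

namespace NTPAux

lemma sum_ite_mul_ite {α : Type*} [Fintype α] [DecidableEq α] {d : ℕ}
    (e : α → Fin d) (he : Function.Injective e) (g h : α → ℝ) :
    ∑ i : Fin d, (∑ j, if e j = i then g j else 0) * (∑ j', if e j' = i then h j' else 0)
      = ∑ j, g j * h j := by
  have key : ∀ i : Fin d,
      (∑ j, if e j = i then g j else 0) * (∑ j', if e j' = i then h j' else 0)
      = ∑ j, ∑ j', if e j' = i then (if e j = i then g j * h j' else 0) else 0 := by
    intro i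
    rw [Finset.sum_mul_sum]
    simp [ite_mul, mul_ite]
  simp_rw [key]
  rw [Finset.sum_comm]
  have key2 : ∀ j : α, (∑ i : Fin d, ∑ j',
      if e j' = i then (if e j = i then g j * h j' else 0) else 0) = g j * h j := by
    intro j
    rw [Finset.sum_comm]
    have : ∀ j' : α, (∑ i : Fin d,
        if e j' = i then (if e j = i then g j * h j' else 0) else 0)
        = if j = j' then g j * h j' else 0 := by
      intro j'
      rw [Finset.sum_ite_eq Finset.univ (e j') (fun i => if e j = i then g j * h j' else 0)]
      simp [he.eq_iff]
    simp_rw [this]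
    simp
  simp_rw [key2]

lemma bessel_aux {n : ℕ} {ι : Type*} [DecidableEq ι] (S : Finset ι) (u : ι → Fin n → ℝ)
    (hu : ∀ j ∈ S, ∀ j' ∈ S, ∑ z, u j z * u j' z = if j = j' then 1 else 0)
    (w : Fin n → ℝ) :
    ∑ j ∈ S, (∑ z, w z * u j z) ^ 2 ≤ ∑ z, (w z) ^ 2 := by
  set c : ι → ℝ := fun j => ∑ z, w z * u j z with hc
  have mid : ∑ z, w z * ∑ j ∈ S, c j * u j z = ∑ j ∈ S, c j ^ 2 := by
    simp_rw [Finset.mul_sum]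
    rw [Finset.sum_comm]
    refine Finset.sum_congr rfl fun j _ => ?_
    calc ∑ z, w z * (c j * u j z) = ∑ z, c j * (w z * u j z) :=
          Finset.sum_congr rfl fun z _ => by ring
      _ = c j * ∑ z, w z * u j z := (Finset.mul_sum _ _ _).symm
      _ = c j ^ 2 := by rw [hc]; ring
  have last : ∑ z, (∑ j ∈ S, c j * u j z) * (∑ j' ∈ S, c j' * u j' z) = ∑ j ∈ S, c j ^ 2 := by
    have e : ∀ z, (∑ j ∈ S, c j * u j z) * (∑ j' ∈ S, c j' * u j' z)
        = ∑ j ∈ S, ∑ j' ∈ S, (c j * u j z) * (c j' * u j' z) := fun z =>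
      Finset.sum_mul_sum _ _ _ _
    rw [Finset.sum_congr rfl fun z _ => e z, Finset.sum_comm]
    refine Finset.sum_congr rfl fun j hj => ?_
    rw [Finset.sum_comm]
    have step : ∀ j' ∈ S, ∑ z, (c j * u j z) * (c j' * u j' z)
        = if j = j' then c j * c j' else 0 := by
      intro j' hj'
      calc ∑ z, (c j * u j z) * (c j' * u j' z) = (c j * c j') * ∑ z, u j z * u j' z := by
            rw [Finset.mul_sum]; exact Finset.sum_congr rfl fun z _ => by ring
        _ = (c j * c j') * (if j = j' then 1 else 0) := by rw [hu j hj j' hj']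
        _ = if j = j' then c j * c j' else 0 := by split <;> ring
    rw [Finset.sum_congr rfl step, Finset.sum_ite_eq S j]
    simp [hj]
    ring
  have h0 : (0:ℝ) ≤ ∑ z, (w z - ∑ j ∈ S, c j * u j z) ^ 2 :=
    Finset.sum_nonneg fun z _ => sq_nonneg _
  have hexp : ∑ z, (w z - ∑ j ∈ S, c j * u j z) ^ 2
      = ∑ z, (w z)^2 - 2 * ∑ j ∈ S, (c j)^2 + ∑ j ∈ S, (c j)^2 := by
    have e1 : ∀ z, (w z - ∑ j ∈ S, c j * u j z) ^ 2
        = (w z)^2 - 2 * (w z * ∑ j ∈ S, c j * u j z)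
          + (∑ j ∈ S, c j * u j z) * (∑ j' ∈ S, c j' * u j' z) := fun z => by ring
    rw [Finset.sum_congr rfl fun z _ => e1 z, Finset.sum_add_distrib, Finset.sum_sub_distrib,
      ← Finset.mul_sum, mid, last]
  rw [hexp] at h0
  linarith

lemma parseval {b : ℕ} (v : Fin b → Fin b → ℝ)
    (hv : ∀ k t, ∑ j, v j k * v j t = if k = t then 1 else 0) (w : Fin b → ℝ) :
    ∑ j, (∑ k, w k * v j k) ^ 2 = ∑ k, w k ^ 2 := by
  have e : ∀ j, (∑ k, w k * v j k) ^ 2 = ∑ k, ∑ t, (w k * v j k) * (w t * v j t) := by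
    intro j; rw [sq, Finset.sum_mul_sum]
  rw [Finset.sum_congr rfl fun j _ => e j, Finset.sum_comm]
  have e2 : ∀ k, ∑ j, ∑ t, (w k * v j k) * (w t * v j t) = w k ^ 2 := by
    intro k
    rw [Finset.sum_comm]
    have e3 : ∀ t, ∑ j, (w k * v j k) * (w t * v j t)
        = if k = t then w k * w t else 0 := by
      intro t
      calc ∑ j, (w k * v j k) * (w t * v j t) = (w k * w t) * ∑ j, v j k * v j t := by
            rw [Finset.mul_sum]; exact Finset.sum_congr rfl fun j _ => by ring
        _ = (w k * w t) * (if k = t then 1 else 0) := by rw [hv]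
        _ = if k = t then w k * w t else 0 := by split <;> ring
    rw [Finset.sum_congr rfl fun t _ => e3 t, Finset.sum_ite_eq Finset.univ k]
    simp [sq]
  rw [Finset.sum_congr rfl fun k _ => e2 k]

lemma dot_half {n : ℕ} (x y : Fin n → ℝ) :
    ∑ z, x z * y z ≤ ((∑ z, x z ^ 2) + ∑ z, y z ^ 2) / 2 := by
  have h0 : (0:ℝ) ≤ ∑ z, (x z - y z) ^ 2 := Finset.sum_nonneg fun z _ => sq_nonneg _
  have e : ∑ z, (x z - y z) ^ 2
      = ∑ z, x z ^ 2 - 2 * ∑ z, x z * y z + ∑ z, y z ^ 2 := by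
    have e1 : ∀ z : Fin n, (x z - y z) ^ 2 = x z ^ 2 - 2 * (x z * y z) + y z ^ 2 :=
      fun z => by ring
    rw [Finset.sum_congr rfl fun z _ => e1 z, Finset.sum_add_distrib, Finset.sum_sub_distrib,
      ← Finset.mul_sum]
  rw [e] at h0
  linarith

def ev (M : Matrix (Fin a) (Fin b) ℝ) : Fin b → ℝ :=
  (isHermitian_conjTranspose_mul_self M).eigenvalues

def evec (M : Matrix (Fin a) (Fin b) ℝ) : Fin b → Fin b → ℝ :=
  fun j i => (isHermitian_conjTranspose_mul_self M).eigenvectorBasis j i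

lemma ev_nonneg (M : Matrix (Fin a) (Fin b) ℝ) (j : Fin b) : 0 ≤ ev M j :=
  Matrix.eigenvalues_conjTranspose_mul_self_nonneg M j

lemma nuclearNorm_eq (M : Matrix (Fin a) (Fin b) ℝ) :
    nuclearNorm M = ∑ j, Real.sqrt (ev M j) := rfl

lemma evec_coe (M : Matrix (Fin a) (Fin b) ℝ) (j : Fin b) :
    ⇑((isHermitian_conjTranspose_mul_self M).eigenvectorBasis j) = evec M j := rfl

lemma evec_orth (M : Matrix (Fin a) (Fin b) ℝ) (j j' : Fin b) :
    ∑ i, evec M j i * evec M j' i = if j = j' then 1 else 0 := by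
  have h := (isHermitian_conjTranspose_mul_self M).eigenvectorBasis.orthonormal
  rw [orthonormal_iff_ite] at h
  have h2 := h j j'
  simp [PiLp.inner_apply, RCLike.inner_apply, conj_trivial] at h2
  rw [← h2]; exact Finset.sum_congr rfl fun i _ => mul_comm _ _

lemma evec_complete (M : Matrix (Fin a) (Fin b) ℝ) (k t : Fin b) :
    ∑ j, evec M j k * evec M j t = if k = t then 1 else 0 := by
  have h := (isHermitian_conjTranspose_mul_self M).eigenvectorBasis.sum_inner_mul_inner
    (EuclideanSpace.single k (1:ℝ)) (EuclideanSpace.single t (1:ℝ))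
  simp [EuclideanSpace.inner_single_left, EuclideanSpace.inner_single_right,
    EuclideanSpace.single_apply] at h
  simp only [evec]
  exact h.trans (if_congr eq_comm rfl rfl)

lemma mul_dot (M : Matrix (Fin a) (Fin b) ℝ) (x y : Fin b → ℝ) :
    (M *ᵥ x) ⬝ᵥ (M *ᵥ y) = x ⬝ᵥ ((Mᴴ * M) *ᵥ y) := by
  have hT : Mᴴ = Mᵀ := by ext i j; simp [conjTranspose_apply]
  rw [hT, ← mulVec_mulVec, mulVec_transpose, dotProduct_mulVec, dotProduct_comm,
    dotProduct_comm y, ← dotProduct_mulVec, dotProduct_comm x, ← dotProduct_mulVec,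
    dotProduct_comm]

lemma Mv_dot (M : Matrix (Fin a) (Fin b) ℝ) (j j' : Fin b) :
    ∑ z, (M *ᵥ evec M j) z * (M *ᵥ evec M j') z
      = ev M j' * (if j = j' then 1 else 0) := by
  have he := (isHermitian_conjTranspose_mul_self M).mulVec_eigenvectorBasis j'
  rw [evec_coe] at he
  have : ∑ z, (M *ᵥ evec M j) z * (M *ᵥ evec M j') z
      = (M *ᵥ evec M j) ⬝ᵥ (M *ᵥ evec M j') := rfl
  rw [this, mul_dot, he, dotProduct_smul, smul_eq_mul]
  rw [show (evec M j ⬝ᵥ evec M j') = ∑ i, evec M j i * evec M j' i from rfl, evec_orth]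
  rfl

lemma Mv_sq (M : Matrix (Fin a) (Fin b) ℝ) (j : Fin b) :
    ∑ z, ((M *ᵥ evec M j) z) ^ 2 = ev M j := by
  have := Mv_dot M j j
  rw [if_pos rfl, mul_one] at this
  rw [← this]
  exact Finset.sum_congr rfl fun z _ => sq ((M *ᵥ evec M j) z)

lemma Mv_zero (M : Matrix (Fin a) (Fin b) ℝ) (j : Fin b) (h : ev M j = 0) (z : Fin a) :
    (M *ᵥ evec M j) z = 0 := by
  have h1 := Mv_sq M j
  rw [h] at h1
  have := (Finset.sum_eq_zero_iff_of_nonneg (fun z _ => sq_nonneg ((M *ᵥ evec M j) z))).mp h1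
  exact pow_eq_zero_iff (n := 2) (by norm_num) |>.mp (this z (Finset.mem_univ z))

lemma decomp (M : Matrix (Fin a) (Fin b) ℝ) (z : Fin a) (t : Fin b) :
    M z t = ∑ j, (M *ᵥ evec M j) z * evec M j t := by
  have : ∀ j, (M *ᵥ evec M j) z * evec M j t = ∑ k, M z k * (evec M j k * evec M j t) := by
    intro j
    rw [show (M *ᵥ evec M j) z = ∑ k, M z k * evec M j k from rfl, Finset.sum_mul]
    exact Finset.sum_congr rfl fun k _ => by ring
  rw [Finset.sum_congr rfl fun j _ => this j, Finset.sum_comm]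
  have : ∀ k, ∑ j, M z k * (evec M j k * evec M j t) = M z k * (if k = t then 1 else 0) := by
    intro k
    rw [← Finset.mul_sum, evec_complete]
  rw [Finset.sum_congr rfl fun k _ => this k]
  simp

variable {a b : ℕ}

lemma nuclearNorm_nonneg (M : Matrix (Fin a) (Fin b) ℝ) : 0 ≤ nuclearNorm M :=
  Finset.sum_nonneg fun j _ => Real.sqrt_nonneg _

lemma frobNorm_sq (A : Matrix (Fin a) (Fin b) ℝ) :
    frobNorm A ^ 2 = ∑ i, ∑ j, (A i j) ^ 2 :=
  Real.sq_sqrt (Finset.sum_nonneg fun i _ => Finset.sum_nonneg fun j _ => sq_nonneg _)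

lemma nuclear_le_half {V m d : ℕ} (W : Matrix (Fin V) (Fin d) ℝ)
    (H : Matrix (Fin d) (Fin m) ℝ) :
    nuclearNorm (W * H) ≤ (frobNorm W ^ 2 + frobNorm H ^ 2) / 2 := by
  set M : Matrix (Fin V) (Fin m) ℝ := W * H with hM
  set S : Finset (Fin m) := Finset.univ.filter (fun j => ev M j ≠ 0) with hS
  set u : Fin m → Fin V → ℝ := fun j z => (M *ᵥ evec M j) z / Real.sqrt (ev M j) with hu_def
  have hsqrt_pos : ∀ j ∈ S, 0 < Real.sqrt (ev M j) := by
    intro j hj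
    rw [hS, Finset.mem_filter] at hj
    exact Real.sqrt_pos.mpr (lt_of_le_of_ne (ev_nonneg M j) (Ne.symm hj.2))
  -- orthonormality of the u family on S
  have hu : ∀ j ∈ S, ∀ j' ∈ S, ∑ z, u j z * u j' z = if j = j' then 1 else 0 := by
    intro j hj j' hj'
    have h1 : ∑ z, u j z * u j' z
        = (Real.sqrt (ev M j) * Real.sqrt (ev M j'))⁻¹
          * ∑ z, (M *ᵥ evec M j) z * (M *ᵥ evec M j') z := by
      rw [Finset.mul_sum]
      refine Finset.sum_congr rfl fun z _ => ?_
      rw [hu_def]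
      field_simp
    rw [h1, Mv_dot]
    by_cases hjj : j = j'
    · subst hjj
      have hne := (Finset.mem_filter.mp hj).2
      simp [Real.mul_self_sqrt (ev_nonneg M j), inv_mul_cancel₀ hne]
    · simp [hjj]
  -- each singular value as a dot product
  have hsv : ∀ j ∈ S, Real.sqrt (ev M j) = ∑ z, u j z * (M *ᵥ evec M j) z := by
    intro j hj
    have : ∑ z, u j z * (M *ᵥ evec M j) z
        = (Real.sqrt (ev M j))⁻¹ * ∑ z, ((M *ᵥ evec M j) z) ^ 2 := by
      rw [Finset.mul_sum]
      refine Finset.sum_congr rfl fun z _ => ?_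
      rw [hu_def]; field_simp
    rw [this, Mv_sq, inv_mul_eq_div, Real.div_sqrt]
  -- rewrite the dot product through the factorization
  have hfac : ∀ j : Fin m, ∑ z, u j z * (M *ᵥ evec M j) z
      = ∑ i, (u j ᵥ* W) i * (H *ᵥ evec M j) i := by
    intro j
    have h1 : M *ᵥ evec M j = W *ᵥ (H *ᵥ evec M j) := by rw [hM, ← mulVec_mulVec]
    calc ∑ z, u j z * (M *ᵥ evec M j) z = u j ⬝ᵥ (W *ᵥ (H *ᵥ evec M j)) := by rw [← h1]; rfl
      _ = (u j ᵥ* W) ⬝ᵥ (H *ᵥ evec M j) := dotProduct_mulVec _ _ _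
      _ = ∑ i, (u j ᵥ* W) i * (H *ᵥ evec M j) i := rfl
  -- bound each term
  have hterm : ∀ j ∈ S, Real.sqrt (ev M j)
      ≤ ((∑ i, ((u j ᵥ* W) i) ^ 2) + ∑ i, ((H *ᵥ evec M j) i) ^ 2) / 2 := by
    intro j hj
    rw [hsv j hj, hfac j]
    exact dot_half _ _
  -- sum over S
  have h2 : nuclearNorm M = ∑ j ∈ S, Real.sqrt (ev M j) := by
    rw [nuclearNorm_eq]
    rw [hS]
    refine (Finset.sum_filter_of_ne fun j _ hne => ?_).symm
    intro h0
    exact hne (by rw [h0, Real.sqrt_zero])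
  have hA : ∑ j ∈ S, ∑ i, ((u j ᵥ* W) i) ^ 2 ≤ frobNorm W ^ 2 := by
    rw [frobNorm_sq, Finset.sum_comm]
    conv_rhs => rw [Finset.sum_comm]
    refine Finset.sum_le_sum fun i _ => ?_
    have : ∀ j, (u j ᵥ* W) i = ∑ z, W z i * u j z := by
      intro j
      rw [show (u j ᵥ* W) i = ∑ z, u j z * W z i from rfl]
      exact Finset.sum_congr rfl fun z _ => by ring
    calc ∑ j ∈ S, ((u j ᵥ* W) i) ^ 2 = ∑ j ∈ S, (∑ z, W z i * u j z) ^ 2 :=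
          Finset.sum_congr rfl fun j _ => by rw [this j]
      _ ≤ ∑ z, (W z i) ^ 2 := bessel_aux S u hu (fun z => W z i)
  have hB : ∑ j ∈ S, ∑ i, ((H *ᵥ evec M j) i) ^ 2 ≤ frobNorm H ^ 2 := by
    have hsub : ∑ j ∈ S, ∑ i, ((H *ᵥ evec M j) i) ^ 2
        ≤ ∑ j, ∑ i, ((H *ᵥ evec M j) i) ^ 2 := by
      refine Finset.sum_le_sum_of_subset_of_nonneg (Finset.filter_subset _ _) ?_
      intro j _ _
      exact Finset.sum_nonneg fun i _ => sq_nonneg _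
    refine hsub.trans ?_
    rw [frobNorm_sq, Finset.sum_comm]
    refine le_of_eq (Finset.sum_congr rfl fun i _ => ?_)
    have : ∀ j, (H *ᵥ evec M j) i = ∑ k, H i k * evec M j k := fun j => rfl
    calc ∑ j, ((H *ᵥ evec M j) i) ^ 2 = ∑ j, (∑ k, H i k * evec M j k) ^ 2 := rfl
      _ = ∑ k, (H i k) ^ 2 := parseval (evec M) (evec_complete M) (fun k => H i k)
  calc nuclearNorm M = ∑ j ∈ S, Real.sqrt (ev M j) := h2
    _ ≤ ∑ j ∈ S, ((∑ i, ((u j ᵥ* W) i) ^ 2) + ∑ i, ((H *ᵥ evec M j) i) ^ 2) / 2 :=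
        Finset.sum_le_sum hterm
    _ = ((∑ j ∈ S, ∑ i, ((u j ᵥ* W) i) ^ 2) + ∑ j ∈ S, ∑ i, ((H *ᵥ evec M j) i) ^ 2) / 2 := by
        rw [← Finset.sum_div, Finset.sum_add_distrib]
    _ ≤ (frobNorm W ^ 2 + frobNorm H ^ 2) / 2 := by
        have := hA; have := hB; linarith

lemma sum_subtype_ne {n : ℕ} (g : Fin n → ℝ) (f : Fin n → ℝ)
    (hf : ∀ j, g j = 0 → f j = 0) :
    ∑ j : {j // g j ≠ 0}, f j.1 = ∑ j, f j := by
  classical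
  rw [← Finset.sum_subtype (Finset.univ.filter (fun j => g j ≠ 0)) (by simp) f]
  exact Finset.sum_filter_of_ne fun j _ hne => by
    by_contra hp
    exact hne (hf j hp)


lemma factor_exists {V m d : ℕ} (L : Matrix (Fin V) (Fin m) ℝ) (hrank : L.rank ≤ d) :
    ∃ (W : Matrix (Fin V) (Fin d) ℝ) (H : Matrix (Fin d) (Fin m) ℝ),
      W * H = L ∧ frobNorm W ^ 2 = nuclearNorm L ∧ frobNorm H ^ 2 = nuclearNorm L := by
  classical
  have hcard : Fintype.card {j // ev L j ≠ 0} ≤ Fintype.card (Fin d) := by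
    have h1 := (isHermitian_conjTranspose_mul_self L).rank_eq_card_non_zero_eigs
    have h2 := Matrix.rank_conjTranspose_mul_self L
    rw [Fintype.card_fin]
    calc Fintype.card {j // ev L j ≠ 0} = (Lᴴ * L).rank := h1.symm
      _ = L.rank := h2
      _ ≤ d := hrank
  obtain ⟨e⟩ := Function.Embedding.nonempty_of_card_le hcard
  set c : {j // ev L j ≠ 0} → ℝ := fun j => Real.sqrt (Real.sqrt (ev L j.1)) with hc
  have hevpos : ∀ j : {j // ev L j ≠ 0}, 0 < ev L j.1 :=
    fun j => lt_of_le_of_ne (ev_nonneg L j.1) (Ne.symm j.2)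
  have hcpos : ∀ j, 0 < c j := fun j => Real.sqrt_pos.mpr (Real.sqrt_pos.mpr (hevpos j))
  have hcsq : ∀ j, c j * c j = Real.sqrt (ev L j.1) :=
    fun j => Real.mul_self_sqrt (Real.sqrt_nonneg _)
  -- the subtype sum of sqrt eigenvalues is the nuclear norm
  have hnn : ∑ j : {j // ev L j ≠ 0}, Real.sqrt (ev L j.1) = nuclearNorm L := by
    rw [nuclearNorm_eq]
    exact sum_subtype_ne (ev L) (fun j => Real.sqrt (ev L j))
      (fun j h0 => by beta_reduce; rw [h0, Real.sqrt_zero])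
  refine ⟨Matrix.of fun z i => ∑ j : {j // ev L j ≠ 0}, if e j = i then (c j)⁻¹ * (L *ᵥ evec L j.1) z else 0,
          Matrix.of fun i t => ∑ j : {j // ev L j ≠ 0}, if e j = i then c j * evec L j.1 t else 0,
          ?_, ?_, ?_⟩
  · ext z t
    rw [Matrix.mul_apply]
    simp only [Matrix.of_apply]
    rw [sum_ite_mul_ite e e.injective
      (fun j => (c j)⁻¹ * (L *ᵥ evec L j.1) z) (fun j => c j * evec L j.1 t)]
    have step : ∀ j : {j // ev L j ≠ 0},
        ((c j)⁻¹ * (L *ᵥ evec L j.1) z) * (c j * evec L j.1 t)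
        = (L *ᵥ evec L j.1) z * evec L j.1 t := by
      intro j
      have := (hcpos j).ne'
      field_simp
    rw [Finset.sum_congr rfl fun j _ => step j]
    rw [sum_subtype_ne (ev L) (fun j => (L *ᵥ evec L j) z * evec L j t)
      (fun j h0 => by beta_reduce; rw [Mv_zero L j h0 z, zero_mul])]
    exact (decomp L z t).symm
  · rw [frobNorm_sq]
    simp only [Matrix.of_apply]
    have inner : ∀ z : Fin V, ∑ i : Fin d,
        ((∑ j : {j // ev L j ≠ 0}, if e j = i then (c j)⁻¹ * (L *ᵥ evec L j.1) z else 0)) ^ 2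
        = ∑ j : {j // ev L j ≠ 0}, ((c j)⁻¹ * (L *ᵥ evec L j.1) z)
            * ((c j)⁻¹ * (L *ᵥ evec L j.1) z) := by
      intro z
      have := sum_ite_mul_ite e e.injective
        (fun j => (c j)⁻¹ * (L *ᵥ evec L j.1) z) (fun j => (c j)⁻¹ * (L *ᵥ evec L j.1) z)
      rw [← this]
      exact Finset.sum_congr rfl fun i _ => sq _
    rw [Finset.sum_congr rfl fun z _ => inner z, Finset.sum_comm]
    have col : ∀ j : {j // ev L j ≠ 0},
        ∑ z, ((c j)⁻¹ * (L *ᵥ evec L j.1) z) * ((c j)⁻¹ * (L *ᵥ evec L j.1) z)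
        = Real.sqrt (ev L j.1) := by
      intro j
      have e1 : ∀ z : Fin V, ((c j)⁻¹ * (L *ᵥ evec L j.1) z) * ((c j)⁻¹ * (L *ᵥ evec L j.1) z)
          = ((c j)*(c j))⁻¹ * ((L *ᵥ evec L j.1) z) ^ 2 := by
        intro z
        rw [mul_inv]
        ring
      rw [Finset.sum_congr rfl fun z _ => e1 z, ← Finset.mul_sum, Mv_sq, hcsq,
        inv_mul_eq_div, Real.div_sqrt]
    rw [Finset.sum_congr rfl fun j _ => col j, hnn]
  · rw [frobNorm_sq, Finset.sum_comm]
    simp only [Matrix.of_apply]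
    have inner : ∀ t : Fin m, ∑ i : Fin d,
        ((∑ j : {j // ev L j ≠ 0}, if e j = i then c j * evec L j.1 t else 0)) ^ 2
        = ∑ j : {j // ev L j ≠ 0}, (c j * evec L j.1 t) * (c j * evec L j.1 t) := by
      intro t
      have := sum_ite_mul_ite e e.injective
        (fun j => c j * evec L j.1 t) (fun j => c j * evec L j.1 t)
      rw [← this]
      exact Finset.sum_congr rfl fun i _ => sq _
    rw [Finset.sum_congr rfl fun t _ => inner t, Finset.sum_comm]
    have row : ∀ j : {j // ev L j ≠ 0},
        ∑ t, (c j * evec L j.1 t) * (c j * evec L j.1 t) = Real.sqrt (ev L j.1) := by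
      intro j
      have e1 : ∀ t : Fin m, (c j * evec L j.1 t) * (c j * evec L j.1 t)
          = (c j * c j) * (evec L j.1 t * evec L j.1 t) := fun t => by ring
      rw [Finset.sum_congr rfl fun t _ => e1 t, ← Finset.mul_sum, evec_orth, if_pos rfl,
        mul_one, hcsq]
    rw [Finset.sum_congr rfl fun j _ => row j, hnn]

end NTPAux

namespace NTPAux

lemma CE_nonneg {V m : ℕ} (hV : 0 < V) (piv : Fin m → ℝ) (hpiv : ∀ j, 0 ≤ piv j)
    (p : Fin m → Fin V → ℝ) (L : Matrix (Fin V) (Fin m) ℝ) :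
    0 ≤ CEloss piv p L := by
  rw [CEloss, neg_nonneg]
  refine Finset.sum_nonpos fun j _ => mul_nonpos_of_nonneg_of_nonpos (hpiv j) ?_
  refine Finset.sum_nonpos fun z hz => ?_
  rw [Finset.mem_filter] at hz
  refine mul_nonpos_of_nonneg_of_nonpos (le_of_lt hz.2) ?_
  have hsum : (0:ℝ) < ∑ v, Real.exp (L v j) := by
    have : (Finset.univ : Finset (Fin V)).Nonempty := by
      simpa [Finset.univ_nonempty_iff] using Fin.pos_iff_nonempty.mp hV
    exact Finset.sum_pos (fun v _ => Real.exp_pos _) this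
  refine Real.log_nonpos (by positivity) ?_
  rw [div_le_one hsum]
  exact Finset.single_le_sum (fun v _ => (Real.exp_pos (L v j)).le) (Finset.mem_univ z)

end NTPAux

/-- for every λ > 0, the optimal value of the NTP-UFM problem equals the optimal
value of the rank-constrained nuclear-norm-regularized logit problem. -/
theorem stmt_0 (V m d : ℕ) (hV : 2 ≤ V) (hm : 0 < m) (hd : 0 < d)
    (piv : Fin m → ℝ) (hpiv : ∀ j, 0 < piv j) (hpisum : ∑ j, piv j = 1)
    (p : Fin m → Fin V → ℝ) (hp : ∀ j z, 0 ≤ p j z) (hpsum : ∀ j, ∑ z, p j z = 1)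
    (lam : ℝ) (hlam : 0 < lam) :
    sInf {c : ℝ | ∃ (W : Matrix (Fin V) (Fin d) ℝ) (H : Matrix (Fin d) (Fin m) ℝ),
        c = CEloss piv p (W * H) + lam / 2 * frobNorm W ^ 2 + lam / 2 * frobNorm H ^ 2}
      =
    sInf {c : ℝ | ∃ L : Matrix (Fin V) (Fin m) ℝ, L.rank ≤ d ∧
        c = CEloss piv p L + lam * nuclearNorm L} := by
  have hV0 : 0 < V := by omega
  have hCE : ∀ L : Matrix (Fin V) (Fin m) ℝ, 0 ≤ CEloss piv p L :=
    fun L => NTPAux.CE_nonneg hV0 piv (fun j => (hpiv j).le) p L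
  have hfrob : ∀ {a b : ℕ} (A : Matrix (Fin a) (Fin b) ℝ), 0 ≤ frobNorm A ^ 2 :=
    fun A => sq_nonneg _
  set S1 := {c : ℝ | ∃ (W : Matrix (Fin V) (Fin d) ℝ) (H : Matrix (Fin d) (Fin m) ℝ),
      c = CEloss piv p (W * H) + lam / 2 * frobNorm W ^ 2 + lam / 2 * frobNorm H ^ 2} with hS1
  set S2 := {c : ℝ | ∃ L : Matrix (Fin V) (Fin m) ℝ, L.rank ≤ d ∧
      c = CEloss piv p L + lam * nuclearNorm L} with hS2
  have hbdd1 : BddBelow S1 := by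
    refine ⟨0, fun c hc => ?_⟩
    obtain ⟨W, H, rfl⟩ := hc
    have h1 := hCE (W * H)
    have h2 := hfrob W
    have h3 := hfrob H
    nlinarith
  have hbdd2 : BddBelow S2 := by
    refine ⟨0, fun c hc => ?_⟩
    obtain ⟨L, _, rfl⟩ := hc
    have h1 := hCE L
    have h2 := NTPAux.nuclearNorm_nonneg L
    nlinarith
  have hne1 : S1.Nonempty := ⟨_, 0, 0, rfl⟩
  have hne2 : S2.Nonempty := ⟨_, 0, by rw [Matrix.rank_zero]; exact Nat.zero_le d, rfl⟩
  apply le_antisymm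
  · refine le_csInf hne2 fun c hc => ?_
    obtain ⟨L, hrank, rfl⟩ := hc
    obtain ⟨W, H, hWH, hW, hH⟩ := NTPAux.factor_exists L hrank
    refine csInf_le hbdd1 ⟨W, H, ?_⟩
    rw [hWH, hW, hH]
    ring
  · refine le_csInf hne1 fun c hc => ?_
    obtain ⟨W, H, rfl⟩ := hc
    have hrank : (W * H).rank ≤ d :=
      le_trans (Matrix.rank_mul_le_left W H) (Matrix.rank_le_width W)
    have hstep : sInf S2 ≤ CEloss piv p (W * H) + lam * nuclearNorm (W * H) :=
      csInf_le hbdd2 ⟨W * H, hrank, rfl⟩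
    have hnuc := NTPAux.nuclear_le_half W H
    nlinarith
end
end

section
/- Fix λ > 0. A pair (W_λ, H_λ) ∈ ℝ^{V×d} × ℝ^{d×m} minimizes the NTP-UFM objective CE(WH) + (λ/2)‖W‖_F² + (λ/2)‖H‖_F² if and only if there exists a minimizer L_λ of min over {L ∈ ℝ^{V×m} : rank(L) ≤ d} of CE(L) + λ‖L‖_*, with singular value decomposition L_λ = UΣVᵀ where U ∈ ℝ^{V×r} and V ∈ ℝ^{m×r} have orthonormal columns, Σ ∈ ℝ^{r×r} is diagonal with positive entries, and r = rank(L_λ) ≤ d, such that W_λ H_λ = L_λ, W_λ W_λᵀ = UΣUᵀ, and H_λᵀ H_λ = VΣVᵀ. -/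
open Filter Topology Matrix

noncomputable section

def ip {a b : ℕ} (A B : Matrix (Fin a) (Fin b) ℝ) : ℝ := ∑ i, ∑ j, A i j * B i j

lemma ip_eq_trace {a b : ℕ} (A B : Matrix (Fin a) (Fin b) ℝ) :
    ip A B = Matrix.trace (Aᵀ * B) := by
  simp only [ip, Matrix.trace, Matrix.diag, Matrix.mul_apply, Matrix.transpose_apply]
  exact Finset.sum_comm

lemma ip_self_nonneg {a b : ℕ} (A : Matrix (Fin a) (Fin b) ℝ) : 0 ≤ ip A A :=
  Finset.sum_nonneg fun _ _ => Finset.sum_nonneg fun _ _ => mul_self_nonneg _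

lemma ip_self_eq_zero {a b : ℕ} {A : Matrix (Fin a) (Fin b) ℝ} (h : ip A A = 0) : A = 0 := by
  ext i j
  have h1 : ∀ i ∈ (Finset.univ : Finset (Fin a)), (0:ℝ) ≤ ∑ j, A i j * A i j :=
    fun _ _ => Finset.sum_nonneg fun _ _ => mul_self_nonneg _
  have h2 := (Finset.sum_eq_zero_iff_of_nonneg h1).1 h i (Finset.mem_univ i)
  have h3 := (Finset.sum_eq_zero_iff_of_nonneg
    (fun j (_ : j ∈ (Finset.univ : Finset (Fin b))) => mul_self_nonneg (A i j))).1 h2 j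
    (Finset.mem_univ j)
  simpa using mul_self_eq_zero.1 h3

lemma ip_sub_self {a b : ℕ} (A B : Matrix (Fin a) (Fin b) ℝ) :
    ip (A - B) (A - B) = ip A A - 2 * ip A B + ip B B := by
  simp only [ip, Matrix.sub_apply]
  rw [Finset.mul_sum, ← Finset.sum_sub_distrib, ← Finset.sum_add_distrib]
  refine Finset.sum_congr rfl fun i _ => ?_
  rw [Finset.mul_sum, ← Finset.sum_sub_distrib, ← Finset.sum_add_distrib]
  exact Finset.sum_congr rfl fun j _ => by ring

lemma ip_transpose {a b : ℕ} (A : Matrix (Fin a) (Fin b) ℝ) : ip Aᵀ Aᵀ = ip A A := by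
  simp only [ip, Matrix.transpose_apply]
  exact Finset.sum_comm

lemma frobNorm_sq' {a b : ℕ} (A : Matrix (Fin a) (Fin b) ℝ) :
    Real.sqrt (∑ i, ∑ j, (A i j) ^ 2) ^ 2 = ip A A := by
  rw [Real.sq_sqrt (by positivity)]
  simp [ip, pow_two]

lemma trace_orth_conj {n r : ℕ} (U : Matrix (Fin n) (Fin r) ℝ) (D : Matrix (Fin r) (Fin r) ℝ)
    (hU : Uᵀ * U = 1) : Matrix.trace (U * D * Uᵀ) = Matrix.trace D := by
  rw [Matrix.trace_mul_comm, ← Matrix.mul_assoc, hU, Matrix.one_mul]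

lemma sandwich {v m r : ℕ} (U : Matrix (Fin v) (Fin r) ℝ) (Vm : Matrix (Fin m) (Fin r) ℝ)
    (D : Matrix (Fin r) (Fin r) ℝ) (hU : Uᵀ * U = 1) (hV : Vmᵀ * Vm = 1) :
    Uᵀ * (U * D * Vmᵀ) * Vm = D := by
  rw [Matrix.mul_assoc U D, ← Matrix.mul_assoc Uᵀ, hU, Matrix.one_mul,
    Matrix.mul_assoc D, hV, Matrix.mul_one]

lemma proj_defect {n r c : ℕ} (U : Matrix (Fin n) (Fin r) ℝ) (M : Matrix (Fin n) (Fin c) ℝ)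
    (hU : Uᵀ * U = 1) :
    ip M M - ip (Uᵀ * M) (Uᵀ * M) = ip (M - U * (Uᵀ * M)) (M - U * (Uᵀ * M)) := by
  rw [ip_sub_self]
  have h1 : ip M (U * (Uᵀ * M)) = ip (Uᵀ * M) (Uᵀ * M) := by
    rw [ip_eq_trace, ip_eq_trace, Matrix.transpose_mul, Matrix.transpose_transpose,
      ← Matrix.mul_assoc, ← Matrix.mul_assoc]
  have h2 : ip (U * (Uᵀ * M)) (U * (Uᵀ * M)) = ip (Uᵀ * M) (Uᵀ * M) := by
    rw [ip_eq_trace, ip_eq_trace, Matrix.transpose_mul, Matrix.mul_assoc,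
      ← Matrix.mul_assoc Uᵀ U, hU, Matrix.one_mul]
  rw [h1, h2]; ring

lemma proj_le {n r c : ℕ} (U : Matrix (Fin n) (Fin r) ℝ) (M : Matrix (Fin n) (Fin c) ℝ)
    (hU : Uᵀ * U = 1) : ip (Uᵀ * M) (Uᵀ * M) ≤ ip M M := by
  have := proj_defect U M hU
  have h2 := ip_self_nonneg (M - U * (Uᵀ * M))
  linarith

lemma proj_eq {n r c : ℕ} (U : Matrix (Fin n) (Fin r) ℝ) (M : Matrix (Fin n) (Fin c) ℝ)
    (hU : Uᵀ * U = 1) (h : ip (Uᵀ * M) (Uᵀ * M) = ip M M) : M = U * (Uᵀ * M) := by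
  have := proj_defect U M hU
  rw [h, sub_self] at this
  have h0 := ip_self_eq_zero this.symm
  have := sub_eq_zero.mp h0
  exact this


lemma sum_amgm {ι : Type*} [Fintype ι] (a b : ι → ℝ) :
    ∑ i, a i * b i ≤ (∑ i, a i * a i + ∑ i, b i * b i) / 2 := by
  have h1 : ∑ i, (a i - b i) * (a i - b i)
      = ∑ i, a i * a i - 2 * ∑ i, a i * b i + ∑ i, b i * b i := by
    rw [Finset.mul_sum, ← Finset.sum_sub_distrib, ← Finset.sum_add_distrib]
    exact Finset.sum_congr rfl fun i _ => by ring
  have h2 : (0:ℝ) ≤ ∑ i, (a i - b i) * (a i - b i) :=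
    Finset.sum_nonneg fun i _ => mul_self_nonneg _
  linarith

lemma vec_orth {n r : ℕ} (U : Matrix (Fin n) (Fin r) ℝ) (hU : Uᵀ * U = 1) (y : Fin r → ℝ) :
    ∑ x, (∑ k, U x k * y k) * (∑ k, U x k * y k) = ∑ k, y k * y k := by
  have expand : ∀ x, (∑ k, U x k * y k) * (∑ k, U x k * y k)
      = ∑ k, ∑ l, (y k * y l) * (U x k * U x l) := by
    intro x
    rw [Finset.sum_mul_sum]
    exact Finset.sum_congr rfl fun k _ => Finset.sum_congr rfl fun l _ => by ring
  calc ∑ x, (∑ k, U x k * y k) * (∑ k, U x k * y k)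
      = ∑ x, ∑ k, ∑ l, (y k * y l) * (U x k * U x l) := Finset.sum_congr rfl fun x _ => expand x
    _ = ∑ k, ∑ l, (y k * y l) * (∑ x, U x k * U x l) := by
        rw [Finset.sum_comm]
        refine Finset.sum_congr rfl fun k _ => ?_
        rw [Finset.sum_comm]
        refine Finset.sum_congr rfl fun l _ => ?_
        rw [Finset.mul_sum]
    _ = ∑ k, ∑ l, (y k * y l) * ((1 : Matrix (Fin r) (Fin r) ℝ) k l) := by
        refine Finset.sum_congr rfl fun k _ => Finset.sum_congr rfl fun l _ => ?_
        rw [← hU]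
        simp [Matrix.mul_apply, Matrix.transpose_apply]
    _ = ∑ k, y k * y k := by
        refine Finset.sum_congr rfl fun k _ => ?_
        simp [Matrix.one_apply, mul_ite, mul_one, mul_zero]

lemma vec_proj_le {n r : ℕ} (Vm : Matrix (Fin n) (Fin r) ℝ) (hV : Vmᵀ * Vm = 1)
    (v : Fin n → ℝ) :
    ∑ k, (∑ z, Vm z k * v z) * (∑ z, Vm z k * v z) ≤ ∑ z, v z * v z := by
  set y : Fin r → ℝ := fun k => ∑ z, Vm z k * v z with hy
  have hq : ∑ z, (∑ k, Vm z k * y k) * (∑ k, Vm z k * y k) = ∑ k, y k * y k :=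
    vec_orth Vm hV y
  have hvq : ∑ z, v z * (∑ k, Vm z k * y k) = ∑ k, y k * y k := by
    calc ∑ z, v z * (∑ k, Vm z k * y k) = ∑ z, ∑ k, y k * (Vm z k * v z) := by
          refine Finset.sum_congr rfl fun z _ => ?_
          rw [Finset.mul_sum]
          exact Finset.sum_congr rfl fun k _ => by ring
      _ = ∑ k, y k * ∑ z, Vm z k * v z := by
          rw [Finset.sum_comm]
          exact Finset.sum_congr rfl fun k _ => by rw [Finset.mul_sum]
      _ = ∑ k, y k * y k := rfl
  have key : (0:ℝ) ≤ ∑ z, (v z - ∑ k, Vm z k * y k) * (v z - ∑ k, Vm z k * y k) :=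
    Finset.sum_nonneg fun z _ => mul_self_nonneg _
  have expand : ∑ z, (v z - ∑ k, Vm z k * y k) * (v z - ∑ k, Vm z k * y k)
      = ∑ z, v z * v z - 2 * ∑ z, v z * (∑ k, Vm z k * y k)
        + ∑ z, (∑ k, Vm z k * y k) * (∑ k, Vm z k * y k) := by
    rw [Finset.mul_sum, ← Finset.sum_sub_distrib, ← Finset.sum_add_distrib]
    exact Finset.sum_congr rfl fun z _ => by ring
  rw [expand, hvq, hq] at key
  linarith



lemma svd_exists {v m : ℕ} (L : Matrix (Fin v) (Fin m) ℝ) :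
    ∃ (U : Matrix (Fin v) (Fin L.rank) ℝ) (Vm : Matrix (Fin m) (Fin L.rank) ℝ)
      (σ : Fin L.rank → ℝ),
      Uᵀ * U = 1 ∧ Vmᵀ * Vm = 1 ∧ (∀ i, 0 < σ i) ∧ L = U * Matrix.diagonal σ * Vmᵀ ∧
      ∑ i, σ i = nuclearNorm L := by
  classical
  have hA := Matrix.isHermitian_conjTranspose_mul_self L
  set μ : Fin m → ℝ := hA.eigenvalues with hμdef
  have hμ0 : ∀ i, 0 ≤ μ i := fun i => Matrix.eigenvalues_conjTranspose_mul_self_nonneg L i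
  set P : Matrix (Fin m) (Fin m) ℝ := (hA.eigenvectorUnitary : Matrix (Fin m) (Fin m) ℝ)
    with hPdef
  have hmem : P ∈ Matrix.unitaryGroup (Fin m) ℝ := (hA.eigenvectorUnitary).2
  have hPt : Pᵀ * P = 1 := by
    have := (Matrix.mem_unitaryGroup_iff').1 hmem
    rwa [Matrix.star_eq_conjTranspose, Matrix.conjTranspose_eq_transpose_of_trivial] at this
  have hPPt : P * Pᵀ = 1 := by
    have := (Matrix.mem_unitaryGroup_iff).1 hmem
    rwa [Matrix.star_eq_conjTranspose, Matrix.conjTranspose_eq_transpose_of_trivial] at this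
  have hspec : Pᵀ * (Lᴴ * L) * P = Matrix.diagonal μ := by
    have h := hA.conjStarAlgAut_star_eigenvectorUnitary
    rw [Unitary.conjStarAlgAut_star_apply] at h
    rw [Matrix.star_eq_conjTranspose, Matrix.conjTranspose_eq_transpose_of_trivial] at h
    rw [h, RCLike.ofReal_real_eq_id]
    rfl
  set N : Matrix (Fin v) (Fin m) ℝ := L * P with hNdef
  have hNtN : Nᵀ * N = Matrix.diagonal μ := by
    rw [hNdef, Matrix.transpose_mul, ← hspec,
      Matrix.conjTranspose_eq_transpose_of_trivial]
    rw [Matrix.mul_assoc, Matrix.mul_assoc, Matrix.mul_assoc]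
  have hcol : ∀ i i', ∑ x, N x i * N x i' = Matrix.diagonal μ i i' := by
    intro i i'
    have := congrFun (congrFun hNtN i) i'
    rw [Matrix.mul_apply] at this
    simpa [Matrix.transpose_apply] using this
  have hNzero : ∀ i, μ i = 0 → ∀ x, N x i = 0 := by
    intro i h0 x
    have hc := hcol i i
    rw [Matrix.diagonal_apply_eq, h0] at hc
    have := (Finset.sum_eq_zero_iff_of_nonneg
      (fun x (_ : x ∈ (Finset.univ : Finset (Fin v))) => mul_self_nonneg (N x i))).1 hc x
      (Finset.mem_univ x)
    exact mul_self_eq_zero.1 this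
  have hr : L.rank = Fintype.card {i // μ i ≠ 0} := by
    have h1 := hA.rank_eq_card_non_zero_eigs
    have h2 : (Lᴴ * L).rank = L.rank := by
      rw [Matrix.conjTranspose_eq_transpose_of_trivial]
      exact Matrix.rank_transpose_mul_self L
    rw [← h2, h1]
  have e : Fin (L.rank) ≃ {i // μ i ≠ 0} :=
    Fintype.equivOfCardEq (by rw [Fintype.card_fin]; exact hr)
  set j : Fin L.rank → Fin m := fun k => (e k).1 with hjdef
  have hjinj : Function.Injective j := fun k l h => e.injective (Subtype.ext h)
  have hjne : ∀ k, μ (j k) ≠ 0 := fun k => (e k).2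
  have hjpos : ∀ k, 0 < μ (j k) := fun k => lt_of_le_of_ne (hμ0 _) (Ne.symm (hjne k))
  set σ : Fin L.rank → ℝ := fun k => Real.sqrt (μ (j k)) with hσdef
  have hσpos : ∀ k, 0 < σ k := fun k => Real.sqrt_pos.2 (hjpos k)
  have hσsq : ∀ k, σ k * σ k = μ (j k) := fun k => Real.mul_self_sqrt (hμ0 _)
  set Vm : Matrix (Fin m) (Fin L.rank) ℝ := Matrix.of fun z k => P z (j k) with hVmdef
  set U : Matrix (Fin v) (Fin L.rank) ℝ := Matrix.of fun x k => N x (j k) / σ k with hUdef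
  refine ⟨U, Vm, σ, ?_, ?_, hσpos, ?_, ?_⟩
  · -- Uᵀ * U = 1
    ext k l
    rw [Matrix.mul_apply]
    have h1 : ∀ x : Fin v, Uᵀ k x * U x l = (N x (j k) * N x (j l)) * (1 / (σ k * σ l)) := by
      intro x
      simp only [Matrix.transpose_apply, hUdef, Matrix.of_apply]
      field_simp
    rw [Finset.sum_congr rfl (fun x _ => h1 x), ← Finset.sum_mul, hcol]
    by_cases hkl : k = l
    · subst hkl
      rw [Matrix.diagonal_apply_eq, Matrix.one_apply_eq]
      rw [← hσsq k]
      field_simp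
      exact div_self (ne_of_gt (hσpos k))
    · rw [Matrix.diagonal_apply_ne _ (fun h => hkl (hjinj h)), Matrix.one_apply_ne hkl,
        zero_mul]
  · -- Vmᵀ * Vm = 1
    ext k l
    rw [Matrix.mul_apply]
    have h1 : (∑ z, Vmᵀ k z * Vm z l) = (Pᵀ * P) (j k) (j l) := by
      rw [Matrix.mul_apply]
      simp [hVmdef, Matrix.transpose_apply]
    rw [h1, hPt]
    by_cases hkl : k = l
    · subst hkl; rw [Matrix.one_apply_eq, Matrix.one_apply_eq]
    · rw [Matrix.one_apply_ne (fun h => hkl (hjinj h)), Matrix.one_apply_ne hkl]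
  · -- L = U * diagonal σ * Vmᵀ
    ext x z
    have hRHS : (U * Matrix.diagonal σ * Vmᵀ) x z = ∑ k, N x (j k) * P z (j k) := by
      rw [Matrix.mul_apply]
      refine Finset.sum_congr rfl fun k _ => ?_
      rw [Matrix.mul_apply]
      rw [Finset.sum_eq_single k]
      · simp only [Matrix.diagonal_apply_eq, hUdef, Matrix.of_apply, Matrix.transpose_apply,
          hVmdef]
        rw [div_mul_cancel₀ _ (ne_of_gt (hσpos k))]
      · intro b _ hb
        rw [Matrix.diagonal_apply_ne _ hb, mul_zero]
      · intro h; exact absurd (Finset.mem_univ k) h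
    have hLHS : L x z = ∑ i, N x i * P z i := by
      conv_lhs => rw [← Matrix.mul_one L, ← hPPt, ← Matrix.mul_assoc]
      rw [Matrix.mul_apply]
      refine Finset.sum_congr rfl fun i _ => ?_
      rw [Matrix.transpose_apply]
    rw [hLHS, hRHS]
    have hfilter : ∑ i, N x i * P z i
        = ∑ i ∈ Finset.univ.filter (fun i => μ i ≠ 0), N x i * P z i := by
      symm
      apply Finset.sum_filter_of_ne
      intro i _ hne
      by_contra h0
      rw [hNzero i h0 x, zero_mul] at hne
      exact hne rfl
    have hsub : ∑ i ∈ Finset.univ.filter (fun i => μ i ≠ 0), N x i * P z i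
        = ∑ s : {i // μ i ≠ 0}, N x s.1 * P z s.1 := by
      rw [← Finset.sum_subtype (Finset.univ.filter (fun i => μ i ≠ 0))
        (fun i => by simp) (fun i => N x i * P z i)]
    have hequiv : ∑ s : {i // μ i ≠ 0}, N x s.1 * P z s.1
        = ∑ k, N x (j k) * P z (j k) :=
      (Fintype.sum_equiv e (fun k => N x (j k) * P z (j k)) (fun s => N x s.1 * P z s.1)
        (fun k => rfl)).symm
    rw [hfilter, hsub, hequiv]
  · -- sum of σ equals nuclear norm
    have hnn : nuclearNorm L = ∑ i, Real.sqrt (μ i) := rfl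
    rw [hnn]
    have hfilter : ∑ i, Real.sqrt (μ i)
        = ∑ i ∈ Finset.univ.filter (fun i => μ i ≠ 0), Real.sqrt (μ i) := by
      symm
      apply Finset.sum_filter_of_ne
      intro i _ hne
      by_contra h0
      rw [h0, Real.sqrt_zero] at hne
      exact hne rfl
    have hsub : ∑ i ∈ Finset.univ.filter (fun i => μ i ≠ 0), Real.sqrt (μ i)
        = ∑ s : {i // μ i ≠ 0}, Real.sqrt (μ s.1) := by
      rw [← Finset.sum_subtype (Finset.univ.filter (fun i => μ i ≠ 0))
        (fun i => by simp) (fun i => Real.sqrt (μ i))]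
    have hequiv : ∑ s : {i // μ i ≠ 0}, Real.sqrt (μ s.1) = ∑ k, σ k :=
      (Fintype.sum_equiv e (fun k => σ k) (fun s => Real.sqrt (μ s.1)) (fun k => rfl)).symm
    rw [hfilter, hsub, hequiv]

lemma factor_exists {v m d : ℕ} (L : Matrix (Fin v) (Fin m) ℝ) (h : L.rank ≤ d) :
    ∃ (W : Matrix (Fin v) (Fin d) ℝ) (H : Matrix (Fin d) (Fin m) ℝ),
      W * H = L ∧ ip W W = nuclearNorm L ∧ ip H H = nuclearNorm L := by
  obtain ⟨U, Vm, σ, hU, hV, hσ, hL, hsum⟩ := svd_exists L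
  set J : Matrix (Fin L.rank) (Fin d) ℝ :=
    Matrix.of fun k i => if (Fin.castLE h k) = i then 1 else 0 with hJdef
  have hJJt : J * Jᵀ = 1 := by
    ext k l
    rw [Matrix.mul_apply]
    simp only [hJdef, Matrix.of_apply, Matrix.transpose_apply, ite_mul, one_mul, zero_mul]
    rw [Finset.sum_ite_eq Finset.univ (Fin.castLE h k)
      (fun i => if Fin.castLE h l = i then (1:ℝ) else 0)]
    simp only [Finset.mem_univ, if_true]
    by_cases hkl : k = l
    · subst hkl; simp
    · rw [if_neg (fun hc => hkl ((Fin.castLE_inj).1 hc.symm)), Matrix.one_apply_ne hkl]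
  set D : Matrix (Fin L.rank) (Fin L.rank) ℝ := Matrix.diagonal fun k => Real.sqrt (σ k)
    with hDdef
  have hDD : D * D = Matrix.diagonal σ := by
    rw [hDdef, Matrix.diagonal_mul_diagonal]
    have : (fun k => Real.sqrt (σ k) * Real.sqrt (σ k)) = σ :=
      funext fun k => Real.mul_self_sqrt (hσ k).le
    rw [this]
  have hDt : Dᵀ = D := Matrix.diagonal_transpose _
  refine ⟨U * D * J, Jᵀ * D * Vmᵀ, ?_, ?_, ?_⟩
  · have hJmid : ∀ {c : ℕ} (X : Matrix (Fin L.rank) (Fin c) ℝ), J * (Jᵀ * X) = X := by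
      intro c X
      rw [← Matrix.mul_assoc, hJJt, Matrix.one_mul]
    calc (U * D * J) * (Jᵀ * D * Vmᵀ) = U * (D * (J * (Jᵀ * (D * Vmᵀ)))) := by
          simp only [Matrix.mul_assoc]
      _ = U * (D * (D * Vmᵀ)) := by rw [hJmid]
      _ = U * Matrix.diagonal σ * Vmᵀ := by
          rw [← Matrix.mul_assoc D D, hDD]
          simp only [Matrix.mul_assoc]
      _ = L := hL.symm
  · rw [ip_eq_trace, Matrix.trace_mul_comm]
    have : (U * D * J) * (U * D * J)ᵀ = U * (D * (J * Jᵀ) * D) * Uᵀ := by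
      simp only [Matrix.transpose_mul, Matrix.transpose_transpose, hDt, Matrix.mul_assoc]
    rw [this, hJJt, Matrix.mul_one, hDD, trace_orth_conj _ _ hU, Matrix.trace_diagonal, hsum]
  · rw [ip_eq_trace]
    have : (Jᵀ * D * Vmᵀ)ᵀ * (Jᵀ * D * Vmᵀ) = Vm * (D * (J * Jᵀ) * D) * Vmᵀ := by
      simp only [Matrix.transpose_mul, Matrix.transpose_transpose, hDt, Matrix.mul_assoc]
    rw [this, hJJt, Matrix.mul_one, hDD, trace_orth_conj _ _ hV, Matrix.trace_diagonal, hsum]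

lemma nuclear_le_avg {v m d : ℕ} (W : Matrix (Fin v) (Fin d) ℝ) (H : Matrix (Fin d) (Fin m) ℝ) :
    nuclearNorm (W * H) ≤ (ip W W + ip H H) / 2 := by
  obtain ⟨U, Vm, σ, hU, hV, hσ, hL, hsum⟩ := svd_exists (W * H)
  have h1 : Uᵀ * (W * H) * Vm = Matrix.diagonal σ := by
    have e1 := congrArg (fun M : Matrix (Fin v) (Fin m) ℝ => Uᵀ * M * Vm) hL
    rw [e1]
    exact sandwich U Vm _ hU hV
  have h2 : ip (Wᵀ * U) (H * Vm) = nuclearNorm (W * H) := by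
    rw [ip_eq_trace, Matrix.transpose_mul, Matrix.transpose_transpose]
    have : Uᵀ * W * (H * Vm) = Uᵀ * (W * H) * Vm := by simp only [Matrix.mul_assoc]
    rw [this, h1, Matrix.trace_diagonal, hsum]
  have h3 : ip (Wᵀ * U) (Wᵀ * U) ≤ ip W W := by
    have hp := proj_le U W hU
    have : ip (Wᵀ * U) (Wᵀ * U) = ip (Uᵀ * W) (Uᵀ * W) := by
      have := ip_transpose (Uᵀ * W)
      rwa [Matrix.transpose_mul, Matrix.transpose_transpose] at this
    linarith
  have h4 : ip (H * Vm) (H * Vm) ≤ ip H H := by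
    have hp := proj_le Vm Hᵀ hV
    have e1 : ip (H * Vm) (H * Vm) = ip (Vmᵀ * Hᵀ) (Vmᵀ * Hᵀ) := by
      have := ip_transpose (H * Vm)
      rw [Matrix.transpose_mul] at this
      exact this.symm
    have e2 : ip Hᵀ Hᵀ = ip H H := ip_transpose H
    linarith
  have amgm : ip (Wᵀ * U) (H * Vm)
      ≤ (ip (Wᵀ * U) (Wᵀ * U) + ip (H * Vm) (H * Vm)) / 2 := by
    have hnn := ip_self_nonneg ((Wᵀ * U) - (H * Vm))
    rw [ip_sub_self] at hnn
    linarith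
  linarith

lemma dual_le {v m s : ℕ} (L : Matrix (Fin v) (Fin m) ℝ) (U : Matrix (Fin v) (Fin s) ℝ)
    (Vm : Matrix (Fin m) (Fin s) ℝ) (hU : Uᵀ * U = 1) (hV : Vmᵀ * Vm = 1) :
    Matrix.trace (Uᵀ * L * Vm) ≤ nuclearNorm L := by
  obtain ⟨Uc, Vc, σc, hUc, hVc, hσc, hLc, hsum⟩ := svd_exists L
  rw [← hsum]
  have h1 : Matrix.trace (Uᵀ * L * Vm)
      = Matrix.trace ((Vcᵀ * Vm) * (Uᵀ * Uc) * Matrix.diagonal σc) := by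
    have e1 := congrArg (fun M : Matrix (Fin v) (Fin m) ℝ => Matrix.trace (Uᵀ * M * Vm)) hLc
    rw [e1]
    have e2 : Uᵀ * (Uc * Matrix.diagonal σc * Vcᵀ) * Vm
        = ((Uᵀ * Uc) * Matrix.diagonal σc) * (Vcᵀ * Vm) := by
      simp only [Matrix.mul_assoc]
    rw [e2, Matrix.trace_mul_comm, ← Matrix.mul_assoc, ← Matrix.mul_assoc]
  have h2 : Matrix.trace ((Vcᵀ * Vm) * (Uᵀ * Uc) * Matrix.diagonal σc)
      = ∑ i, ((Vcᵀ * Vm) * (Uᵀ * Uc)) i i * σc i := by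
    simp [Matrix.trace, Matrix.diag, Matrix.mul_diagonal]
  have hentry : ∀ i, ((Vcᵀ * Vm) * (Uᵀ * Uc)) i i ≤ 1 := by
    intro i
    set vv : Fin m → ℝ := fun z => Vc z i with hvv
    set uu : Fin v → ℝ := fun x => Uc x i with huu
    set y : Fin s → ℝ := fun k => ∑ z, Vm z k * vv z with hy
    have step1 : ((Vcᵀ * Vm) * (Uᵀ * Uc)) i i = ∑ x, (∑ k, U x k * y k) * uu x := by
      rw [Matrix.mul_apply]
      have hY : ∀ k, (Vcᵀ * Vm) i k = y k := by
        intro k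
        rw [Matrix.mul_apply]
        exact Finset.sum_congr rfl fun z _ => by
          rw [Matrix.transpose_apply]; ring
      have hX : ∀ k, (Uᵀ * Uc) k i = ∑ x, U x k * uu x := by
        intro k
        rw [Matrix.mul_apply]
        exact Finset.sum_congr rfl fun x _ => by
          rw [Matrix.transpose_apply]
      calc ∑ k, (Vcᵀ * Vm) i k * (Uᵀ * Uc) k i = ∑ k, ∑ x, (U x k * y k) * uu x := by
            refine Finset.sum_congr rfl fun k _ => ?_
            rw [hY, hX, Finset.mul_sum]
            exact Finset.sum_congr rfl fun x _ => by ring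
        _ = ∑ x, ∑ k, (U x k * y k) * uu x := Finset.sum_comm
        _ = ∑ x, (∑ k, U x k * y k) * uu x := by
            refine Finset.sum_congr rfl fun x _ => ?_
            rw [Finset.sum_mul]
    have hu1 : ∑ x, uu x * uu x = 1 := by
      have : ∑ x, uu x * uu x = (Ucᵀ * Uc) i i := by
        rw [Matrix.mul_apply]
        exact Finset.sum_congr rfl fun x _ => by rw [Matrix.transpose_apply]
      rw [this, hUc, Matrix.one_apply_eq]
    have hv1 : ∑ z, vv z * vv z = 1 := by
      have : ∑ z, vv z * vv z = (Vcᵀ * Vc) i i := by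
        rw [Matrix.mul_apply]
        exact Finset.sum_congr rfl fun z _ => by rw [Matrix.transpose_apply]
      rw [this, hVc, Matrix.one_apply_eq]
    have hw : ∑ x, (∑ k, U x k * y k) * (∑ k, U x k * y k) = ∑ k, y k * y k :=
      vec_orth U hU y
    have hyv : ∑ k, y k * y k ≤ ∑ z, vv z * vv z := vec_proj_le Vm hV vv
    have hb := sum_amgm (fun x => ∑ k, U x k * y k) uu
    rw [step1]
    rw [hw] at hb
    linarith
  rw [h1, h2]
  have hle : ∀ i ∈ (Finset.univ : Finset (Fin L.rank)),
      ((Vcᵀ * Vm) * (Uᵀ * Uc)) i i * σc i ≤ σc i := fun i _ =>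
    (mul_le_of_le_one_left (hσc i).le (hentry i))
  exact Finset.sum_le_sum hle

lemma conj_helper {n r c : ℕ} (Uo : Matrix (Fin n) (Fin r) ℝ) (M : Matrix (Fin n) (Fin c) ℝ)
    (D : Matrix (Fin r) (Fin r) ℝ) (hfac : M = Uo * (Uoᵀ * M))
    (hD : (Uoᵀ * M) * (Mᵀ * Uo) = D) : M * Mᵀ = Uo * D * Uoᵀ := by
  conv_lhs => rw [hfac]
  rw [Matrix.transpose_mul, Matrix.transpose_mul, Matrix.transpose_transpose]
  rw [Matrix.mul_assoc Uo, ← Matrix.mul_assoc (Uoᵀ * M), hD, ← Matrix.mul_assoc]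

lemma frob_sq {a b : ℕ} (A : Matrix (Fin a) (Fin b) ℝ) : frobNorm A ^ 2 = ip A A :=
  frobNorm_sq' A

/-- `(W, H)` minimizes the NTP-UFM objective iff there is a minimizer `L` of the
rank-constrained nuclear-norm-regularized logit problem such that, with `L = UΣVᵀ` an SVD of
`L` (orthonormal columns, positive diagonal, `r = rank L ≤ d`), one has `W * H = L`,
`W * Wᵀ = UΣUᵀ`, and `Hᵀ * H = VΣVᵀ`. -/
theorem stmt_1 (V m d : ℕ) (hV : 2 ≤ V) (hm : 0 < m) (hd : 0 < d)
    (piv : Fin m → ℝ) (hpiv : ∀ j, 0 < piv j) (hpisum : ∑ j, piv j = 1)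
    (p : Fin m → Fin V → ℝ) (hp : ∀ j z, 0 ≤ p j z) (hpsum : ∀ j, ∑ z, p j z = 1)
    (lam : ℝ) (hlam : 0 < lam)
    (W : Matrix (Fin V) (Fin d) ℝ) (H : Matrix (Fin d) (Fin m) ℝ) :
    (∀ (W' : Matrix (Fin V) (Fin d) ℝ) (H' : Matrix (Fin d) (Fin m) ℝ),
        CEloss piv p (W * H) + lam / 2 * frobNorm W ^ 2 + lam / 2 * frobNorm H ^ 2 ≤
        CEloss piv p (W' * H') + lam / 2 * frobNorm W' ^ 2 + lam / 2 * frobNorm H' ^ 2)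
    ↔
    ∃ L : Matrix (Fin V) (Fin m) ℝ,
      L.rank ≤ d ∧
      (∀ L' : Matrix (Fin V) (Fin m) ℝ, L'.rank ≤ d →
          CEloss piv p L + lam * nuclearNorm L ≤ CEloss piv p L' + lam * nuclearNorm L') ∧
      ∃ (U : Matrix (Fin V) (Fin L.rank) ℝ) (Vm : Matrix (Fin m) (Fin L.rank) ℝ)
        (σ : Fin L.rank → ℝ),
        Uᵀ * U = 1 ∧ Vmᵀ * Vm = 1 ∧ (∀ i, 0 < σ i) ∧
        L = U * Matrix.diagonal σ * Vmᵀ ∧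
        W * H = L ∧
        W * Wᵀ = U * Matrix.diagonal σ * Uᵀ ∧
        Hᵀ * H = Vm * Matrix.diagonal σ * Vmᵀ := by
  constructor
  · intro hmin
    obtain ⟨U, Vm, σ, hU, hV', hσ, hL, hsum⟩ := svd_exists (W * H)
    have hrW : W.rank ≤ d := by simpa using Matrix.rank_le_card_width W
    have hrank : (W * H).rank ≤ d := le_trans (Matrix.rank_mul_le_left W H) hrW
    obtain ⟨W0, H0, hWH0, hw0, hh0⟩ := factor_exists (W * H) hrank
    have hmin0 := hmin W0 H0
    rw [hWH0] at hmin0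
    rw [frob_sq W, frob_sq H, frob_sq W0, frob_sq H0, hw0, hh0] at hmin0
    set nn := nuclearNorm (W * H) with hnn
    have key : ip W W + ip H H ≤ 2 * nn := by
      have h2 : 0 < lam / 2 := by linarith
      have e1 : lam / 2 * (ip W W + ip H H) ≤ lam / 2 * (2 * nn) := by
        have a1 : lam / 2 * (ip W W + ip H H) = lam / 2 * ip W W + lam / 2 * ip H H := by ring
        have a2 : lam / 2 * (2 * nn) = lam / 2 * nn + lam / 2 * nn := by ring
        rw [a1, a2]; linarith
      exact le_of_mul_le_mul_left e1 h2
    have hsand : Uᵀ * (W * H) * Vm = Matrix.diagonal σ := by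
      have e1 := congrArg (fun M : Matrix (Fin V) (Fin m) ℝ => Uᵀ * M * Vm) hL
      rw [e1]; exact sandwich U Vm _ hU hV'
    have hip : ip (Wᵀ * U) (H * Vm) = nn := by
      rw [ip_eq_trace, Matrix.transpose_mul, Matrix.transpose_transpose]
      have e2 : Uᵀ * W * (H * Vm) = Uᵀ * (W * H) * Vm := by simp only [Matrix.mul_assoc]
      rw [e2, hsand, Matrix.trace_diagonal, hsum]
    have htA : ip (Wᵀ * U) (Wᵀ * U) = ip (Uᵀ * W) (Uᵀ * W) := by
      have := ip_transpose (Uᵀ * W)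
      rwa [Matrix.transpose_mul, Matrix.transpose_transpose] at this
    have htB : ip (H * Vm) (H * Vm) = ip (Vmᵀ * Hᵀ) (Vmᵀ * Hᵀ) := by
      have := ip_transpose (H * Vm)
      rw [Matrix.transpose_mul] at this
      exact this.symm
    have h3 : ip (Wᵀ * U) (Wᵀ * U) ≤ ip W W := by
      rw [htA]; exact proj_le U W hU
    have h4 : ip (H * Vm) (H * Vm) ≤ ip H H := by
      rw [htB]
      calc ip (Vmᵀ * Hᵀ) (Vmᵀ * Hᵀ) ≤ ip Hᵀ Hᵀ := proj_le Vm Hᵀ hV'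
        _ = ip H H := ip_transpose H
    have hexp := ip_sub_self (Wᵀ * U) (H * Vm)
    have hs3 := ip_self_nonneg ((Wᵀ * U) - (H * Vm))
    have hAAeq : ip (Wᵀ * U) (Wᵀ * U) = ip W W := by linarith
    have hBBeq : ip (H * Vm) (H * Vm) = ip H H := by linarith
    have hzero : ip ((Wᵀ * U) - (H * Vm)) ((Wᵀ * U) - (H * Vm)) = 0 := by linarith
    have hquad : ip W W + ip H H = 2 * nn := by linarith
    have hAB : Wᵀ * U = H * Vm := sub_eq_zero.mp (ip_self_eq_zero hzero)
    have hWfac : W = U * (Uᵀ * W) := proj_eq U W hU (by rw [← htA]; exact hAAeq)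
    have hHfac : Hᵀ = Vm * (Vmᵀ * Hᵀ) := proj_eq Vm Hᵀ hV' (by
      rw [← htB, hBBeq]; exact (ip_transpose H).symm)
    have hDs : (Uᵀ * W) * (Wᵀ * U) = Matrix.diagonal σ := by
      rw [hAB]
      have e2 : Uᵀ * W * (H * Vm) = Uᵀ * (W * H) * Vm := by simp only [Matrix.mul_assoc]
      rw [e2]; exact hsand
    refine ⟨W * H, hrank, ?_, U, Vm, σ, hU, hV', hσ, hL, rfl, ?_, ?_⟩
    · intro L' hr'
      obtain ⟨W', H', hWH', hw', hh'⟩ := factor_exists L' hr'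
      have hm' := hmin W' H'
      rw [hWH'] at hm'
      rw [frob_sq W, frob_sq H, frob_sq W', frob_sq H', hw', hh'] at hm'
      have e : lam / 2 * ip W W + lam / 2 * ip H H = lam * nn := by
        have a1 : lam / 2 * ip W W + lam / 2 * ip H H = lam / 2 * (ip W W + ip H H) := by ring
        rw [a1, hquad]; ring
      linarith
    · exact conj_helper U W (Matrix.diagonal σ) hWfac hDs
    · have e1 : Vmᵀ * Hᵀ = Uᵀ * W := by
        rw [← Matrix.transpose_mul, ← hAB, Matrix.transpose_mul, Matrix.transpose_transpose]
      have e2 : Hᵀᵀ * Vm = Wᵀ * U := by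
        rw [Matrix.transpose_transpose]; exact hAB.symm
      have hDH : (Vmᵀ * Hᵀ) * (Hᵀᵀ * Vm) = Matrix.diagonal σ := by rw [e1, e2]; exact hDs
      have := conj_helper Vm Hᵀ (Matrix.diagonal σ) hHfac hDH
      rwa [Matrix.transpose_transpose] at this
  · rintro ⟨L, hrank, hLmin, U, Vm, σ, hU, hV', hσ, hL, hWH, hWWt, hHtH⟩
    intro W' H'
    have fW : frobNorm W ^ 2 = ∑ i, σ i := by
      rw [frob_sq W, ip_eq_trace, Matrix.trace_mul_comm, hWWt, trace_orth_conj _ _ hU,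
        Matrix.trace_diagonal]
    have fH : frobNorm H ^ 2 = ∑ i, σ i := by
      rw [frob_sq H, ip_eq_trace, hHtH, trace_orth_conj _ _ hV', Matrix.trace_diagonal]
    have hsl : ∑ i, σ i ≤ nuclearNorm L := by
      have e1 := congrArg (fun M : Matrix (Fin V) (Fin m) ℝ => Uᵀ * M * Vm) hL
      have e2 : Uᵀ * L * Vm = Matrix.diagonal σ := by rw [e1]; exact sandwich U Vm _ hU hV'
      have hd' := dual_le L U Vm hU hV'
      rw [e2, Matrix.trace_diagonal] at hd'
      exact hd'
    have hrW' : W'.rank ≤ d := by simpa using Matrix.rank_le_card_width W'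
    have hrank' : (W' * H').rank ≤ d := le_trans (Matrix.rank_mul_le_left W' H') hrW'
    have hm' := hLmin (W' * H') hrank'
    have hnle := nuclear_le_avg W' H'
    have fW' : frobNorm W' ^ 2 = ip W' W' := frob_sq W'
    have fH' : frobNorm H' ^ 2 = ip H' H' := frob_sq H'
    rw [hWH, fW, fH, fW', fH']
    have c1 : lam * (∑ i, σ i) ≤ lam * nuclearNorm L := mul_le_mul_of_nonneg_left hsl hlam.le
    have c2 : lam * nuclearNorm (W' * H') ≤ lam * ((ip W' W' + ip H' H') / 2) :=
      mul_le_mul_of_nonneg_left hnle hlam.le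
    have e3 : lam / 2 * (∑ i, σ i) + lam / 2 * (∑ i, σ i) = lam * (∑ i, σ i) := by ring
    have e4 : lam * ((ip W' W' + ip H' H') / 2)
        = lam / 2 * ip W' W' + lam / 2 * ip H' H' := by ring
    linarith
end
end

section
/- In the symmetric setting, the centered support matrix S̃ = (I_V − (1/V)1_V 1_Vᵀ) S is the unique minimizer of the NTP-SVM program. -/
open Filter Topology Matrix

noncomputable section

/-- The (0/1) support matrix of a family of support sets. -/
def Smat {V m : ℕ} (Ssets : Fin m → Finset (Fin V)) : Matrix (Fin V) (Fin m) ℝ :=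
  Matrix.of fun z j => if z ∈ Ssets j then (1 : ℝ) else 0

/-- The centered support matrix `S̃ = (I_V − (1/V) 1 1ᵀ) S`. -/
def Stil {V m : ℕ} (Ssets : Fin m → Finset (Fin V)) : Matrix (Fin V) (Fin m) ℝ :=
  ((1 : Matrix (Fin V) (Fin V) ℝ) - (V : ℝ)⁻¹ • Matrix.of fun _ _ => (1 : ℝ)) * Smat Ssets

/-- Feasibility for the NTP-SVM program with support sets `Ssets`. -/
def svmFeasibleS {V m : ℕ} (Ssets : Fin m → Finset (Fin V))
    (L : Matrix (Fin V) (Fin m) ℝ) : Prop :=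
  (∀ j, ∀ z ∈ Ssets j, ∀ z' ∈ Ssets j, L z j = L z' j) ∧
  (∀ j, ∀ z ∈ Ssets j, ∀ v, v ∉ Ssets j → 1 ≤ L z j - L v j)

namespace Stmt7



variable {v n : ℕ}

lemma dot_sq_le (x y : Fin v → ℝ) : (x ⬝ᵥ y)^2 ≤ (x ⬝ᵥ x) * (y ⬝ᵥ y) := by
  simpa [dotProduct, sq] using
    Finset.sum_mul_sq_le_sq_mul_sq Finset.univ x y

lemma dot_self_nonneg (x : Fin v → ℝ) : 0 ≤ x ⬝ᵥ x :=
  Finset.sum_nonneg fun i _ => mul_self_nonneg _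

lemma dot_le_sqrt_mul_sqrt (x y : Fin v → ℝ) :
    x ⬝ᵥ y ≤ Real.sqrt (x ⬝ᵥ x) * Real.sqrt (y ⬝ᵥ y) := by
  have h := Real.sum_mul_le_sqrt_mul_sqrt Finset.univ x y
  simpa [dotProduct, sq] using h

/-- `(B *ᵥ u) ⬝ᵥ (C *ᵥ u) = u ⬝ᵥ ((Cᵀ * B) *ᵥ u)` -/
lemma dot_mulVec_mulVec (B C : Matrix (Fin v) (Fin n) ℝ) (u : Fin n → ℝ) :
    (B *ᵥ u) ⬝ᵥ (C *ᵥ u) = u ⬝ᵥ ((Cᵀ * B) *ᵥ u) := by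
  rw [Matrix.dotProduct_mulVec, ← Matrix.mulVec_transpose, Matrix.mulVec_mulVec,
    dotProduct_comm]

lemma conj_diag_apply (U X : Matrix (Fin n) (Fin n) ℝ) (i : Fin n) :
    (Uᴴ * X * U) i i = (fun p => U p i) ⬝ᵥ (X *ᵥ fun p => U p i) := by
  simp only [Matrix.mul_apply, Matrix.conjTranspose_apply, Matrix.mulVec,
    dotProduct, star_trivial, Finset.sum_mul, Finset.mul_sum]
  rw [Finset.sum_comm]
  apply Finset.sum_congr rfl; intro p _
  apply Finset.sum_congr rfl; intro q _
  ring




variable {v n : ℕ}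

lemma mul_matrix_apply (X : Matrix (Fin v) (Fin n) ℝ) (U : Matrix (Fin n) (Fin n) ℝ)
    (z : Fin v) (i : Fin n) : (X * U) z i = (X *ᵥ fun p => U p i) z := by
  simp [Matrix.mul_apply, Matrix.mulVec, dotProduct]

lemma key (M L : Matrix (Fin v) (Fin n) ℝ)
    (hR : (Mᴴ * M) * (Mᴴ * M) = Mᴴ * M) :
    Matrix.trace (Mᴴ * L) ≤ nuclearNorm L ∧
    (Matrix.trace (Mᴴ * L) = nuclearNorm L →
      ∀ P : Matrix (Fin v) (Fin v) ℝ, P * M = M → P * L = L) := by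
  have hA : (Lᴴ * L).IsHermitian := Matrix.isHermitian_conjTranspose_mul_self L
  set U : Matrix (Fin n) (Fin n) ℝ := (hA.eigenvectorUnitary : Matrix (Fin n) (Fin n) ℝ) with hUdef
  have hU1 : Uᴴ * U = 1 := by
    rw [← Matrix.star_eq_conjTranspose]
    exact Matrix.mem_unitaryGroup_iff'.mp hA.eigenvectorUnitary.2
  have hU2 : U * Uᴴ = 1 := by
    rw [← Matrix.star_eq_conjTranspose]
    exact Matrix.mem_unitaryGroup_iff.mp hA.eigenvectorUnitary.2
  set lam := hA.eigenvalues with hlamdef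
  have spec : Lᴴ * L = U * Matrix.diagonal lam * Uᴴ := by
    have := hA.spectral_theorem
    rwa [Unitary.conjStarAlgAut_apply, Matrix.star_eq_conjTranspose,
      RCLike.ofReal_real_eq_id, Function.id_comp] at this
  set u : Fin n → Fin n → ℝ := fun i p => U p i with hudef
  have hunit : ∀ i, u i ⬝ᵥ u i = 1 := by
    intro i
    have := congrFun (congrFun hU1 i) i
    simpa [Matrix.mul_apply, Matrix.conjTranspose_apply, Matrix.one_apply,
      dotProduct] using this
  have hcol : (Lᴴ * L) * U = U * Matrix.diagonal lam := by
    rw [spec, mul_assoc, hU1, mul_one]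
  have heig : ∀ i, (Lᴴ * L) *ᵥ u i = lam i • u i := by
    intro i; funext p
    have := congrFun (congrFun hcol p) i
    rw [mul_matrix_apply] at this
    simpa [Matrix.mul_diagonal, Pi.smul_apply, smul_eq_mul, mul_comm] using this
  have hLnorm : ∀ i, (L *ᵥ u i) ⬝ᵥ (L *ᵥ u i) = lam i := by
    intro i
    rw [dot_mulVec_mulVec, ← Matrix.conjTranspose_eq_transpose_of_trivial, heig i,
      dotProduct_smul, smul_eq_mul, hunit i, mul_one]
  have hMnorm : ∀ i, (M *ᵥ u i) ⬝ᵥ (M *ᵥ u i) ≤ 1 := by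
    intro i
    set R := Mᴴ * M with hRdef
    have hRsym : Rᵀ = R := by
      have := Matrix.isHermitian_conjTranspose_mul_self M
      rwa [Matrix.IsHermitian, Matrix.conjTranspose_eq_transpose_of_trivial] at this
    have h1 : (M *ᵥ u i) ⬝ᵥ (M *ᵥ u i) = u i ⬝ᵥ (R *ᵥ u i) := by
      rw [dot_mulVec_mulVec, ← Matrix.conjTranspose_eq_transpose_of_trivial]
    set r := R *ᵥ u i with hrdef
    have h2 : u i ⬝ᵥ (R *ᵥ u i) = r ⬝ᵥ r := by
      conv_lhs => rw [← hR]
      rw [← Matrix.mulVec_mulVec, Matrix.dotProduct_mulVec, ← Matrix.mulVec_transpose,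
        hRsym]
    have h3 : (u i ⬝ᵥ r)^2 ≤ (u i ⬝ᵥ u i) * (r ⬝ᵥ r) := dot_sq_le _ _
    rw [hunit i, one_mul] at h3
    have h4 : u i ⬝ᵥ r = r ⬝ᵥ r := by rw [← h2, hrdef]
    rw [h1, h2]
    nlinarith [dot_self_nonneg r]
  have htr : Matrix.trace (Mᴴ * L) = ∑ i, (L *ᵥ u i) ⬝ᵥ (M *ᵥ u i) := by
    have c1 : Matrix.trace (Mᴴ * L) = Matrix.trace (Uᴴ * (Mᴴ * L) * U) := by
      rw [Matrix.trace_mul_comm (Uᴴ * (Mᴴ * L)) U, ← mul_assoc, hU2, one_mul]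
    rw [c1, Matrix.trace]
    apply Finset.sum_congr rfl
    intro i _
    rw [Matrix.diag_apply, conj_diag_apply, dot_mulVec_mulVec L M (u i),
      Matrix.conjTranspose_eq_transpose_of_trivial]
  have hlam_nonneg : ∀ i, 0 ≤ lam i := by
    intro i
    rw [← hLnorm i]
    exact dot_self_nonneg _
  have hterm : ∀ i, (L *ᵥ u i) ⬝ᵥ (M *ᵥ u i) ≤ Real.sqrt (lam i) := by
    intro i
    calc (L *ᵥ u i) ⬝ᵥ (M *ᵥ u i)
        ≤ Real.sqrt ((L *ᵥ u i) ⬝ᵥ (L *ᵥ u i)) * Real.sqrt ((M *ᵥ u i) ⬝ᵥ (M *ᵥ u i)) :=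
          dot_le_sqrt_mul_sqrt _ _
      _ ≤ Real.sqrt (lam i) * 1 := by
          rw [hLnorm i]
          exact mul_le_mul_of_nonneg_left
            (Real.sqrt_le_one.mpr (hMnorm i)) (Real.sqrt_nonneg _)
      _ = Real.sqrt (lam i) := mul_one _
  have hnn : nuclearNorm L = ∑ i, Real.sqrt (lam i) := rfl
  constructor
  · rw [htr, hnn]
    exact Finset.sum_le_sum fun i _ => hterm i
  · intro heq P hPM
    rw [htr, hnn] at heq
    have hall : ∀ i ∈ Finset.univ, (L *ᵥ u i) ⬝ᵥ (M *ᵥ u i) = Real.sqrt (lam i) :=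
      (Finset.sum_eq_sum_iff_of_le fun i _ => hterm i).mp heq
    have hcolL : ∀ i, L *ᵥ u i = Real.sqrt (lam i) • (M *ᵥ u i) := by
      intro i
      set s := Real.sqrt (lam i) with hsdef
      have hs2 : s^2 = lam i := Real.sq_sqrt (hlam_nonneg i)
      set x := L *ᵥ u i
      set y := M *ᵥ u i
      have h1 : x ⬝ᵥ y = s := hall i (Finset.mem_univ i)
      have h2 : x ⬝ᵥ x = lam i := hLnorm i
      have h3 : y ⬝ᵥ y ≤ 1 := hMnorm i
      have hw : (x - s • y) ⬝ᵥ (x - s • y) ≤ 0 := by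
        have hx : (x - s • y) ⬝ᵥ (x - s • y)
            = x ⬝ᵥ x - s * (x ⬝ᵥ y) - s * (y ⬝ᵥ x) + s * (s * (y ⬝ᵥ y)) := by
          simp [dotProduct_sub, sub_dotProduct, dotProduct_smul,
            smul_dotProduct, smul_eq_mul]
          ring
        rw [hx, h2, h1, dotProduct_comm y x, h1]
        nlinarith [Real.sqrt_nonneg (lam i)]
      have hz : ∀ z, (x - s • y) z = 0 := by
        intro z
        have hnn0 : (x - s • y) ⬝ᵥ (x - s • y) = 0 :=
          le_antisymm hw (dot_self_nonneg _)
        have := (Finset.sum_eq_zero_iff_of_nonneg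
          (fun z _ => mul_self_nonneg ((x - s • y) z))).mp hnn0 z (Finset.mem_univ z)
        exact mul_self_eq_zero.mp this
      have : x - s • y = 0 := funext hz
      linear_combination (norm := module) this
    have hPL : (P * L) * U = L * U := by
      ext z i
      rw [mul_matrix_apply, mul_matrix_apply, ← Matrix.mulVec_mulVec, hcolL i,
        Matrix.mulVec_smul, Matrix.mulVec_mulVec, hPM, ← hcolL i]
    calc P * L = (P * L) * (U * Uᴴ) := by rw [hU2, Matrix.mul_one]
      _ = ((P * L) * U) * Uᴴ := (Matrix.mul_assoc _ U Uᴴ).symm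
      _ = (L * U) * Uᴴ := by rw [hPL]
      _ = L * (U * Uᴴ) := Matrix.mul_assoc _ U Uᴴ
      _ = L := by rw [hU2, Matrix.mul_one]



variable {V m k : ℕ}

lemma count_perm (Ssets : Fin m → Finset (Fin V)) (hcard : ∀ j, (Ssets j).card = k)
    (hinj : Function.Injective Ssets)
    (hsurj : ∀ s : Finset (Fin V), s.card = k → ∃ j, Ssets j = s)
    (σ : Equiv.Perm (Fin V)) (p : Finset (Fin V) → Prop) [DecidablePred p] :
    (Finset.univ.filter fun j => p ((Ssets j).image σ)).card
      = (Finset.univ.filter fun j => p (Ssets j)).card := by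
  have himg : ∀ (τ : Equiv.Perm (Fin V)) j, ((Ssets j).image τ).card = k := fun τ j => by
    rw [Finset.card_image_of_injective _ τ.injective, hcard]
  choose f hf using fun j => hsurj ((Ssets j).image σ) (himg σ j)
  choose g hg using fun j => hsurj ((Ssets j).image σ.symm) (himg σ.symm j)
  have hgf : ∀ j, g (f j) = j := by
    intro j
    apply hinj
    rw [hg, hf, Finset.image_image]
    simp
  have hfg : ∀ j, f (g j) = j := by
    intro j
    apply hinj
    rw [hf, hg, Finset.image_image]
    simp
  apply Finset.card_bij (fun j _ => f j)
  · intro j hj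
    simp only [Finset.mem_filter, Finset.mem_univ, true_and] at hj ⊢
    rwa [hf]
  · intro j₁ _ j₂ _ h
    have := congrArg g h
    rwa [hgf, hgf] at this
  · intro j hj
    simp only [Finset.mem_filter, Finset.mem_univ, true_and] at hj ⊢
    refine ⟨g j, ?_, hfg j⟩
    rw [hg, Finset.image_image]
    simpa using hj





lemma mem_image_perm {σ : Equiv.Perm (Fin V)} {s : Finset (Fin V)} {x : Fin V} :
    x ∈ s.image σ ↔ σ.symm x ∈ s := by
  constructor
  · rintro h
    obtain ⟨a, ha, rfl⟩ := Finset.mem_image.mp h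
    simpa using ha
  · intro h
    exact Finset.mem_image.mpr ⟨σ.symm x, h, by simp⟩

lemma count_single (Ssets : Fin m → Finset (Fin V)) (hcard : ∀ j, (Ssets j).card = k)
    (hinj : Function.Injective Ssets)
    (hsurj : ∀ s : Finset (Fin V), s.card = k → ∃ j, Ssets j = s)
    (z z' : Fin V) :
    (Finset.univ.filter fun j => z ∈ Ssets j).card
      = (Finset.univ.filter fun j => z' ∈ Ssets j).card := by
  have h := count_perm Ssets hcard hinj hsurj (Equiv.swap z z') (fun s => z' ∈ s)
  rw [← h]
  apply congrArg
  apply Finset.filter_congr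
  intro j _
  rw [mem_image_perm]
  simp [Equiv.swap_apply_right]

lemma exists_perm_pair {z w z' w' : Fin V} (h : z ≠ w) (h' : z' ≠ w') :
    ∃ σ : Equiv.Perm (Fin V), σ z = z' ∧ σ w = w' := by
  refine ⟨(Equiv.swap z z').trans (Equiv.swap (Equiv.swap z z' w) w'), ?_, ?_⟩
  · simp only [Equiv.trans_apply, Equiv.swap_apply_left]
    apply Equiv.swap_apply_of_ne_of_ne
    · intro hc
      apply h
      have h2 := congrArg (Equiv.swap z z') hc
      rwa [Equiv.swap_apply_right, Equiv.swap_apply_self] at h2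
    · exact h'
  · simp only [Equiv.trans_apply, Equiv.swap_apply_left]

lemma count_pair (Ssets : Fin m → Finset (Fin V)) (hcard : ∀ j, (Ssets j).card = k)
    (hinj : Function.Injective Ssets)
    (hsurj : ∀ s : Finset (Fin V), s.card = k → ∃ j, Ssets j = s)
    {z w z' w' : Fin V} (h : z ≠ w) (h' : z' ≠ w') :
    (Finset.univ.filter fun j => z ∈ Ssets j ∧ w ∈ Ssets j).card
      = (Finset.univ.filter fun j => z' ∈ Ssets j ∧ w' ∈ Ssets j).card := by
  obtain ⟨σ, hz, hw⟩ := exists_perm_pair h h'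
  have hcp := count_perm Ssets hcard hinj hsurj σ (fun s => z' ∈ s ∧ w' ∈ s)
  rw [← hcp]
  apply congrArg
  apply Finset.filter_congr
  intro j _
  rw [mem_image_perm, mem_image_perm, ← hz, ← hw, Equiv.symm_apply_apply,
    Equiv.symm_apply_apply]



def Jmat (V : ℕ) : Matrix (Fin V) (Fin V) ℝ := Matrix.of fun _ _ => 1

def Pmat (V : ℕ) : Matrix (Fin V) (Fin V) ℝ := 1 - (V : ℝ)⁻¹ • Jmat V

lemma stil_eq (Ssets : Fin m → Finset (Fin V)) : Stil Ssets = Pmat V * Smat Ssets := rfl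

lemma jmat_mul_jmat : Jmat V * Jmat V = (V : ℝ) • Jmat V := by
  ext z w
  simp [Jmat, Matrix.mul_apply]

lemma jmat_conjT : (Jmat V)ᴴ = Jmat V := by
  ext z w; simp [Jmat]

lemma pmat_conjT : (Pmat V)ᴴ = Pmat V := by
  unfold Pmat
  rw [Matrix.conjTranspose_sub, Matrix.conjTranspose_one, Matrix.conjTranspose_smul,
    jmat_conjT]
  norm_num

lemma pmat_mul_jmat (hV : 0 < V) : Pmat V * Jmat V = 0 := by
  have hVne : (V : ℝ) ≠ 0 := Nat.cast_ne_zero.mpr hV.ne'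
  unfold Pmat
  rw [Matrix.sub_mul, Matrix.one_mul, Matrix.smul_mul, jmat_mul_jmat, smul_smul,
    inv_mul_cancel₀ hVne, one_smul, sub_self]

lemma jmat_mul_pmat (hV : 0 < V) : Jmat V * Pmat V = 0 := by
  have hVne : (V : ℝ) ≠ 0 := Nat.cast_ne_zero.mpr hV.ne'
  unfold Pmat
  rw [Matrix.mul_sub, Matrix.mul_one, Matrix.mul_smul, jmat_mul_jmat, smul_smul,
    inv_mul_cancel₀ hVne, one_smul, sub_self]

lemma pmat_mul_pmat (hV : 0 < V) : Pmat V * Pmat V = Pmat V := by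
  nth_rewrite 1 [Pmat]
  rw [Matrix.sub_mul, Matrix.one_mul, Matrix.smul_mul, jmat_mul_pmat hV, smul_zero,
    sub_zero]

lemma trace_jmat : Matrix.trace (Jmat V) = (V : ℝ) := by
  simp [Jmat, Matrix.trace, Matrix.diag]

lemma trace_pmat (hV : 0 < V) : Matrix.trace (Pmat V) = (V : ℝ) - 1 := by
  have hVne : (V : ℝ) ≠ 0 := Nat.cast_ne_zero.mpr hV.ne'
  unfold Pmat
  rw [Matrix.trace_sub, Matrix.trace_smul, trace_jmat, Matrix.trace_one]
  simp [hVne]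

lemma smat_col_sum (Ssets : Fin m → Finset (Fin V)) (hcard : ∀ j, (Ssets j).card = k)
    (j : Fin m) : ∑ w, Smat Ssets w j = (k : ℝ) := by
  simp only [Smat, Matrix.of_apply]
  rw [Finset.sum_boole]
  congr 1
  rw [← hcard j]
  congr 1
  ext w
  simp

lemma stil_apply (Ssets : Fin m → Finset (Fin V)) (hcard : ∀ j, (Ssets j).card = k)
    (z : Fin V) (j : Fin m) :
    Stil Ssets z j = (if z ∈ Ssets j then (1:ℝ) else 0) - (k : ℝ) / V := by
  have hJS : (Jmat V * Smat Ssets) z j = (k : ℝ) := by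
    rw [Matrix.mul_apply]
    simpa [Jmat] using smat_col_sum Ssets hcard j
  rw [stil_eq, Pmat, Matrix.sub_mul, Matrix.one_mul, Matrix.sub_apply, Matrix.smul_mul,
    Matrix.smul_apply, hJS, smul_eq_mul, div_eq_inv_mul]
  rfl



lemma exists_SST (hV : 2 ≤ V) (hk1 : 1 ≤ k) (hkV : k < V)
    (Ssets : Fin m → Finset (Fin V)) (hcard : ∀ j, (Ssets j).card = k)
    (hinj : Function.Injective Ssets)
    (hsurj : ∀ s : Finset (Fin V), s.card = k → ∃ j, Ssets j = s) :
    ∃ a b : ℝ, 0 < a ∧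
      Smat Ssets * (Smat Ssets)ᴴ
        = a • (1 : Matrix (Fin V) (Fin V) ℝ) + b • Jmat V := by
  have h0 : (0 : ℕ) < V := by omega
  have h1 : (1 : ℕ) < V := by omega
  set z₀ : Fin V := ⟨0, h0⟩ with hz₀
  set w₀ : Fin V := ⟨1, h1⟩ with hw₀
  have hzw : z₀ ≠ w₀ := by simp [hz₀, hw₀, Fin.ext_iff]
  set c1 : ℕ := (Finset.univ.filter fun j => z₀ ∈ Ssets j).card with hc1
  set c2 : ℕ := (Finset.univ.filter fun j => z₀ ∈ Ssets j ∧ w₀ ∈ Ssets j).card with hc2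
  have hc2lt : c2 < c1 := by
    apply Finset.card_lt_card
    rw [Finset.ssubset_iff_of_subset]
    · have hsub : k - 1 ≤ ((Finset.univ.erase w₀).erase z₀).card := by
        rw [Finset.card_erase_of_mem, Finset.card_erase_of_mem]
        · simp only [Finset.card_univ, Fintype.card_fin]
          omega
        · exact Finset.mem_univ _
        · exact Finset.mem_erase.mpr ⟨hzw, Finset.mem_univ _⟩
      obtain ⟨t, ht, htc⟩ := Finset.exists_subset_card_eq hsub
      have hz₀t : z₀ ∉ t := fun h => (Finset.mem_erase.mp (ht h)).1 rfl
      have hw₀t : w₀ ∉ t := fun h =>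
        (Finset.mem_erase.mp (Finset.mem_of_mem_erase (ht h))).1 rfl
      have hscard : (insert z₀ t).card = k := by
        rw [Finset.card_insert_of_notMem hz₀t, htc]; omega
      obtain ⟨j₀, hj₀⟩ := hsurj (insert z₀ t) hscard
      refine ⟨j₀, ?_, ?_⟩
      · simp only [Finset.mem_filter, Finset.mem_univ, true_and, hj₀]
        exact Finset.mem_insert_self _ _
      · simp only [Finset.mem_filter, Finset.mem_univ, true_and, hj₀]
        intro hcon
        rcases Finset.mem_insert.mp hcon.2 with h | h
        · exact hzw h.symm
        · exact hw₀t h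
    · intro j hj
      simp only [Finset.mem_filter] at hj ⊢
      exact ⟨hj.1, hj.2.1⟩
  have hapos : (0:ℝ) < (c1:ℝ) - c2 := by
    have : (c2:ℝ) < c1 := by exact_mod_cast hc2lt
    linarith
  refine ⟨(c1:ℝ) - c2, (c2:ℝ), hapos, ?_⟩
  have hentry : ∀ z w : Fin V, (Smat Ssets * (Smat Ssets)ᴴ) z w
      = ((Finset.univ.filter fun j => z ∈ Ssets j ∧ w ∈ Ssets j).card : ℝ) := by
    intro z w
    have hterm : ∀ j, Smat Ssets z j * (Smat Ssets)ᴴ j w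
        = (if z ∈ Ssets j ∧ w ∈ Ssets j then (1:ℝ) else 0) := by
      intro j
      simp only [Smat, Matrix.conjTranspose_apply, Matrix.of_apply, star_trivial]
      by_cases h1 : z ∈ Ssets j <;> by_cases h2 : w ∈ Ssets j <;> simp [h1, h2]
    rw [Matrix.mul_apply, Finset.sum_congr rfl (fun j _ => hterm j), Finset.sum_boole]
  ext z w
  rw [hentry z w]
  by_cases hzweq : z = w
  · subst hzweq
    have hfz : (Finset.univ.filter fun j => z ∈ Ssets j ∧ z ∈ Ssets j)
        = Finset.univ.filter fun j => z ∈ Ssets j := by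
      apply Finset.filter_congr; intro j _; simp
    rw [hfz, count_single Ssets hcard hinj hsurj z z₀]
    simp only [Matrix.add_apply, Matrix.smul_apply, Matrix.one_apply_eq, Jmat,
      Matrix.of_apply, smul_eq_mul, mul_one]
    ring
  · rw [count_pair Ssets hcard hinj hsurj hzweq hzw]
    simp only [Matrix.add_apply, Matrix.smul_apply, Matrix.one_apply_ne hzweq, Jmat,
      Matrix.of_apply, smul_eq_mul, mul_one, mul_zero, zero_add]
    rfl

lemma trace_lower (hk1 : 1 ≤ k) (hkV : k < V)
    (Ssets : Fin m → Finset (Fin V)) (hcard : ∀ j, (Ssets j).card = k)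
    (L : Matrix (Fin V) (Fin m) ℝ) (hL : svmFeasibleS Ssets L) :
    Matrix.trace ((Stil Ssets)ᴴ * (Stil Ssets)) ≤ Matrix.trace ((Stil Ssets)ᴴ * L) ∧
      (Matrix.trace ((Stil Ssets)ᴴ * L) = Matrix.trace ((Stil Ssets)ᴴ * (Stil Ssets)) →
        Pmat V * L = Stil Ssets) := by
  have hV0 : 0 < V := lt_trans (by omega) hkV
  have hVne : (V:ℝ) ≠ 0 := Nat.cast_ne_zero.mpr hV0.ne'
  have hkV' : (0:ℝ) < (k:ℝ)/V := by positivity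
  -- choose a base point in each support set
  have hne : ∀ j, ∃ z, z ∈ Ssets j := by
    intro j
    apply Finset.card_pos.mp
    rw [hcard j]; omega
  choose z0 hz0 using hne
  set St := Stil Ssets with hStdef
  set D : Matrix (Fin V) (Fin m) ℝ := L - St with hDdef
  set δ : Fin m → ℝ := fun j => D (z0 j) j with hδdef
  have hSt_apply : ∀ z j, St z j = (if z ∈ Ssets j then (1:ℝ) else 0) - (k:ℝ)/V :=
    fun z j => stil_apply Ssets hcard z j
  have hDconst : ∀ j, ∀ z ∈ Ssets j, D z j = δ j := by
    intro j z hz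
    simp only [hδdef, hDdef, Matrix.sub_apply]
    rw [hL.1 j z hz (z0 j) (hz0 j), hSt_apply, hSt_apply, if_pos hz, if_pos (hz0 j)]
  have hDle : ∀ j, ∀ v ∉ Ssets j, D v j ≤ δ j := by
    intro j v hv
    have h1 := hL.2 j (z0 j) (hz0 j) v hv
    simp only [hδdef, hDdef, Matrix.sub_apply]
    rw [hSt_apply, hSt_apply, if_pos (hz0 j), if_neg hv]
    linarith
  have htrace : ∀ X : Matrix (Fin V) (Fin m) ℝ,
      Matrix.trace ((Stil Ssets)ᴴ * X) = ∑ j, ∑ z, St z j * X z j := by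
    intro X
    rw [Matrix.trace]
    apply Finset.sum_congr rfl
    intro j _
    rw [Matrix.diag_apply, Matrix.mul_apply]
    simp [Matrix.conjTranspose_apply, hStdef]
  have hdiff : Matrix.trace ((Stil Ssets)ᴴ * L) - Matrix.trace ((Stil Ssets)ᴴ * St)
      = ∑ j, ∑ z, St z j * D z j := by
    rw [htrace L, htrace St, ← Finset.sum_sub_distrib]
    apply Finset.sum_congr rfl
    intro j _
    rw [← Finset.sum_sub_distrib]
    apply Finset.sum_congr rfl
    intro z _
    simp only [hDdef, Matrix.sub_apply]
    ring
  have hcol : ∀ j, ∑ z, St z j * D z j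
      = (k:ℝ)/V * ∑ v ∈ (Ssets j)ᶜ, (δ j - D v j) := by
    intro j
    rw [← Finset.sum_add_sum_compl (Ssets j)]
    have e1 : ∑ z ∈ Ssets j, St z j * D z j = (k:ℝ) * ((1 - (k:ℝ)/V) * δ j) := by
      rw [Finset.sum_congr rfl (fun z hz => ?_), Finset.sum_const, hcard j,
        nsmul_eq_mul]
      rw [hSt_apply, if_pos hz, hDconst j z hz]
    have e2 : ∑ z ∈ (Ssets j)ᶜ, St z j * D z j
        = -((k:ℝ)/V) * ∑ v ∈ (Ssets j)ᶜ, D v j := by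
      rw [Finset.mul_sum]
      apply Finset.sum_congr rfl
      intro z hz
      rw [hSt_apply, if_neg (Finset.mem_compl.mp hz)]
      ring
    have e3 : ((Ssets j)ᶜ.card : ℝ) = (V:ℝ) - k := by
      rw [Finset.card_compl, hcard j, Fintype.card_fin, Nat.cast_sub (le_of_lt hkV)]
    rw [e1, e2, Finset.sum_sub_distrib, Finset.sum_const, nsmul_eq_mul, e3]
    field_simp
    ring
  have hcolnn : ∀ j, 0 ≤ ∑ z, St z j * D z j := by
    intro j
    rw [hcol j]
    apply mul_nonneg (le_of_lt hkV')
    apply Finset.sum_nonneg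
    intro v hv
    have := hDle j v (Finset.mem_compl.mp hv)
    linarith
  constructor
  · have : 0 ≤ ∑ j, ∑ z, St z j * D z j := Finset.sum_nonneg fun j _ => hcolnn j
    rw [← hdiff] at this
    linarith
  · intro heq
    have hT0 : ∑ j, ∑ z, St z j * D z j = 0 := by rw [← hdiff, heq]; ring
    have hcol0 : ∀ j, ∑ z, St z j * D z j = 0 := by
      intro j
      exact (Finset.sum_eq_zero_iff_of_nonneg (fun j _ => hcolnn j)).mp hT0 j
        (Finset.mem_univ j)
    have hDall : ∀ j z, D z j = δ j := by
      intro j z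
      by_cases hz : z ∈ Ssets j
      · exact hDconst j z hz
      · have h1 := hcol0 j
        rw [hcol j] at h1
        have h2 : ∑ v ∈ (Ssets j)ᶜ, (δ j - D v j) = 0 := by
          rcases mul_eq_zero.mp h1 with h | h
          · exact absurd h (ne_of_gt hkV')
          · exact h
        have h3 := (Finset.sum_eq_zero_iff_of_nonneg
          (fun v hv => by linarith [hDle j v (Finset.mem_compl.mp hv)])).mp h2 z
          (Finset.mem_compl.mpr hz)
        linarith
    -- P * D = 0, hence P * L = Stil
    have hPD : Pmat V * D = 0 := by
      ext z j
      rw [Pmat, Matrix.sub_mul, Matrix.one_mul, Matrix.sub_apply, Matrix.smul_mul,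
        Matrix.smul_apply, Matrix.zero_apply]
      have hJD : (Jmat V * D) z j = (V:ℝ) * δ j := by
        rw [Matrix.mul_apply]
        rw [Finset.sum_congr rfl (fun w _ => ?_), Finset.sum_const, Finset.card_univ,
          Fintype.card_fin, nsmul_eq_mul]
        rw [show (Jmat V) z w = (1:ℝ) from rfl, one_mul, hDall j w]
      rw [hJD, hDall j z, smul_eq_mul]
      field_simp
      ring
    have hPSt : Pmat V * St = St := by
      rw [hStdef, stil_eq, ← Matrix.mul_assoc, pmat_mul_pmat hV0]
    have : Pmat V * L = Pmat V * St + Pmat V * D := by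
      rw [← Matrix.mul_add, hDdef]
      congr 1
      abel
    rw [this, hPD, hPSt, add_zero, hStdef]

end Stmt7

/-- in the symmetric setting (all `C(V,k)` support sets of size `k`), the centered
support matrix `S̃` is the unique minimizer of the NTP-SVM program. -/
theorem stmt_7 (V k : ℕ) (hV : 2 ≤ V) (hk1 : 1 ≤ k) (hkV : k < V)
    (m : ℕ) (hm : m = Nat.choose V k)
    (Ssets : Fin m → Finset (Fin V))
    (hcard : ∀ j, (Ssets j).card = k)
    (hinj : Function.Injective Ssets)
    (hsurj : ∀ s : Finset (Fin V), s.card = k → ∃ j, Ssets j = s) :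
    svmFeasibleS Ssets (Stil Ssets) ∧
    (∀ L : Matrix (Fin V) (Fin m) ℝ, svmFeasibleS Ssets L →
        nuclearNorm (Stil Ssets) ≤ nuclearNorm L) ∧
    (∀ L : Matrix (Fin V) (Fin m) ℝ, svmFeasibleS Ssets L →
        nuclearNorm L = nuclearNorm (Stil Ssets) → L = Stil Ssets) := by
  classical
  have hV0 : 0 < V := by omega
  have hVne : (V:ℝ) ≠ 0 := Nat.cast_ne_zero.mpr (by omega)
  obtain ⟨a, b, ha, hSST⟩ := Stmt7.exists_SST hV hk1 hkV Ssets hcard hinj hsurj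
  set St := Stil Ssets with hStdef
  have hfeas : svmFeasibleS Ssets St := by
    constructor
    · intro j z hz z' hz'
      rw [hStdef, Stmt7.stil_apply Ssets hcard, Stmt7.stil_apply Ssets hcard,
        if_pos hz, if_pos hz']
    · intro j z hz v hv
      rw [hStdef, Stmt7.stil_apply Ssets hcard, Stmt7.stil_apply Ssets hcard,
        if_pos hz, if_neg hv]
      linarith [le_refl ((1:ℝ))]
  have hPSt : Stmt7.Pmat V * St = St := by
    rw [hStdef, Stmt7.stil_eq, ← Matrix.mul_assoc, Stmt7.pmat_mul_pmat hV0]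
  have hStH : Stᴴ = (Smat Ssets)ᴴ * Stmt7.Pmat V := by
    rw [hStdef, Stmt7.stil_eq, Matrix.conjTranspose_mul, Stmt7.pmat_conjT]
  have hStSt : St * Stᴴ = a • Stmt7.Pmat V := by
    rw [hStH]
    nth_rewrite 1 [hStdef, Stmt7.stil_eq]
    calc Stmt7.Pmat V * Smat Ssets * ((Smat Ssets)ᴴ * Stmt7.Pmat V)
        = Stmt7.Pmat V * (Smat Ssets * (Smat Ssets)ᴴ) * Stmt7.Pmat V := by
          rw [Matrix.mul_assoc (Stmt7.Pmat V) (Smat Ssets), ← Matrix.mul_assoc (Smat Ssets),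
            ← Matrix.mul_assoc]
      _ = Stmt7.Pmat V * (a • (1:Matrix (Fin V) (Fin V) ℝ) + b • Stmt7.Jmat V)
            * Stmt7.Pmat V := by rw [hSST]
      _ = a • Stmt7.Pmat V := by
          rw [Matrix.mul_add, Matrix.mul_smul, Matrix.mul_one, Matrix.mul_smul,
            Stmt7.pmat_mul_jmat hV0, smul_zero, add_zero, Matrix.smul_mul,
            Stmt7.pmat_mul_pmat hV0]
  have hproj : (Stᴴ * St) * (Stᴴ * St) = a • (Stᴴ * St) := by
    rw [Matrix.mul_assoc Stᴴ St (Stᴴ * St), ← Matrix.mul_assoc St Stᴴ St, hStSt,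
      Matrix.smul_mul, hPSt, Matrix.mul_smul]
  have htrSS : Matrix.trace (Stᴴ * St) = a * ((V:ℝ) - 1) := by
    rw [Matrix.trace_mul_comm, hStSt, Matrix.trace_smul, Stmt7.trace_pmat hV0,
      smul_eq_mul]
  -- eigenvalue analysis
  have hA : (Stᴴ * St).IsHermitian := Matrix.isHermitian_conjTranspose_mul_self St
  set lam := hA.eigenvalues with hlam
  set U : Matrix (Fin m) (Fin m) ℝ := (hA.eigenvectorUnitary : Matrix (Fin m) (Fin m) ℝ)
    with hUdef
  have hU2 : U * star U = 1 := Matrix.mem_unitaryGroup_iff.mp hA.eigenvectorUnitary.2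
  have hUdiag : star U * (Stᴴ * St) * U = Matrix.diagonal lam := by
    have h := hA.conjStarAlgAut_star_eigenvectorUnitary
    rwa [Unitary.conjStarAlgAut_star_apply, RCLike.ofReal_real_eq_id, Function.id_comp] at h
  have hDD : Matrix.diagonal lam * Matrix.diagonal lam = a • Matrix.diagonal lam := by
    rw [← hUdiag]
    simp only [Matrix.mul_assoc]
    rw [← Matrix.mul_assoc U (star U), hU2, Matrix.one_mul,
      ← Matrix.mul_assoc St Stᴴ (St * U), hStSt, Matrix.smul_mul,
      ← Matrix.mul_assoc (Stmt7.Pmat V) St U, hPSt, Matrix.mul_smul, Matrix.mul_smul]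
  have hlamsq : ∀ i, lam i * lam i = a * lam i := by
    intro i
    have h := congrFun (congrFun hDD i) i
    simpa [Matrix.diagonal_mul_diagonal, Matrix.diagonal_apply_eq, Matrix.smul_apply,
      smul_eq_mul] using h
  have hlam_nonneg : ∀ i, 0 ≤ lam i := fun i =>
    (Matrix.posSemidef_conjTranspose_mul_self St).eigenvalues_nonneg i
  set s := Real.sqrt a with hsdef
  have hs : 0 < s := Real.sqrt_pos.mpr ha
  have hsne : s ≠ 0 := ne_of_gt hs
  have hss : s * s = a := Real.mul_self_sqrt ha.le
  have hsqrt : ∀ i, Real.sqrt (lam i) = lam i / s := by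
    intro i
    have h := hlamsq i
    have : lam i * (lam i - a) = 0 := by linear_combination h
    rcases mul_eq_zero.mp this with h0 | h0
    · rw [h0]; simp
    · have hla : lam i = a := by linarith
      rw [hla, eq_div_iff hsne, hsdef, Real.mul_self_sqrt ha.le]
  have hsum : ∑ i, lam i = Matrix.trace (Stᴴ * St) := by
    rw [← Matrix.trace_diagonal, ← hUdiag,
      Matrix.trace_mul_comm (star U * (Stᴴ * St)) U, ← Matrix.mul_assoc, hU2,
      Matrix.one_mul]
  have hnn0 : nuclearNorm St = ∑ i, Real.sqrt (lam i) := rfl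
  have hnnSt : nuclearNorm St = ((V:ℝ) - 1) * s := by
    rw [hnn0, Finset.sum_congr rfl (fun i _ => hsqrt i), ← Finset.sum_div, hsum, htrSS,
      div_eq_iff hsne]
    linear_combination ((1:ℝ) - (V:ℝ)) * hss
  -- dual certificate
  set M : Matrix (Fin V) (Fin m) ℝ := s⁻¹ • St with hMdef
  have hMH : Mᴴ = s⁻¹ • Stᴴ := by
    rw [hMdef, Matrix.conjTranspose_smul]
    norm_num
  have hMM : Mᴴ * M = a⁻¹ • (Stᴴ * St) := by
    rw [hMH, hMdef, Matrix.smul_mul, Matrix.mul_smul, smul_smul, ← mul_inv, hss]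
  have hRproj : (Mᴴ * M) * (Mᴴ * M) = Mᴴ * M := by
    rw [hMM, Matrix.smul_mul, Matrix.mul_smul, smul_smul, hproj, smul_smul]
    congr 1
    field_simp
  have htrM : ∀ X : Matrix (Fin V) (Fin m) ℝ,
      Matrix.trace (Mᴴ * X) = s⁻¹ * Matrix.trace (Stᴴ * X) := by
    intro X
    rw [hMH, Matrix.smul_mul, Matrix.trace_smul, smul_eq_mul]
  have hPM : Stmt7.Pmat V * M = M := by
    rw [hMdef, Matrix.mul_smul, hPSt]
  have h1 : nuclearNorm St = s⁻¹ * Matrix.trace (Stᴴ * St) := by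
    rw [htrSS, hnnSt, ← hss]
    field_simp
  refine ⟨hfeas, ?_, ?_⟩
  · intro L hL
    obtain ⟨hlow, _⟩ := Stmt7.trace_lower hk1 hkV Ssets hcard L hL
    obtain ⟨hineq, _⟩ := Stmt7.key M L hRproj
    calc nuclearNorm St = s⁻¹ * Matrix.trace (Stᴴ * St) := h1
      _ ≤ s⁻¹ * Matrix.trace (Stᴴ * L) := by
          apply mul_le_mul_of_nonneg_left _ (inv_nonneg.mpr hs.le)
          exact hlow
      _ = Matrix.trace (Mᴴ * L) := (htrM L).symm
      _ ≤ nuclearNorm L := hineq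
  · intro L hL hnnL
    obtain ⟨hlow, heqcase⟩ := Stmt7.trace_lower hk1 hkV Ssets hcard L hL
    obtain ⟨hineq, hequ⟩ := Stmt7.key M L hRproj
    have c2 : nuclearNorm L ≤ Matrix.trace (Mᴴ * L) := by
      rw [hnnL, h1, htrM L]
      exact mul_le_mul_of_nonneg_left hlow (inv_nonneg.mpr hs.le)
    have e1 : Matrix.trace (Mᴴ * L) = nuclearNorm L := le_antisymm hineq c2
    have hPL : Stmt7.Pmat V * L = L := hequ e1 (Stmt7.Pmat V) hPM
    have e2 : Matrix.trace (Stᴴ * L) = Matrix.trace (Stᴴ * St) := by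
      have h3 : s⁻¹ * Matrix.trace (Stᴴ * L) = s⁻¹ * Matrix.trace (Stᴴ * St) := by
        rw [← htrM L, e1, hnnL, h1]
      exact mul_left_cancel₀ (inv_ne_zero hsne) h3
    have h4 := heqcase e2
    rw [hPL] at h4
    exact h4
end
end

section
/- In the symmetric setting, assume d ≥ V−1, let S̃ = UΣVᵀ be a singular value decomposition of S̃ (U ∈ ℝ^{V×(V−1)}, V ∈ ℝ^{m×(V−1)} with orthonormal columns, Σ ∈ ℝ^{(V−1)×(V−1)} diagonal positive), and define the limiting embedding matrices W := UΣ^{1/2}R ∈ ℝ^{V×d} and H := RᵀΣ^{1/2}Vᵀ ∈ ℝ^{d×m} for any R ∈ ℝ^{(V−1)×d} with RRᵀ = I_{V−1}. Writing w_v for the rows of W and h_j for the columns of H: (a) all word embeddings are equinorm with ‖w_v‖² = (1 − 1/V)·√C(V−2,k−1), and cos(w_v, w_{v′}) = −1/(V−1) for all v ≠ v′ (the word embeddings form an equiangular tight frame); (b) all context embeddings are equinorm with ‖h_j‖² = (k − k²/V)/√C(V−2,k−1), and cos(h_j, h_{j′}) = (|S_j ∩ S_{j′}| − k²/V)/(k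 − k²/V) for all j ≠ j′; (c) consequently ‖w_v‖²/‖h_j‖² = (V−1)·C(V−2,k−1)/(k(V−k)) for all v and j. -/
open Filter Topology Matrix

noncomputable section

/-- Euclidean norm of a vector. -/
def vecNorm {n : ℕ} (v : Fin n → ℝ) : ℝ := Real.sqrt (∑ i, v i ^ 2)

/-- Euclidean dot product of vectors. -/
def dotp {n : ℕ} (a b : Fin n → ℝ) : ℝ := ∑ i, a i * b i

/-- Cosine similarity of two vectors. -/
def cosSim {n : ℕ} (a b : Fin n → ℝ) : ℝ := dotp a b / (vecNorm a * vecNorm b)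

lemma vecNorm_sq {n : ℕ} (v : Fin n → ℝ) : vecNorm v ^ 2 = dotp v v := by
  rw [vecNorm, Real.sq_sqrt (by positivity), dotp]
  exact Finset.sum_congr rfl fun i _ => pow_two (v i)

lemma vecNorm_eq {n : ℕ} (v : Fin n → ℝ) : vecNorm v = Real.sqrt (vecNorm v ^ 2) := by
  rw [vecNorm, Real.sq_sqrt (by positivity)]

lemma count_subsets {V k m : ℕ} (Ssets : Fin m → Finset (Fin V))
    (hcard : ∀ j, (Ssets j).card = k)
    (hinj : Function.Injective Ssets)
    (hsurj : ∀ s : Finset (Fin V), s.card = k → ∃ j, Ssets j = s)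
    (t : Finset (Fin V)) (ht : t.card ≤ k) :
    (Finset.univ.filter (fun j => t ⊆ Ssets j)).card
      = Nat.choose (V - t.card) (k - t.card) := by
  have key : (Finset.univ.filter (fun j => t ⊆ Ssets j)).card
      = ((Finset.univ \ t).powersetCard (k - t.card)).card := by
    apply Finset.card_bij (fun j _ => Ssets j \ t)
    · intro j hj
      simp only [Finset.mem_filter] at hj
      rw [Finset.mem_powersetCard]
      refine ⟨Finset.sdiff_subset_sdiff (Finset.subset_univ _) le_rfl, ?_⟩
      rw [Finset.card_sdiff_of_subset hj.2, hcard]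
    · intro j hj j' hj' h
      simp only [Finset.mem_filter] at hj hj'
      apply hinj
      rw [← Finset.sdiff_union_of_subset hj.2, ← Finset.sdiff_union_of_subset hj'.2, h]
    · intro u hu
      rw [Finset.mem_powersetCard] at hu
      have hdisj : Disjoint u t := (Finset.subset_sdiff.mp hu.1).2
      have hcardu : (u ∪ t).card = k := by
        rw [Finset.card_union_of_disjoint hdisj, hu.2, Nat.sub_add_cancel ht]
      obtain ⟨j, hj⟩ := hsurj _ hcardu
      refine ⟨j, ?_, ?_⟩
      · simp only [Finset.mem_filter]
        exact ⟨Finset.mem_univ _, by rw [hj]; exact Finset.subset_union_right⟩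
      · rw [hj, Finset.union_sdiff_cancel_right hdisj]
  rw [key, Finset.card_powersetCard, Finset.card_sdiff_of_subset (Finset.subset_univ _),
    Finset.card_univ, Fintype.card_fin]

lemma smat_gram {V k m : ℕ} (hV : 2 ≤ V) (hk1 : 1 ≤ k) (hkV : k < V)
    (Ssets : Fin m → Finset (Fin V))
    (hcard : ∀ j, (Ssets j).card = k)
    (hinj : Function.Injective Ssets)
    (hsurj : ∀ s : Finset (Fin V), s.card = k → ∃ j, Ssets j = s)
    (v v' : Fin V) :
    (Smat Ssets * (Smat Ssets)ᵀ) v v' =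
      if v = v' then ((Nat.choose (V-1) (k-1) : ℝ))
      else ((Nat.choose (V-1) (k-1) - Nat.choose (V-2) (k-1) : ℕ) : ℝ) := by
  rw [Matrix.mul_apply]
  simp only [Smat, Matrix.transpose_apply, Matrix.of_apply, ite_mul, mul_ite,
    mul_one, mul_zero, zero_mul, ← ite_and]
  rw [Finset.sum_boole]
  split_ifs with hvv
  · subst hvv
    have : (Finset.univ.filter (fun j => v ∈ Ssets j ∧ v ∈ Ssets j))
        = Finset.univ.filter (fun j => ({v} : Finset (Fin V)) ⊆ Ssets j) := by
      apply Finset.filter_congr; intro j _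
      simp [Finset.singleton_subset_iff, and_self]
    rw [this, count_subsets Ssets hcard hinj hsurj _ (by simp; omega)]
    simp
  · have : (Finset.univ.filter (fun j => v' ∈ Ssets j ∧ v ∈ Ssets j))
        = Finset.univ.filter (fun j => ({v, v'} : Finset (Fin V)) ⊆ Ssets j) := by
      apply Finset.filter_congr; intro j _
      simp [Finset.insert_subset_iff, and_comm]
    rw [this]
    have hcard2 : ({v, v'} : Finset (Fin V)).card = 2 := by
      rw [Finset.card_insert_of_notMem (by simp [hvv]), Finset.card_singleton]
    rcases Nat.lt_or_ge k 2 with hk2 | hk2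
    · -- k = 1
      interval_cases k
      have h0 : (Finset.univ.filter (fun j => ({v, v'} : Finset (Fin V)) ⊆ Ssets j)) = ∅ := by
        apply Finset.filter_false_of_mem
        intro j _ hsub
        have := Finset.card_le_card hsub
        rw [hcard2, hcard] at this; omega
      rw [h0]
      simp
    · rw [count_subsets Ssets hcard hinj hsurj _ (by rw [hcard2]; omega), hcard2]
      congr 2
      obtain ⟨V2, rfl⟩ : ∃ V2, V = V2 + 2 := ⟨V - 2, by omega⟩
      obtain ⟨K, rfl⟩ : ∃ K, k = K + 2 := ⟨k - 2, by omega⟩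
      simp only [Nat.add_sub_cancel, show V2 + 2 - 1 = V2 + 1 by omega,
        show K + 2 - 1 = K + 1 by omega]
      simp only [Nat.choose_succ_succ, Nat.succ_eq_add_one]
      omega

set_option maxHeartbeats 1000000 in
/-- in the symmetric setting with `d ≥ V − 1`, the limiting embeddings
`W = UΣ^{1/2}R`, `H = RᵀΣ^{1/2}Vᵀ` built from an SVD `S̃ = UΣVᵀ` satisfy:
(a) the word embeddings form an equiangular tight frame with the stated norms and angles;
(b) the context embeddings are equinorm with the stated norms and cosine similarities;
(c) the stated norm ratio holds. -/
theorem stmt_8 (V k d : ℕ) (hV : 2 ≤ V) (hk1 : 1 ≤ k) (hkV : k < V)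
    (m : ℕ) (hm : m = Nat.choose V k)
    (Ssets : Fin m → Finset (Fin V))
    (hcard : ∀ j, (Ssets j).card = k)
    (hinj : Function.Injective Ssets)
    (hsurj : ∀ s : Finset (Fin V), s.card = k → ∃ j, Ssets j = s)
    (hd : V - 1 ≤ d)
    (U : Matrix (Fin V) (Fin (V - 1)) ℝ) (Vm : Matrix (Fin m) (Fin (V - 1)) ℝ)
    (σ : Fin (V - 1) → ℝ)
    (hU : Uᵀ * U = 1) (hVm : Vmᵀ * Vm = 1) (hσ : ∀ i, 0 < σ i)
    (hSVD : Stil Ssets = U * Matrix.diagonal σ * Vmᵀ)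
    (R : Matrix (Fin (V - 1)) (Fin d) ℝ) (hR : R * Rᵀ = 1)
    (W : Matrix (Fin V) (Fin d) ℝ)
    (hW : W = U * Matrix.diagonal (fun i => Real.sqrt (σ i)) * R)
    (H : Matrix (Fin d) (Fin m) ℝ)
    (hH : H = Rᵀ * Matrix.diagonal (fun i => Real.sqrt (σ i)) * Vmᵀ) :
    -- (a) word embeddings form an equiangular tight frame
    (∀ v : Fin V,
        vecNorm (W v) ^ 2 = (1 - 1 / (V : ℝ)) * Real.sqrt (Nat.choose (V - 2) (k - 1))) ∧
    (∀ v v' : Fin V, v ≠ v' → cosSim (W v) (W v') = -1 / ((V : ℝ) - 1)) ∧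
    -- (b) context embeddings: norms and cosine similarities
    (∀ j : Fin m,
        vecNorm (fun t => H t j) ^ 2 =
          ((k : ℝ) - (k : ℝ) ^ 2 / (V : ℝ)) / Real.sqrt (Nat.choose (V - 2) (k - 1))) ∧
    (∀ j j' : Fin m, j ≠ j' →
        cosSim (fun t => H t j) (fun t => H t j') =
          (((Ssets j ∩ Ssets j').card : ℝ) - (k : ℝ) ^ 2 / (V : ℝ)) /
            ((k : ℝ) - (k : ℝ) ^ 2 / (V : ℝ))) ∧
    -- (c) norm ratio
    (∀ (v : Fin V) (j : Fin m),
        vecNorm (W v) ^ 2 / vecNorm (fun t => H t j) ^ 2 =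
          ((V : ℝ) - 1) * (Nat.choose (V - 2) (k - 1) : ℝ) /
            ((k : ℝ) * ((V : ℝ) - (k : ℝ)))) := by
  -- basic scalar facts
  have hV0 : (0:ℝ) < (V:ℝ) := by exact_mod_cast (by omega : 0 < V)
  have hVne : (V:ℝ) ≠ 0 := hV0.ne'
  set cc : ℝ := ((Nat.choose (V - 2) (k - 1) : ℕ) : ℝ) with hccdef
  have hccpos : 0 < cc := by
    rw [hccdef]
    exact_mod_cast Nat.choose_pos (by omega : k - 1 ≤ V - 2)
  set s : ℝ := Real.sqrt cc with hsdef
  have hspos : 0 < s := Real.sqrt_pos.mpr hccpos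
  have hss : s * s = cc := Real.mul_self_sqrt hccpos.le
  have hscc : s * cc⁻¹ = s⁻¹ := by
    rw [← hss, mul_inv, ← mul_assoc, mul_inv_cancel₀ hspos.ne', one_mul]
  -- matrix setup
  set J : Matrix (Fin V) (Fin V) ℝ := Matrix.of fun _ _ => (1:ℝ) with hJdef
  set P : Matrix (Fin V) (Fin V) ℝ :=
    (1 : Matrix (Fin V) (Fin V) ℝ) - (V : ℝ)⁻¹ • J with hPdef
  have hStil : Stil Ssets = P * Smat Ssets := rfl
  have hJJ : J * J = (V:ℝ) • J := by
    ext i j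
    simp [hJdef, Matrix.mul_apply, Matrix.smul_apply, Finset.sum_const, Finset.card_univ]
  have hJt : Jᵀ = J := by ext i j; simp [hJdef]
  have hPt : Pᵀ = P := by
    rw [hPdef, Matrix.transpose_sub, Matrix.transpose_one, Matrix.transpose_smul, hJt]
  have hPJ : P * J = 0 := by
    rw [hPdef, Matrix.sub_mul, Matrix.one_mul, Matrix.smul_mul, hJJ, smul_smul,
      inv_mul_cancel₀ hVne, one_smul, sub_self]
  have hJP : J * P = 0 := by
    rw [hPdef, Matrix.mul_sub, Matrix.mul_one, Matrix.mul_smul, hJJ, smul_smul,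
      inv_mul_cancel₀ hVne, one_smul, sub_self]
  have hPP : P * P = P := by
    conv_lhs => rw [hPdef]
    rw [Matrix.mul_sub, Matrix.mul_one, Matrix.mul_smul, hPJ, smul_zero, sub_zero]
  -- all-ones column
  set o : Matrix (Fin V) (Fin 1) ℝ := Matrix.of fun _ _ => (1:ℝ) with hodef
  have hJoo : J = o * oᵀ := by
    ext i j; simp [hJdef, hodef, Matrix.mul_apply]
  have hJo : J * o = (V:ℝ) • o := by
    ext i j
    simp [hJdef, hodef, Matrix.mul_apply, Matrix.smul_apply, Finset.sum_const,
      Finset.card_univ]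
  have hPo : P * o = 0 := by
    rw [hPdef, Matrix.sub_mul, Matrix.one_mul, Matrix.smul_mul, hJo, smul_smul,
      inv_mul_cancel₀ hVne, one_smul, sub_self]
  -- Gram matrix of Smat
  set a : ℕ := Nat.choose (V-1) (k-1) with hadef
  set b : ℕ := Nat.choose (V-1) (k-1) - Nat.choose (V-2) (k-1) with hbdef
  have hba : b + Nat.choose (V-2) (k-1) = a := by
    have : Nat.choose (V-2) (k-1) ≤ Nat.choose (V-1) (k-1) :=
      Nat.choose_le_choose _ (by omega)
    omega
  have habR : (a:ℝ) - (b:ℝ) = cc := by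
    rw [hccdef]
    have := hba
    push_cast [← this]
    ring
  have hGram : Smat Ssets * (Smat Ssets)ᵀ = (b:ℝ) • J + ((a:ℝ) - (b:ℝ)) • 1 := by
    ext v v'
    rw [smat_gram hV hk1 hkV Ssets hcard hinj hsurj v v']
    simp only [Matrix.add_apply, Matrix.smul_apply, hJdef, Matrix.of_apply,
      Matrix.one_apply, smul_eq_mul]
    split_ifs with h
    · rw [show ((V - 1).choose (k - 1) : ℝ) = (a:ℝ) from by rw [hadef]]
      ring
    · ring
  -- Stil * Stilᵀ = cc • P
  have hSSt : Stil Ssets * (Stil Ssets)ᵀ = cc • P := by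
    rw [hStil, Matrix.transpose_mul, ← Matrix.mul_assoc, Matrix.mul_assoc P,
      hGram, hPt]
    rw [Matrix.mul_add, Matrix.add_mul, Matrix.mul_smul, Matrix.smul_mul, hPJ,
      Matrix.zero_mul, smul_zero, zero_add, Matrix.mul_smul, Matrix.smul_mul,
      Matrix.mul_one, hPP, habR]
  -- SVD consequences
  set D : Matrix (Fin (V-1)) (Fin (V-1)) ℝ := Matrix.diagonal σ with hDdef
  set D2 : Matrix (Fin (V-1)) (Fin (V-1)) ℝ := Matrix.diagonal (fun i => σ i * σ i)
    with hD2def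
  have hDD : D * D = D2 := by
    rw [hDdef, hD2def, Matrix.diagonal_mul_diagonal]
  have hDt : Dᵀ = D := by rw [hDdef, Matrix.diagonal_transpose]
  have hUDU : U * D2 * Uᵀ = cc • P := by
    have h1 : Stil Ssets * (Stil Ssets)ᵀ = U * D2 * Uᵀ := by
      rw [hSVD, Matrix.transpose_mul, Matrix.transpose_mul, Matrix.transpose_transpose,
        hDt]
      calc U * D * Vmᵀ * (Vm * (D * Uᵀ))
          = U * (D * ((Vmᵀ * Vm) * (D * Uᵀ))) := by
            simp only [Matrix.mul_assoc]
        _ = U * D2 * Uᵀ := by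
            rw [hVm, Matrix.one_mul, ← hDD]
            simp only [Matrix.mul_assoc]
    rw [← h1, hSSt]
  -- Uᵀ o = 0
  have hUto : Uᵀ * o = 0 := by
    have h1 : U * D2 * Uᵀ * o = 0 := by
      rw [hUDU, Matrix.smul_mul, hPo, smul_zero]
    have h2 : D2 * (Uᵀ * o) = 0 := by
      have h3 := congrArg (fun M => Uᵀ * M) h1
      simp only [Matrix.mul_zero] at h3
      calc D2 * (Uᵀ * o) = (Uᵀ * U) * (D2 * (Uᵀ * o)) := by rw [hU, Matrix.one_mul]
        _ = Uᵀ * (U * D2 * Uᵀ * o) := by simp only [Matrix.mul_assoc]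
        _ = 0 := h3
    ext i w
    have h4 := congrFun (congrFun h2 i) w
    simp only [hD2def, Matrix.diagonal_mul, Matrix.zero_apply] at h4 ⊢
    have hne : σ i * σ i ≠ 0 := (mul_pos (hσ i) (hσ i)).ne'
    exact (mul_eq_zero.mp h4).resolve_left hne
  -- D2 = cc • 1
  have hD2c : D2 = cc • 1 := by
    have h1 : Uᵀ * (U * D2 * Uᵀ) * U = D2 := by
      calc Uᵀ * (U * D2 * Uᵀ) * U = (Uᵀ * U) * D2 * (Uᵀ * U) := by
            simp only [Matrix.mul_assoc]
        _ = D2 := by rw [hU, Matrix.one_mul, Matrix.mul_one]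
    have hUJU : Uᵀ * J * U = 0 := by
      rw [hJoo]
      calc Uᵀ * (o * oᵀ) * U = (Uᵀ * o) * (oᵀ * U) := by simp only [Matrix.mul_assoc]
        _ = 0 := by rw [hUto, Matrix.zero_mul]
    have hUPU : Uᵀ * P * U = 1 := by
      rw [hPdef, Matrix.mul_sub, Matrix.mul_one, Matrix.sub_mul, Matrix.mul_smul,
        Matrix.smul_mul, hUJU, smul_zero, sub_zero, hU]
    have h2 : Uᵀ * (cc • P) * U = cc • (1 : Matrix (Fin (V-1)) (Fin (V-1)) ℝ) := by
      rw [Matrix.mul_smul, Matrix.smul_mul, hUPU]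
    rw [← h1, hUDU, h2]
  have hσ2 : ∀ i, σ i * σ i = cc := by
    intro i
    have := congrFun (congrFun hD2c i) i
    simpa [hD2def, Matrix.diagonal_apply_eq, Matrix.smul_apply, Matrix.one_apply_eq]
      using this
  have hσs : ∀ i, σ i = s := by
    intro i
    have h1 : σ i = Real.sqrt (σ i * σ i) := (Real.sqrt_mul_self (hσ i).le).symm
    rw [h1, hσ2 i]
  -- U Uᵀ = P
  have hUUt : U * Uᵀ = P := by
    have h1 : U * D2 * Uᵀ = cc • (U * Uᵀ) := by
      rw [hD2c, Matrix.mul_smul, Matrix.mul_one, Matrix.smul_mul]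
    rw [h1] at hUDU
    exact smul_right_injective _ hccpos.ne' hUDU
  -- Ds * Ds = s • 1
  set Ds : Matrix (Fin (V-1)) (Fin (V-1)) ℝ :=
    Matrix.diagonal (fun i => Real.sqrt (σ i)) with hDsdef
  have hDst : Dsᵀ = Ds := by rw [hDsdef, Matrix.diagonal_transpose]
  have hDsDs : Ds * Ds = s • 1 := by
    rw [hDsdef, Matrix.diagonal_mul_diagonal]
    have : (fun i => Real.sqrt (σ i) * Real.sqrt (σ i)) = fun _ => s := by
      funext i
      rw [Real.mul_self_sqrt (hσ i).le, hσs i]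
    rw [this]
    ext i j
    rcases eq_or_ne i j with rfl | h
    · simp [Matrix.diagonal_apply_eq, Matrix.one_apply_eq]
    · simp [Matrix.diagonal_apply_ne _ h, Matrix.one_apply_ne h]
  -- W Wᵀ = s • P
  have hWW : W * Wᵀ = s • P := by
    rw [hW, Matrix.transpose_mul, Matrix.transpose_mul, hDst]
    calc U * Ds * R * (Rᵀ * (Ds * Uᵀ))
        = U * (Ds * ((R * Rᵀ) * (Ds * Uᵀ))) := by simp only [Matrix.mul_assoc]
      _ = U * ((Ds * Ds) * Uᵀ) := by rw [hR, Matrix.one_mul, Matrix.mul_assoc]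
      _ = s • (U * Uᵀ) := by
          rw [hDsDs, Matrix.smul_mul, Matrix.one_mul, Matrix.mul_smul]
      _ = s • P := by rw [hUUt]
  -- Stilᵀ Stil = cc • (Vm Vmᵀ)
  have hStS_svd : (Stil Ssets)ᵀ * Stil Ssets = cc • (Vm * Vmᵀ) := by
    rw [hSVD, Matrix.transpose_mul, Matrix.transpose_mul, Matrix.transpose_transpose, hDt]
    calc Vm * (D * Uᵀ) * (U * D * Vmᵀ)
        = Vm * (D * ((Uᵀ * U) * (D * Vmᵀ))) := by simp only [Matrix.mul_assoc]
      _ = Vm * ((D * D) * Vmᵀ) := by rw [hU, Matrix.one_mul, Matrix.mul_assoc]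
      _ = cc • (Vm * Vmᵀ) := by
          rw [hDD, hD2c, Matrix.smul_mul, Matrix.one_mul, Matrix.mul_smul]
  -- Hᵀ H = (s * cc⁻¹) • (Stilᵀ Stil)
  have hHH : Hᵀ * H = (s * cc⁻¹) • ((Stil Ssets)ᵀ * Stil Ssets) := by
    rw [hH, Matrix.transpose_mul, Matrix.transpose_mul, Matrix.transpose_transpose,
      hDst]
    calc Vm * (Ds * Rᵀᵀ) * (Rᵀ * Ds * Vmᵀ)
        = Vm * (Ds * ((R * Rᵀ) * (Ds * Vmᵀ))) := by
          rw [Matrix.transpose_transpose]; simp only [Matrix.mul_assoc]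
      _ = Vm * ((Ds * Ds) * Vmᵀ) := by rw [hR, Matrix.one_mul, Matrix.mul_assoc]
      _ = s • (Vm * Vmᵀ) := by
          rw [hDsDs, Matrix.smul_mul, Matrix.one_mul, Matrix.mul_smul]
      _ = (s * cc⁻¹) • (cc • (Vm * Vmᵀ)) := by
          rw [smul_smul, mul_assoc, inv_mul_cancel₀ hccpos.ne', mul_one]
      _ = (s * cc⁻¹) • ((Stil Ssets)ᵀ * Stil Ssets) := by rw [hStS_svd]
  -- entries of Stilᵀ Stil
  have hStS_ent : ∀ j j', ((Stil Ssets)ᵀ * Stil Ssets) j j'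
      = ((Ssets j ∩ Ssets j').card : ℝ) - (k:ℝ)^2 / (V:ℝ) := by
    intro j j'
    have h1 : (Stil Ssets)ᵀ * Stil Ssets
        = (Smat Ssets)ᵀ * Smat Ssets
          - (V:ℝ)⁻¹ • ((Smat Ssets)ᵀ * (o * (oᵀ * Smat Ssets))) := by
      rw [hStil, Matrix.transpose_mul, hPt]
      calc (Smat Ssets)ᵀ * P * (P * Smat Ssets)
          = (Smat Ssets)ᵀ * ((P * P) * Smat Ssets) := by simp only [Matrix.mul_assoc]
        _ = (Smat Ssets)ᵀ * (P * Smat Ssets) := by rw [hPP]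
        _ = _ := by
            rw [hPdef, Matrix.sub_mul, Matrix.one_mul, Matrix.mul_sub, Matrix.smul_mul,
              Matrix.mul_smul, hJoo]
            simp only [Matrix.mul_assoc]
    rw [h1]
    have hSo : ∀ jj : Fin m, ((Smat Ssets)ᵀ * o) jj (0 : Fin 1) = (k:ℝ) := by
      intro jj
      rw [Matrix.mul_apply]
      simp only [Smat, Matrix.transpose_apply, Matrix.of_apply, hodef, mul_one]
      rw [Finset.sum_boole]
      simp only [Finset.filter_univ_mem]
      exact_mod_cast congrArg Nat.cast (hcard jj)
    have hSS : ((Smat Ssets)ᵀ * Smat Ssets) j j' = ((Ssets j ∩ Ssets j').card : ℝ) := by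
      rw [Matrix.mul_apply]
      simp only [Smat, Matrix.transpose_apply, Matrix.of_apply]
      have heq : ∀ z : Fin V, (if z ∈ Ssets j then (1:ℝ) else 0) *
          (if z ∈ Ssets j' then (1:ℝ) else 0)
          = if z ∈ Ssets j ∩ Ssets j' then (1:ℝ) else 0 := by
        intro z
        by_cases h1 : z ∈ Ssets j <;> by_cases h2 : z ∈ Ssets j' <;>
          simp [h1, h2, Finset.mem_inter]
      rw [Finset.sum_congr rfl (fun z _ => heq z), Finset.sum_boole,
        Finset.filter_univ_mem]
    have hmid : ((Smat Ssets)ᵀ * (o * (oᵀ * Smat Ssets))) j j' = (k:ℝ) * (k:ℝ) := by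
      have : (Smat Ssets)ᵀ * (o * (oᵀ * Smat Ssets))
          = ((Smat Ssets)ᵀ * o) * (((Smat Ssets)ᵀ * o)ᵀ) := by
        rw [Matrix.transpose_mul, Matrix.transpose_transpose]
        simp only [Matrix.mul_assoc]
      rw [this, Matrix.mul_apply]
      rw [Fin.sum_univ_one]
      rw [Matrix.transpose_apply, hSo, hSo]
    simp only [Matrix.sub_apply, Matrix.smul_apply, hSS, hmid, smul_eq_mul]
    ring
  -- dot products and norms
  have hWdot : ∀ v v', dotp (W v) (W v') = s * (P v v') := by
    intro v v'
    have : (W * Wᵀ) v v' = dotp (W v) (W v') := by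
      rw [Matrix.mul_apply, dotp]
      simp [Matrix.transpose_apply]
    rw [← this, hWW, Matrix.smul_apply, smul_eq_mul]
  have hPdiag : ∀ v : Fin V, P v v = 1 - (V:ℝ)⁻¹ := by
    intro v
    simp [hPdef, hJdef, Matrix.sub_apply, Matrix.smul_apply, Matrix.one_apply_eq]
  have hPoff : ∀ v v' : Fin V, v ≠ v' → P v v' = -(V:ℝ)⁻¹ := by
    intro v v' h
    simp [hPdef, hJdef, Matrix.sub_apply, Matrix.smul_apply, Matrix.one_apply_ne h]
  have hHdot : ∀ j j', dotp (fun t => H t j) (fun t => H t j')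
      = (s * cc⁻¹) * (((Ssets j ∩ Ssets j').card : ℝ) - (k:ℝ)^2 / (V:ℝ)) := by
    intro j j'
    have : (Hᵀ * H) j j' = dotp (fun t => H t j) (fun t => H t j') := by
      rw [Matrix.mul_apply, dotp]
      simp [Matrix.transpose_apply]
    rw [← this, hHH, Matrix.smul_apply, hStS_ent, smul_eq_mul]
  -- part (a1)
  have ha1 : ∀ v : Fin V, vecNorm (W v) ^ 2 = (1 - 1/(V:ℝ)) * s := by
    intro v
    rw [vecNorm_sq, hWdot, hPdiag]
    rw [one_div]
    ring
  -- part (b1)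
  have hkV' : (k:ℝ) < (V:ℝ) := by exact_mod_cast hkV
  have hk0 : (0:ℝ) < (k:ℝ) := by exact_mod_cast hk1
  have hqpos : (0:ℝ) < (k:ℝ) - (k:ℝ)^2 / (V:ℝ) := by
    have : (k:ℝ)^2 / (V:ℝ) < (k:ℝ) := by
      rw [div_lt_iff₀ hV0, pow_two]
      exact mul_lt_mul_of_pos_left hkV' hk0
    linarith
  have hb1 : ∀ j : Fin m, vecNorm (fun t => H t j) ^ 2
      = ((k:ℝ) - (k:ℝ)^2/(V:ℝ)) / s := by
    intro j
    rw [vecNorm_sq, hHdot, Finset.inter_self, hcard, hscc, mul_comm]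
    exact (div_eq_mul_inv _ _).symm
  refine ⟨?_, ?_, ?_, ?_, ?_⟩
  · -- (a1)
    intro v
    rw [ha1 v]
  · -- (a2)
    intro v v' hvv
    have hnv : vecNorm (W v) = Real.sqrt ((1 - 1/(V:ℝ)) * s) := by
      rw [vecNorm_eq, ha1 v]
    have hnv' : vecNorm (W v') = Real.sqrt ((1 - 1/(V:ℝ)) * s) := by
      rw [vecNorm_eq, ha1 v']
    have hprod : vecNorm (W v) * vecNorm (W v') = (1 - 1/(V:ℝ)) * s := by
      rw [hnv, hnv']
      apply Real.mul_self_sqrt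
      have : (1:ℝ) ≤ (V:ℝ) := by exact_mod_cast (by omega : 1 ≤ V)
      have h3 : 1/(V:ℝ) ≤ 1 := by rw [div_le_one hV0]; exact this
      nlinarith
    rw [cosSim, hprod, hWdot, hPoff _ _ hvv]
    have hVm1 : (V:ℝ) - 1 ≠ 0 := by
      have : (2:ℝ) ≤ (V:ℝ) := by exact_mod_cast hV
      linarith
    field_simp
  · -- (b1)
    intro j
    rw [hb1 j]
  · -- (b2)
    intro j j' hjj
    have hnj : ∀ jj : Fin m, vecNorm (fun t => H t jj)
        = Real.sqrt (((k:ℝ) - (k:ℝ)^2/(V:ℝ)) / s) := by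
      intro jj
      rw [vecNorm_eq, hb1 jj]
    have hprod : vecNorm (fun t => H t j) * vecNorm (fun t => H t j')
        = ((k:ℝ) - (k:ℝ)^2/(V:ℝ)) / s := by
      rw [hnj j, hnj j']
      exact Real.mul_self_sqrt (le_of_lt (div_pos hqpos hspos))
    rw [cosSim, hprod, hHdot, hscc, div_div_eq_mul_div]
    congr 1
    rw [mul_comm (s⁻¹), mul_assoc, inv_mul_cancel₀ hspos.ne', mul_one]
  · -- (c)
    intro v j
    rw [ha1 v, hb1 j]
    rw [div_div_eq_mul_div]
    have h2 : (1 - 1/(V:ℝ)) * s * s = cc * (1 - 1/(V:ℝ)) := by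
      rw [mul_assoc, hss]; ring
    rw [h2]
    rw [hccdef]
    have hkne : (k:ℝ) ≠ 0 := hk0.ne'
    have hVkne : (V:ℝ) - (k:ℝ) ≠ 0 := by linarith
    rw [div_eq_div_iff hqpos.ne' (mul_pos hk0 (by linarith : (0:ℝ) < (V:ℝ) - (k:ℝ))).ne']
    field_simp
end
end

section
/- In the symmetric setting, assume d ≥ V−1, let S̃ = UΣVᵀ be a singular value decomposition of S̃ (U ∈ ℝ^{V×(V−1)}, V ∈ ℝ^{m×(V−1)} with orthonormal columns, Σ ∈ ℝ^{(V−1)×(V−1)} diagonal positive), and define W := UΣ^{1/2}R and H := RᵀΣ^{1/2}Vᵀ for any R ∈ ℝ^{(V−1)×d} with RRᵀ = I_{V−1}. Then for every context j ∈ {1,…,m}, the context embedding (the j-th column of H) satisfies h_j = C(V−2,k−1)^{−1/2} · ∑_{z∈S_j} w_z, where w_z denotes the z-th row of W; in particular, each context embedding is colinear with the sum of the word embeddings of its in-support tokens. -/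
open Filter Topology Matrix

noncomputable section

lemma card_supsets {n : ℕ} (a : Finset (Fin n)) (k' : ℕ) (hak : a.card ≤ k') :
    ((Finset.univ.powersetCard k').filter fun s => a ⊆ s).card
      = Nat.choose (n - a.card) (k' - a.card) := by
  have h : ((Finset.univ.powersetCard k').filter fun s => a ⊆ s).card
      = ((Finset.univ \ a).powersetCard (k' - a.card)).card := by
    apply Finset.card_bij' (fun s _ => s \ a) (fun t _ => t ∪ a)
    · intro s hs
      simp only [Finset.mem_filter, Finset.mem_powersetCard] at hs
      rw [Finset.mem_powersetCard]
      constructor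
      · intro x hx
        simp only [Finset.mem_sdiff] at hx ⊢
        exact ⟨Finset.mem_univ _, hx.2⟩
      · rw [Finset.card_sdiff_of_subset hs.2, hs.1.2]
    · intro t ht
      rw [Finset.mem_powersetCard] at ht
      have hdisj : Disjoint t a := by
        intro u hu1 hu2 x hx
        have := ht.1 (hu1 hx)
        simp only [Finset.mem_sdiff] at this
        exact absurd (hu2 hx) this.2
      simp only [Finset.mem_filter, Finset.mem_powersetCard]
      refine ⟨⟨Finset.subset_univ _, ?_⟩, Finset.subset_union_right⟩
      rw [Finset.card_union_of_disjoint hdisj, ht.2, Nat.sub_add_cancel hak]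
    · intro s hs
      simp only [Finset.mem_filter, Finset.mem_powersetCard] at hs
      exact Finset.sdiff_union_of_subset hs.2
    · intro t ht
      rw [Finset.mem_powersetCard] at ht
      have hdisj : Disjoint t a := by
        intro u hu1 hu2 x hx
        have := ht.1 (hu1 hx)
        simp only [Finset.mem_sdiff] at this
        exact absurd (hu2 hx) this.2
      exact Finset.union_sdiff_cancel_right hdisj
  rw [h, Finset.card_powersetCard, Finset.card_sdiff_of_subset (Finset.subset_univ _),
    Finset.card_univ, Fintype.card_fin]

lemma SS_entry {V k m : ℕ} (hV : 2 ≤ V) (hk1 : 1 ≤ k) (hkV : k < V)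
    (Ssets : Fin m → Finset (Fin V))
    (hcard : ∀ j, (Ssets j).card = k)
    (hinj : Function.Injective Ssets)
    (hsurj : ∀ s : Finset (Fin V), s.card = k → ∃ j, Ssets j = s)
    (z z' : Fin V) :
    (Smat Ssets * (Smat Ssets)ᵀ) z z'
      = if z = z' then ((V-1).choose (k-1) : ℝ)
        else (((V-1).choose (k-1) : ℝ) - ((V-2).choose (k-1) : ℝ)) := by
  have h1 : (Smat Ssets * (Smat Ssets)ᵀ) z z'
      = ((Finset.univ.filter fun j => z ∈ Ssets j ∧ z' ∈ Ssets j).card : ℝ) := by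
    rw [Matrix.mul_apply]
    rw [← Finset.sum_boole]
    apply Finset.sum_congr rfl
    intro j _
    simp only [Smat, Matrix.transpose_apply, Matrix.of_apply]
    split_ifs with h ha hb <;> simp_all
  have h2 : (Finset.univ.filter fun j => z ∈ Ssets j ∧ z' ∈ Ssets j).card
      = ((Finset.univ.powersetCard k).filter fun s => z ∈ s ∧ z' ∈ s).card := by
    apply Finset.card_bij (fun j _ => Ssets j)
    · intro j hj
      simp only [Finset.mem_filter, Finset.mem_powersetCard] at hj ⊢
      exact ⟨⟨Finset.subset_univ _, hcard j⟩, hj.2⟩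
    · intro j1 _ j2 _ h
      exact hinj h
    · intro s hs
      simp only [Finset.mem_filter, Finset.mem_powersetCard] at hs
      obtain ⟨j, hj⟩ := hsurj s hs.1.2
      exact ⟨j, by simp [hj, hs.2], hj⟩
  rw [h1, h2]
  by_cases hzz : z = z'
  · subst hzz
    simp only [if_pos rfl, and_self]
    have h3 : ((Finset.univ.powersetCard k).filter fun s => z ∈ s)
        = (Finset.univ.powersetCard k).filter fun s => ({z} : Finset (Fin V)) ⊆ s := by
      apply Finset.filter_congr; intro s _; simp
    rw [h3, card_supsets _ _ (by simpa using hk1)]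
    simp
  · rw [if_neg hzz]
    have h3 : ((Finset.univ.powersetCard k).filter fun s => z ∈ s ∧ z' ∈ s)
        = (Finset.univ.powersetCard k).filter fun s => ({z, z'} : Finset (Fin V)) ⊆ s := by
      apply Finset.filter_congr; intro s _
      simp [Finset.insert_subset_iff]
    rw [h3]
    have hcard2 : ({z, z'} : Finset (Fin V)).card = 2 := by
      rw [Finset.card_insert_of_notMem (by simpa using hzz), Finset.card_singleton]
    by_cases hk2 : 2 ≤ k
    · rw [card_supsets _ _ (by rw [hcard2]; exact hk2), hcard2]
      have e1 : V - 1 = (V - 2) + 1 := by omega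
      have e2 : k - 1 = (k - 2) + 1 := by omega
      rw [e1, e2, Nat.choose_succ_succ]
      push_cast
      ring
    · have hk : k = 1 := by omega
      subst hk
      have : ((Finset.univ.powersetCard 1).filter
          fun s => ({z, z'} : Finset (Fin V)) ⊆ s) = ∅ := by
        rw [Finset.filter_eq_empty_iff]
        intro s hs hsub
        rw [Finset.mem_powersetCard] at hs
        have := Finset.card_le_card hsub
        omega
      rw [this]
      simp

/-- in the symmetric setting with `d ≥ V − 1`, each context embedding (column of
`H = RᵀΣ^{1/2}Vᵀ`) equals `C(V−2,k−1)^{−1/2}` times the sum of the word embeddings (rows of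
`W = UΣ^{1/2}R`) of its in-support tokens. -/
theorem stmt_9 (V k d : ℕ) (hV : 2 ≤ V) (hk1 : 1 ≤ k) (hkV : k < V)
    (m : ℕ) (hm : m = Nat.choose V k)
    (Ssets : Fin m → Finset (Fin V))
    (hcard : ∀ j, (Ssets j).card = k)
    (hinj : Function.Injective Ssets)
    (hsurj : ∀ s : Finset (Fin V), s.card = k → ∃ j, Ssets j = s)
    (hd : V - 1 ≤ d)
    (U : Matrix (Fin V) (Fin (V - 1)) ℝ) (Vm : Matrix (Fin m) (Fin (V - 1)) ℝ)
    (σ : Fin (V - 1) → ℝ)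
    (hU : Uᵀ * U = 1) (hVm : Vmᵀ * Vm = 1) (hσ : ∀ i, 0 < σ i)
    (hSVD : Stil Ssets = U * Matrix.diagonal σ * Vmᵀ)
    (R : Matrix (Fin (V - 1)) (Fin d) ℝ) (hR : R * Rᵀ = 1)
    (W : Matrix (Fin V) (Fin d) ℝ)
    (hW : W = U * Matrix.diagonal (fun i => Real.sqrt (σ i)) * R)
    (H : Matrix (Fin d) (Fin m) ℝ)
    (hH : H = Rᵀ * Matrix.diagonal (fun i => Real.sqrt (σ i)) * Vmᵀ) :
    ∀ (j : Fin m) (t : Fin d),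
      H t j = (Real.sqrt (Nat.choose (V - 2) (k - 1)))⁻¹ * ∑ z ∈ Ssets j, W z t := by
  have hV0 : (V : ℝ) ≠ 0 := by
    simp only [ne_eq, Nat.cast_eq_zero]; omega
  set lc : ℝ := ((V-2).choose (k-1) : ℝ) with hlc
  have hlcpos : 0 < lc := by
    rw [hlc]
    exact_mod_cast Nat.choose_pos (by omega)
  set c2 : ℝ := ((V-1).choose (k-1) : ℝ) - lc with hc2
  set J : Matrix (Fin V) (Fin V) ℝ := Matrix.of fun _ _ => (1 : ℝ) with hJ
  set P : Matrix (Fin V) (Fin V) ℝ := 1 - (V : ℝ)⁻¹ • J with hPdef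
  have hJJ : J * J = (V : ℝ) • J := by
    ext i j
    simp [hJ, Matrix.mul_apply, Finset.sum_const]
  have hPJ : P * J = 0 := by
    rw [hPdef, sub_mul, one_mul, Matrix.smul_mul, hJJ, smul_smul,
      inv_mul_cancel₀ hV0, one_smul, sub_self]
  have hJP : J * P = 0 := by
    rw [hPdef, mul_sub, mul_one, Matrix.mul_smul, hJJ, smul_smul,
      inv_mul_cancel₀ hV0, one_smul, sub_self]
  have hJT : Jᵀ = J := by ext i j; simp [hJ]
  have hPT : Pᵀ = P := by
    rw [hPdef, Matrix.transpose_sub, Matrix.transpose_one, Matrix.transpose_smul, hJT]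
  have hPP : P * P = P := by
    nth_rewrite 2 [hPdef]
    rw [mul_sub, mul_one, Matrix.mul_smul, hPJ, smul_zero, sub_zero]
  have hStilP : Stil Ssets = P * Smat Ssets := by
    rw [hPdef, hJ]; rfl
  have hSS : Smat Ssets * (Smat Ssets)ᵀ
      = lc • (1 : Matrix (Fin V) (Fin V) ℝ) + c2 • J := by
    ext z z'
    rw [SS_entry hV hk1 hkV Ssets hcard hinj hsurj z z']
    by_cases h : z = z'
    · subst h
      simp [hc2, hJ]
    · simp [h, hJ, Matrix.one_apply_ne h, hc2, hlc]
  have hStilStil : Stil Ssets * (Stil Ssets)ᵀ = lc • P := by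
    rw [hStilP, Matrix.transpose_mul, hPT, Matrix.mul_assoc,
      ← Matrix.mul_assoc (Smat Ssets), hSS, add_mul, Matrix.smul_mul, one_mul,
      Matrix.smul_mul, hJP, smul_zero, add_zero, Matrix.mul_smul, hPP]
  -- J * U = 0
  have hJStil : J * Stil Ssets = 0 := by
    rw [hStilP, ← Matrix.mul_assoc, hJP, Matrix.zero_mul]
  have hJUD : J * U * Matrix.diagonal σ = 0 := by
    have h2 : J * (U * Matrix.diagonal σ * Vmᵀ) = 0 := by rw [← hSVD]; exact hJStil
    calc J * U * Matrix.diagonal σ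
        = J * U * Matrix.diagonal σ * (Vmᵀ * Vm) := by rw [hVm, Matrix.mul_one]
      _ = (J * (U * Matrix.diagonal σ * Vmᵀ)) * Vm := by
          simp only [Matrix.mul_assoc]
      _ = 0 := by rw [h2, Matrix.zero_mul]
  have hdiaginv : Matrix.diagonal σ * Matrix.diagonal (fun i => (σ i)⁻¹) = 1 := by
    rw [Matrix.diagonal_mul_diagonal]
    have : (fun i => σ i * (σ i)⁻¹) = fun _ => (1:ℝ) :=
      funext fun i => mul_inv_cancel₀ (hσ i).ne'
    rw [this, Matrix.diagonal_one]
  have hJU : J * U = 0 := by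
    calc J * U = J * U * (Matrix.diagonal σ * Matrix.diagonal (fun i => (σ i)⁻¹)) := by
          rw [hdiaginv, Matrix.mul_one]
      _ = (J * U * Matrix.diagonal σ) * Matrix.diagonal (fun i => (σ i)⁻¹) := by
          simp only [Matrix.mul_assoc]
      _ = 0 := by rw [hJUD, Matrix.zero_mul]
  have hUPU : Uᵀ * P * U = 1 := by
    rw [hPdef, Matrix.mul_sub, Matrix.mul_one, Matrix.mul_smul, Matrix.sub_mul,
      Matrix.smul_mul, Matrix.mul_assoc, hJU, Matrix.mul_zero, smul_zero, sub_zero, hU]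
  -- Σ² = lc • 1
  have hUS : U * (Matrix.diagonal (fun i => σ i * σ i) * Uᵀ) = lc • P := by
    rw [← hStilStil, hSVD]
    simp only [Matrix.transpose_mul, Matrix.transpose_transpose,
      Matrix.diagonal_transpose, Matrix.mul_assoc]
    rw [← Matrix.mul_assoc Vmᵀ Vm, hVm, Matrix.one_mul,
      ← Matrix.mul_assoc (Matrix.diagonal σ) (Matrix.diagonal σ),
      Matrix.diagonal_mul_diagonal]
  have hDD : Matrix.diagonal (fun i => σ i * σ i)
      = lc • (1 : Matrix (Fin (V-1)) (Fin (V-1)) ℝ) := by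
    have e1 : Uᵀ * (U * (Matrix.diagonal (fun i => σ i * σ i) * Uᵀ)) * U
        = lc • (Uᵀ * P * U) := by
      rw [hUS, Matrix.mul_smul, Matrix.smul_mul]
    rw [hUPU] at e1
    have e2 : Uᵀ * (U * (Matrix.diagonal (fun i => σ i * σ i) * Uᵀ)) * U
        = Matrix.diagonal (fun i => σ i * σ i) := by
      rw [← Matrix.mul_assoc Uᵀ U, hU, Matrix.one_mul, Matrix.mul_assoc,
        hU, Matrix.mul_one]
    rw [← e2, e1]
  have hσval : ∀ i, σ i = Real.sqrt lc := by
    intro i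
    have h := congrArg (fun M => M i i) hDD
    simp only [Matrix.diagonal_apply_eq, Matrix.smul_apply, Matrix.one_apply_eq,
      smul_eq_mul, mul_one] at h
    rw [← h, Real.sqrt_mul_self (hσ i).le]
  set sl : ℝ := Real.sqrt lc with hsl
  have hslpos : 0 < sl := Real.sqrt_pos.mpr hlcpos
  -- P * W = W
  have hJW : J * W = 0 := by
    rw [hW, ← Matrix.mul_assoc, ← Matrix.mul_assoc, hJU, Matrix.zero_mul, Matrix.zero_mul]
  have hPW : P * W = W := by
    rw [hPdef, Matrix.sub_mul, Matrix.one_mul, Matrix.smul_mul, hJW, smul_zero, sub_zero]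
  -- key identity
  have hdd2 : Matrix.diagonal σ * Matrix.diagonal (fun i => Real.sqrt (σ i))
      = sl • Matrix.diagonal (fun i => Real.sqrt (σ i)) := by
    rw [Matrix.diagonal_mul_diagonal]
    have e : (fun i => σ i * Real.sqrt (σ i)) = sl • (fun i => Real.sqrt (σ i)) :=
      funext fun i => by simp [hσval i]
    rw [e, Matrix.diagonal_smul]
  have key : (Smat Ssets)ᵀ * W = sl • Hᵀ := by
    have hStilT : (Stil Ssets)ᵀ = (Smat Ssets)ᵀ * P := by
      rw [hStilP, Matrix.transpose_mul, hPT]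
    have h1 : (Smat Ssets)ᵀ * W = (Stil Ssets)ᵀ * W := by
      rw [hStilT, Matrix.mul_assoc, hPW]
    rw [h1, hSVD, hW, hH]
    simp only [Matrix.transpose_mul, Matrix.transpose_transpose,
      Matrix.diagonal_transpose, Matrix.mul_assoc]
    rw [← Matrix.mul_assoc Uᵀ U, hU, Matrix.one_mul,
      ← Matrix.mul_assoc (Matrix.diagonal σ), hdd2, Matrix.smul_mul, Matrix.mul_smul]
  intro j t
  have h := congrArg (fun M => M j t) key
  simp only [Matrix.mul_apply, Matrix.transpose_apply, Matrix.smul_apply, smul_eq_mul,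
    Smat, Matrix.of_apply, ite_mul, one_mul, zero_mul] at h
  rw [Finset.sum_ite_mem, Finset.univ_inter] at h
  rw [h, ← mul_assoc, inv_mul_cancel₀ hslpos.ne', one_mul]
end
end

section
/- Let S̃ = UΣVᵀ be a singular value decomposition of S̃ := (I_V − (1/V)1_V 1_Vᵀ) S, where U and V have orthonormal columns and Σ is diagonal with positive entries, and set A := UVᵀ. If A[v,j] < 0 for every j ∈ {1,…,m} and every v ∉ S_j, then S̃ is a minimizer of the NTP-SVM program. -/
open Filter Topology Matrix

noncomputable section

namespace NTPaux

lemma dot_self_nonneg {n : ℕ} (x : Fin n → ℝ) : 0 ≤ x ⬝ᵥ x :=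
  Finset.sum_nonneg fun _ _ => mul_self_nonneg _

lemma dot_col {a b c : ℕ} (X : Matrix (Fin a) (Fin b) ℝ) (Y : Matrix (Fin a) (Fin c) ℝ)
    (i : Fin b) (j : Fin c) :
    (fun z => X z i) ⬝ᵥ (fun z => Y z j) = (Xᵀ * Y) i j := by
  simp [dotProduct, mul_apply]

lemma mulVec_col {a b c : ℕ} (G : Matrix (Fin a) (Fin b) ℝ) (Q : Matrix (Fin b) (Fin c) ℝ)
    (i : Fin c) : (G *ᵥ fun z => Q z i) = fun v => (G * Q) v i := by
  ext v; simp [mulVec, mul_apply, dotProduct]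

lemma dot_le_sqrt {n : ℕ} (x y : Fin n → ℝ) :
    x ⬝ᵥ y ≤ Real.sqrt (x ⬝ᵥ x) * Real.sqrt (y ⬝ᵥ y) := by
  have h := Real.sum_mul_le_sqrt_mul_sqrt Finset.univ x y
  simpa [dotProduct, pow_two] using h

lemma trace_transpose_mul {a b : ℕ} (X Y : Matrix (Fin a) (Fin b) ℝ) :
    trace (Xᵀ * Y) = ∑ i, (fun z => X z i) ⬝ᵥ (fun z => Y z i) := by
  simp [trace, mul_apply, dotProduct, diag]

lemma dotT {a b : ℕ} (B : Matrix (Fin a) (Fin b) ℝ) (x : Fin b → ℝ) (u : Fin a → ℝ) :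
    (B *ᵥ x) ⬝ᵥ u = x ⬝ᵥ (Bᵀ *ᵥ u) := by
  rw [dotProduct_comm, dotProduct_mulVec, mulVec_transpose, dotProduct_comm]

lemma mulVec_dot_mulVec {a b c : ℕ} (B : Matrix (Fin a) (Fin b) ℝ)
    (C : Matrix (Fin a) (Fin c) ℝ) (x : Fin b → ℝ) (y : Fin c → ℝ) :
    (B *ᵥ x) ⬝ᵥ (C *ᵥ y) = x ⬝ᵥ ((Bᵀ * C) *ᵥ y) := by
  rw [dotT, mulVec_mulVec]

/-- operator norm bound (≤ 1) in dot-product form -/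
def opb {a b : ℕ} (G : Matrix (Fin a) (Fin b) ℝ) : Prop :=
  ∀ x : Fin b → ℝ, (G *ᵥ x) ⬝ᵥ (G *ᵥ x) ≤ x ⬝ᵥ x

lemma opb_of_diag {a b : ℕ} (B : Matrix (Fin a) (Fin b) ℝ) (d : Fin b → ℝ)
    (hB : Bᵀ * B = diagonal d) (hd : ∀ i, d i ≤ 1) : opb B := by
  intro x
  rw [mulVec_dot_mulVec, hB]
  simp only [dotProduct, mulVec_diagonal]
  apply Finset.sum_le_sum
  intro i _
  have := mul_self_nonneg (x i)
  have := hd i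
  nlinarith

lemma opb_one {a b : ℕ} (B : Matrix (Fin a) (Fin b) ℝ) (hB : Bᵀ * B = 1) : opb B := by
  apply opb_of_diag B (fun _ => 1)
  · rw [hB, diagonal_one]
  · intro i; exact le_rfl

lemma opb_mul {a b c : ℕ} (B : Matrix (Fin a) (Fin b) ℝ) (C : Matrix (Fin b) (Fin c) ℝ)
    (hB : opb B) (hC : opb C) : opb (B * C) := by
  intro x
  rw [← mulVec_mulVec]
  exact le_trans (hB _) (hC _)

lemma opb_transpose_of_iso {a b : ℕ} (C : Matrix (Fin a) (Fin b) ℝ)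
    (hC : Cᵀ * C = 1) : opb Cᵀ := by
  intro x
  have hP : (C * Cᵀ)ᵀ = C * Cᵀ := by
    rw [transpose_mul, transpose_transpose]
  have hPP : (C * Cᵀ) * (C * Cᵀ) = C * Cᵀ := by
    rw [Matrix.mul_assoc C Cᵀ (C * Cᵀ), ← Matrix.mul_assoc Cᵀ C Cᵀ, hC, Matrix.one_mul]
  have key : ((1 - C * Cᵀ) *ᵥ x) ⬝ᵥ ((1 - C * Cᵀ) *ᵥ x) = x ⬝ᵥ x - x ⬝ᵥ ((C * Cᵀ) *ᵥ x) := by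
    rw [mulVec_dot_mulVec]
    have h2 : (1 - C * Cᵀ)ᵀ * (1 - C * Cᵀ) = 1 - C * Cᵀ := by
      rw [transpose_sub, transpose_one, hP, sub_mul, one_mul, mul_sub, mul_one, hPP]
      abel
    rw [h2, sub_mulVec, one_mulVec, dotProduct_sub]
  have h0 : 0 ≤ x ⬝ᵥ x - x ⬝ᵥ ((C * Cᵀ) *ᵥ x) := by
    rw [← key]; exact dot_self_nonneg _
  have h1 : (Cᵀ *ᵥ x) ⬝ᵥ (Cᵀ *ᵥ x) = x ⬝ᵥ ((C * Cᵀ) *ᵥ x) := by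
    rw [mulVec_dot_mulVec, transpose_transpose]
  linarith

lemma specQ {a b : ℕ} (M : Matrix (Fin a) (Fin b) ℝ) :
    ∃ Q : Matrix (Fin b) (Fin b) ℝ, Qᵀ * Q = 1 ∧ Q * Qᵀ = 1 ∧
      (M * Q)ᵀ * (M * Q) =
        diagonal ((Matrix.isHermitian_conjTranspose_mul_self M).eigenvalues) := by
  have h := Matrix.isHermitian_conjTranspose_mul_self M
  set Q : Matrix (Fin b) (Fin b) ℝ := (h.eigenvectorUnitary : Matrix (Fin b) (Fin b) ℝ) with hQdef
  have hstar : star (h.eigenvectorUnitary : Matrix (Fin b) (Fin b) ℝ) = Qᵀ := by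
    ext i j; simp [star_apply, hQdef]
  have hQ1 : Qᵀ * Q = 1 := by rw [← hstar]; exact Unitary.coe_star_mul_self _
  have hQ2 : Q * Qᵀ = 1 := by rw [← hstar]; exact Unitary.coe_mul_star_self _
  have hH : Mᴴ = Mᵀ := by ext i j; simp [conjTranspose_apply]
  have hsp : Mᴴ * M = Q * diagonal h.eigenvalues * Qᵀ := by
    have h1 : (RCLike.ofReal ∘ h.eigenvalues : Fin b → ℝ) = h.eigenvalues := by
      ext i; simp
    have := h.spectral_theorem
    rw [Unitary.conjStarAlgAut_apply, hstar] at this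
    exact this
  refine ⟨Q, hQ1, hQ2, ?_⟩
  have h3 : (M * Q)ᵀ * (M * Q) = Qᵀ * (Mᴴ * M) * Q := by
    rw [transpose_mul, hH]
    simp only [Matrix.mul_assoc]
  rw [h3]
  have h4 : Qᵀ * (Mᴴ * M) * Q = Qᵀ * (Q * diagonal h.eigenvalues * Qᵀ) * Q :=
    congrArg (fun X => Qᵀ * X * Q) hsp
  rw [h4]
  calc Qᵀ * (Q * diagonal h.eigenvalues * Qᵀ) * Q
      = (Qᵀ * Q) * (diagonal h.eigenvalues * (Qᵀ * Q)) := by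
        simp only [Matrix.mul_assoc]
    _ = diagonal h.eigenvalues := by rw [hQ1, Matrix.one_mul, Matrix.mul_one]

lemma eig_nonneg {a b : ℕ} (M : Matrix (Fin a) (Fin b) ℝ) (i : Fin b) :
    0 ≤ (Matrix.isHermitian_conjTranspose_mul_self M).eigenvalues i :=
  (Matrix.posSemidef_conjTranspose_mul_self M).eigenvalues_nonneg i

/-- Lemma A: duality lower bound for the nuclear norm. -/
lemma trace_le_nuclear {a b : ℕ} (M G : Matrix (Fin a) (Fin b) ℝ) (hG : opb G) :
    trace (Gᵀ * M) ≤ nuclearNorm M := by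
  obtain ⟨Q, hQ1, hQ2, hdiag⟩ := specQ M
  set μ := (Matrix.isHermitian_conjTranspose_mul_self M).eigenvalues with hμ
  have htr : trace (Gᵀ * M) = trace ((G * Q)ᵀ * (M * Q)) := by
    rw [transpose_mul]
    calc trace (Gᵀ * M) = trace (Gᵀ * M * (Q * Qᵀ)) := by rw [hQ2, Matrix.mul_one]
      _ = trace ((Gᵀ * M * Q) * Qᵀ) := by simp only [Matrix.mul_assoc]
      _ = trace (Qᵀ * (Gᵀ * M * Q)) := (trace_mul_comm _ _)
      _ = trace (Qᵀ * Gᵀ * (M * Q)) := by simp only [Matrix.mul_assoc]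
  have hnn : nuclearNorm M = ∑ i, Real.sqrt (μ i) := rfl
  rw [htr, trace_transpose_mul, hnn]
  apply Finset.sum_le_sum
  intro i _
  rw [← mulVec_col G Q i, ← mulVec_col M Q i]
  have h1 : (M *ᵥ fun z => Q z i) ⬝ᵥ (M *ᵥ fun z => Q z i) = μ i := by
    rw [mulVec_col, dot_col, hdiag, diagonal_apply_eq]
  have h2 : (G *ᵥ fun z => Q z i) ⬝ᵥ (G *ᵥ fun z => Q z i) ≤ 1 := by
    refine le_trans (hG _) ?_
    rw [dot_col, hQ1]
    simp
  calc (G *ᵥ fun z => Q z i) ⬝ᵥ (M *ᵥ fun z => Q z i)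
      ≤ Real.sqrt ((G *ᵥ fun z => Q z i) ⬝ᵥ (G *ᵥ fun z => Q z i)) *
        Real.sqrt ((M *ᵥ fun z => Q z i) ⬝ᵥ (M *ᵥ fun z => Q z i)) := dot_le_sqrt _ _
    _ ≤ 1 * Real.sqrt (μ i) := by
        rw [h1]
        apply mul_le_mul_of_nonneg_right _ (Real.sqrt_nonneg _)
        exact Real.sqrt_le_one.2 h2
    _ = Real.sqrt (μ i) := one_mul _

lemma trace_mul_diagonal' {r : ℕ} (N : Matrix (Fin r) (Fin r) ℝ) (σ : Fin r → ℝ) :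
    trace (N * diagonal σ) = ∑ i, N i i * σ i := by
  simp [trace, diag, mul_apply, diagonal, Finset.sum_ite_eq]

/-- Lemma C: trace against an SVD-form matrix is at most the sum of singular values. -/
lemma trace_svd_le {a b r : ℕ} (Um : Matrix (Fin a) (Fin r) ℝ) (Vm : Matrix (Fin b) (Fin r) ℝ)
    (σ : Fin r → ℝ) (hU : Umᵀ * Um = 1) (hVm : Vmᵀ * Vm = 1) (hσ : ∀ i, 0 ≤ σ i)
    (G : Matrix (Fin a) (Fin b) ℝ) (hG : opb G) :
    trace (Gᵀ * (Um * diagonal σ * Vmᵀ)) ≤ ∑ i, σ i := by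
  have htr : trace (Gᵀ * (Um * diagonal σ * Vmᵀ)) = trace (((G * Vm)ᵀ * Um) * diagonal σ) := by
    calc trace (Gᵀ * (Um * diagonal σ * Vmᵀ))
        = trace ((Gᵀ * Um * diagonal σ) * Vmᵀ) := by simp only [Matrix.mul_assoc]
      _ = trace (Vmᵀ * (Gᵀ * Um * diagonal σ)) := (trace_mul_comm _ _)
      _ = trace (((G * Vm)ᵀ * Um) * diagonal σ) := by
          rw [transpose_mul]; simp only [Matrix.mul_assoc]
  rw [htr, trace_mul_diagonal']
  have hbd : ∀ i, ((G * Vm)ᵀ * Um) i i ≤ 1 := by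
    intro i
    rw [← dot_col (G * Vm) Um i i, ← mulVec_col G Vm i]
    have h1 : (G *ᵥ fun z => Vm z i) ⬝ᵥ (G *ᵥ fun z => Vm z i) ≤ 1 := by
      refine le_trans (hG _) ?_
      rw [dot_col, hVm]; simp
    have h2 : (fun z => Um z i) ⬝ᵥ (fun z => Um z i) = 1 := by
      rw [dot_col, hU]; simp
    calc (G *ᵥ fun z => Vm z i) ⬝ᵥ (fun z => Um z i)
        ≤ Real.sqrt ((G *ᵥ fun z => Vm z i) ⬝ᵥ (G *ᵥ fun z => Vm z i)) *
          Real.sqrt ((fun z => Um z i) ⬝ᵥ (fun z => Um z i)) := dot_le_sqrt _ _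
      _ ≤ 1 * 1 := by
          apply mul_le_mul (Real.sqrt_le_one.2 h1) _ (Real.sqrt_nonneg _) zero_le_one
          rw [h2, Real.sqrt_one]
      _ = 1 := one_mul 1
  apply Finset.sum_le_sum
  intro i _
  calc ((G * Vm)ᵀ * Um) i i * σ i ≤ 1 * σ i :=
        mul_le_mul_of_nonneg_right (hbd i) (hσ i)
    _ = σ i := one_mul _

/-- Lemma B: the nuclear norm of an SVD-form matrix is at most the sum of singular values. -/
lemma nuclear_le_sum {a b r : ℕ} (M : Matrix (Fin a) (Fin b) ℝ)
    (Um : Matrix (Fin a) (Fin r) ℝ) (Vm : Matrix (Fin b) (Fin r) ℝ) (σ : Fin r → ℝ)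
    (hU : Umᵀ * Um = 1) (hVm : Vmᵀ * Vm = 1) (hσ : ∀ i, 0 ≤ σ i)
    (hM : M = Um * diagonal σ * Vmᵀ) : nuclearNorm M ≤ ∑ i, σ i := by
  obtain ⟨Q, hQ1, hQ2, hdiag⟩ := specQ M
  set μ := (Matrix.isHermitian_conjTranspose_mul_self M).eigenvalues with hμ
  set c : Fin b → ℝ := fun i => if μ i = 0 then 0 else (Real.sqrt (μ i))⁻¹ with hc
  set Yh : Matrix (Fin a) (Fin b) ℝ := Matrix.of (fun z i => c i * (M * Q) z i) with hYh
  have hYY : ∀ i j : Fin b, (Yhᵀ * (M * Q)) i j = c i * (((M * Q)ᵀ * (M * Q)) i j) := by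
    intro i j
    simp only [mul_apply, transpose_apply, hYh, Matrix.of_apply]
    rw [Finset.mul_sum]
    apply Finset.sum_congr rfl
    intro z _
    ring
  have hYhY : ∀ i j : Fin b, (Yhᵀ * Yh) i j = c i * c j * (((M * Q)ᵀ * (M * Q)) i j) := by
    intro i j
    simp only [mul_apply, transpose_apply, hYh, Matrix.of_apply]
    rw [Finset.mul_sum]
    apply Finset.sum_congr rfl
    intro z _
    ring
  have hsqrt : ∀ i : Fin b, μ i ≠ 0 → Real.sqrt (μ i) ≠ 0 := by
    intro i h0
    have := eig_nonneg M i
    positivity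
  have hYhtYh : Yhᵀ * Yh = diagonal (fun i => if μ i = 0 then (0:ℝ) else 1) := by
    ext i j
    rw [hYhY i j, hdiag]
    by_cases hij : i = j
    · subst hij
      rw [diagonal_apply_eq, diagonal_apply_eq]
      by_cases h0 : μ i = 0
      · simp [hc, h0]
      · simp only [hc, h0, if_false]
        have hs : Real.sqrt (μ i) * Real.sqrt (μ i) = μ i := Real.mul_self_sqrt (eig_nonneg M i)
        have hne := hsqrt i h0
        field_simp
        linarith [hs]
    · rw [diagonal_apply_ne _ hij, diagonal_apply_ne _ hij, mul_zero]
  have hGop : opb (Yh * Qᵀ) := by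
    apply opb_mul
    · apply opb_of_diag _ _ hYhtYh
      intro i; by_cases h0 : μ i = 0 <;> simp [h0]
    · exact opb_transpose_of_iso Q hQ1
  have htr : trace ((Yh * Qᵀ)ᵀ * M) = ∑ i, Real.sqrt (μ i) := by
    have h5 : (Yh * Qᵀ)ᵀ * M = Q * (Yhᵀ * M) := by
      rw [transpose_mul, transpose_transpose, Matrix.mul_assoc]
    rw [h5, trace_mul_comm, Matrix.mul_assoc]
    have h6 : trace (Yhᵀ * (M * Q)) = ∑ i, (Yhᵀ * (M * Q)) i i := by
      simp [trace, diag]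
    rw [h6]
    apply Finset.sum_congr rfl
    intro i _
    rw [hYY i i, hdiag, diagonal_apply_eq]
    by_cases h0 : μ i = 0
    · simp [hc, h0]
    · simp only [hc, h0, if_false]
      have hs : Real.sqrt (μ i) * Real.sqrt (μ i) = μ i := Real.mul_self_sqrt (eig_nonneg M i)
      have hne := hsqrt i h0
      field_simp
      linarith [hs]
  have hnn : nuclearNorm M = ∑ i, Real.sqrt (μ i) := rfl
  rw [hnn, ← htr, hM]
  exact trace_svd_le Um Vm σ hU hVm hσ _ hGop

lemma Stil_apply {V m : ℕ} (Ssets : Fin m → Finset (Fin V)) (z : Fin V) (j : Fin m) :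
    Stil Ssets z j = (if z ∈ Ssets j then (1:ℝ) else 0) - (V:ℝ)⁻¹ * (Ssets j).card := by
  simp only [Stil, Smat, mul_apply, Matrix.sub_apply, Matrix.smul_apply, Matrix.of_apply, one_apply,
    smul_eq_mul, mul_one, sub_mul]
  rw [Finset.sum_sub_distrib]
  congr 1
  · simp [ite_mul]
  · rw [← Finset.mul_sum]
    congr 1
    simp [Finset.sum_ite_mem]

lemma Stil_colsum {V m : ℕ} (hV : 2 ≤ V) (Ssets : Fin m → Finset (Fin V)) (j : Fin m) :
    ∑ v, Stil Ssets v j = 0 := by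
  have hV0 : (V:ℝ) ≠ 0 := Nat.cast_ne_zero.2 (by omega)
  simp only [Stil_apply]
  rw [Finset.sum_sub_distrib]
  have h1 : ∑ v, (if v ∈ Ssets j then (1:ℝ) else 0) = (Ssets j).card := by
    simp [Finset.sum_ite_mem]
  have h2 : ∑ _v : Fin V, (V:ℝ)⁻¹ * (Ssets j).card = (Ssets j).card := by
    rw [Finset.sum_const, Finset.card_univ, Fintype.card_fin, nsmul_eq_mul]
    field_simp
  rw [h1, h2, sub_self]

end NTPaux

open NTPaux

/-- dual certificate: if `S̃ = UΣVᵀ` is an SVD and `A = UVᵀ` has strictly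
negative entries at all off-support positions, then `S̃` minimizes the NTP-SVM program. -/
theorem stmt_10 (V m : ℕ) (hV : 2 ≤ V) (hm : 0 < m)
    (Ssets : Fin m → Finset (Fin V)) (hne : ∀ j, (Ssets j).Nonempty)
    (r : ℕ)
    (U : Matrix (Fin V) (Fin r) ℝ) (Vm : Matrix (Fin m) (Fin r) ℝ) (σ : Fin r → ℝ)
    (hU : Uᵀ * U = 1) (hVm : Vmᵀ * Vm = 1) (hσ : ∀ i, 0 < σ i)
    (hSVD : Stil Ssets = U * Matrix.diagonal σ * Vmᵀ)
    (hcert : ∀ (j : Fin m) (v : Fin V), v ∉ Ssets j → (U * Vmᵀ) v j < 0) :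
    svmFeasibleS Ssets (Stil Ssets) ∧
    ∀ L : Matrix (Fin V) (Fin m) ℝ, svmFeasibleS Ssets L →
      nuclearNorm (Stil Ssets) ≤ nuclearNorm L := by
  classical
  set A := U * Vmᵀ with hA
  have hfeas : svmFeasibleS Ssets (Stil Ssets) := by
    constructor
    · intro j z hz z' hz'
      rw [Stil_apply, Stil_apply]
      simp [hz, hz']
    · intro j z hz v hv
      rw [Stil_apply, Stil_apply]
      simp [hz, hv]
  refine ⟨hfeas, ?_⟩
  intro L hL
  -- column sums of A vanish
  set u : Fin r → ℝ := fun k => ∑ v, U v k with hu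
  have hVw : Vm *ᵥ (fun k => σ k * u k) = 0 := by
    funext j
    have h0 := Stil_colsum hV Ssets j
    rw [hSVD] at h0
    have hexp : ∑ v, (U * diagonal σ * Vmᵀ) v j = ∑ k, Vm j k * (σ k * u k) := by
      calc ∑ v, (U * diagonal σ * Vmᵀ) v j
          = ∑ v, ∑ k, (U * diagonal σ) v k * Vm j k := by
            simp [mul_apply, transpose_apply]
        _ = ∑ v, ∑ k, (U v k * σ k) * Vm j k := by
            simp [mul_diagonal]
        _ = ∑ k, Vm j k * (σ k * u k) := by
            rw [Finset.sum_comm]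
            apply Finset.sum_congr rfl
            intro k _
            rw [hu]
            simp only [Finset.sum_mul, Finset.mul_sum]
            apply Finset.sum_congr rfl
            intro v _
            ring
    simp only [mulVec, dotProduct, Pi.zero_apply]
    rw [← hexp, h0]
  have hw0 : (fun k => σ k * u k) = (0 : Fin r → ℝ) := by
    have h1 : Vmᵀ *ᵥ (Vm *ᵥ (fun k => σ k * u k)) = 0 := by rw [hVw, mulVec_zero]
    rwa [mulVec_mulVec, hVm, one_mulVec] at h1
  have hu0 : ∀ k, u k = 0 := by
    intro k
    have h2 : σ k * u k = 0 := congrFun hw0 k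
    exact (mul_eq_zero.mp h2).resolve_left (ne_of_gt (hσ k))
  have hAcol : ∀ j, ∑ v, A v j = 0 := by
    intro j
    calc ∑ v, A v j = ∑ v, ∑ k, U v k * Vm j k := by
          rw [hA]; simp [mul_apply, transpose_apply]
      _ = ∑ k, u k * Vm j k := by
          rw [Finset.sum_comm]
          apply Finset.sum_congr rfl
          intro k _
          rw [hu, Finset.sum_mul]
      _ = 0 := by simp [hu0]
  -- trace identity
  have htrM : trace (Aᵀ * Stil Ssets) = ∑ i, σ i := by
    rw [hSVD, hA]
    have h3 : (U * Vmᵀ)ᵀ * (U * diagonal σ * Vmᵀ) = Vm * (diagonal σ * Vmᵀ) := by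
      rw [transpose_mul, transpose_transpose]
      calc Vm * Uᵀ * (U * diagonal σ * Vmᵀ)
          = Vm * ((Uᵀ * U) * (diagonal σ * Vmᵀ)) := by simp only [Matrix.mul_assoc]
        _ = Vm * (diagonal σ * Vmᵀ) := by rw [hU, Matrix.one_mul]
    rw [h3, trace_mul_comm, Matrix.mul_assoc, hVm, Matrix.mul_one, trace_diagonal]
  -- certificate inequality
  have hcertineq : trace (Aᵀ * Stil Ssets) ≤ trace (Aᵀ * L) := by
    rw [trace_transpose_mul, trace_transpose_mul]
    apply Finset.sum_le_sum
    intro j _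
    simp only [dotProduct]
    obtain ⟨z₀, hz₀⟩ := hne j
    set Δ : Fin V → ℝ := fun v => L v j - Stil Ssets v j with hΔ
    have hterm : ∀ v, 0 ≤ A v j * (Δ v - Δ z₀) := by
      intro v
      by_cases hv : v ∈ Ssets j
      · have hLL : L v j = L z₀ j := hL.1 j v hv z₀ hz₀
        have hMM : Stil Ssets v j = Stil Ssets z₀ j := by
          rw [Stil_apply, Stil_apply]; simp [hv, hz₀]
        have h4 : Δ v - Δ z₀ = 0 := by simp [hΔ, hLL, hMM]
        rw [h4, mul_zero]
      · have h1 : A v j < 0 := hcert j v hv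
        have h2 : Δ v - Δ z₀ ≤ 0 := by
          have hL1 : 1 ≤ L z₀ j - L v j := hL.2 j z₀ hz₀ v hv
          have hM1 : Stil Ssets z₀ j - Stil Ssets v j = 1 := by
            rw [Stil_apply, Stil_apply]; simp [hv, hz₀]
          simp only [hΔ]
          linarith
        nlinarith
    have h3 : 0 ≤ ∑ v, A v j * (Δ v - Δ z₀) := Finset.sum_nonneg fun v _ => hterm v
    have h5 : ∑ v, A v j * (Δ v - Δ z₀)
        = ∑ v, A v j * L v j - ∑ v, A v j * Stil Ssets v j - (∑ v, A v j) * Δ z₀ := by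
      rw [Finset.sum_mul, ← Finset.sum_sub_distrib, ← Finset.sum_sub_distrib]
      apply Finset.sum_congr rfl
      intro v _
      simp only [hΔ]
      ring
    rw [h5, hAcol j] at h3
    linarith
  -- operator bound for A
  have hopA : opb A := by
    rw [hA]
    exact opb_mul U Vmᵀ (opb_one U hU) (opb_transpose_of_iso Vm hVm)
  calc nuclearNorm (Stil Ssets)
      ≤ ∑ i, σ i := nuclear_le_sum _ U Vm σ hU hVm (fun i => (hσ i).le) hSVD
    _ = trace (Aᵀ * Stil Ssets) := htrM.symm
    _ ≤ trace (Aᵀ * L) := hcertineq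
    _ ≤ nuclearNorm L := trace_le_nuclear L A hopA
end
end

section
/- Suppose L₁ ∈ ℝ^{V×m} satisfies the NTP-compatibility condition L₁[z,j] − L₁[z′,j] = log(p̂_{j,z}/p̂_{j,z′}) for all j ∈ {1,…,m} and all z, z′ ∈ S_j, and L₂ ∈ ℝ^{V×m} is feasible for the NTP-SVM program. Then for every ρ > 0 the matrix L_ρ := L₁ + ρ·L₂ satisfies H ≤ CE(L_ρ) ≤ H + V·e^{2‖L₁‖₂}·e^{−ρ}, where ‖·‖₂ is the spectral norm; in particular lim_{ρ→∞} CE(L_ρ) = H. Consequently, if in addition rank(L₁ + ρ·L₂) ≤ d for all ρ > 0, then for each ρ there exist W_ρ ∈ ℝ^{V×d} and H_ρ ∈ ℝ^{d×m} with W_ρ H_ρ = L_ρ and lim_{ρ→∞} CE(W_ρ H_ρ) = H. -/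
open Filter Topology Matrix

noncomputable section

/-- The empirical entropy. -/
def entropyH {V m : ℕ} (piv : Fin m → ℝ) (p : Fin m → Fin V → ℝ) : ℝ :=
  - ∑ j, piv j * ∑ z ∈ Finset.univ.filter (fun z => 0 < p j z),
      p j z * Real.log (p j z)

/-- Feasibility for the NTP-SVM program (support sets `S_j = {z | 0 < p j z}`). -/
def svmFeasibleP {V m : ℕ} (p : Fin m → Fin V → ℝ) (L : Matrix (Fin V) (Fin m) ℝ) : Prop :=
  (∀ j z z', 0 < p j z → 0 < p j z' → L z j = L z' j) ∧
  (∀ j z v, 0 < p j z → ¬ 0 < p j v → 1 ≤ L z j - L v j)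

/-- Spectral norm: largest singular value of `A`. -/
def specNorm {a b : ℕ} (A : Matrix (Fin a) (Fin b) ℝ) : ℝ :=
  ⨆ i, Real.sqrt ((show (Aᵀ * A).IsHermitian by simpa using Matrix.isHermitian_conjTranspose_mul_self A).eigenvalues i)

lemma abs_entry_le_specNorm {a b : ℕ} (hb : 0 < b) (A : Matrix (Fin a) (Fin b) ℝ)
    (z : Fin a) (j : Fin b) : |A z j| ≤ specNorm A := by
  haveI : Nonempty (Fin b) := ⟨⟨0, hb⟩⟩
  set hB := (show (Aᵀ * A).IsHermitian by simpa using Matrix.isHermitian_conjTranspose_mul_self A) with hBdef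
  set U : Matrix (Fin b) (Fin b) ℝ := (hB.eigenvectorUnitary : Matrix (Fin b) (Fin b) ℝ) with hUdef
  have hUmem : U * star U = 1 := (Matrix.mem_unitaryGroup_iff).mp hB.eigenvectorUnitary.2
  have hrow : ∑ k, (U j k)^2 = 1 := by
    have h1 : (U * star U) j j = 1 := by rw [hUmem]; simp
    rw [Matrix.mul_apply] at h1
    simpa [Matrix.star_apply, sq] using h1
  have hspec : Aᴴ * A = U * diagonal (RCLike.ofReal ∘ hB.eigenvalues) * star U := by
    rw [conjTranspose_eq_transpose_of_trivial]; simpa only [Unitary.conjStarAlgAut_apply] using hB.spectral_theorem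
  have hBjj : (Aᴴ * A) j j = ∑ k, hB.eigenvalues k * (U j k)^2 := by
    conv_lhs => rw [hspec]
    rw [Matrix.mul_apply]
    congr 1; funext k
    rw [Matrix.mul_diagonal]
    simp [Matrix.star_apply, sq]
    show hB.eigenvectorBasis k j * hB.eigenvalues k * hB.eigenvectorBasis k j =
      hB.eigenvalues k * (hB.eigenvectorBasis k j * hB.eigenvectorBasis k j)
    ring
  have hsq : (A z j)^2 ≤ (Aᴴ * A) j j := by
    rw [Matrix.mul_apply]
    have : ∀ v : Fin a, (0:ℝ) ≤ Aᴴ j v * A v j := by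
      intro v; simp [Matrix.conjTranspose_apply, mul_self_nonneg]
    calc (A z j)^2 = Aᴴ j z * A z j := by simp [Matrix.conjTranspose_apply, sq]
    _ ≤ ∑ v, Aᴴ j v * A v j := Finset.single_le_sum (fun v _ => this v) (Finset.mem_univ z)
  obtain ⟨k₀, hk₀⟩ := Finite.exists_max hB.eigenvalues
  have hmax : (Aᴴ * A) j j ≤ hB.eigenvalues k₀ := by
    rw [hBjj]
    calc ∑ k, hB.eigenvalues k * (U j k)^2
        ≤ ∑ k, hB.eigenvalues k₀ * (U j k)^2 := by
          apply Finset.sum_le_sum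
          intro k _
          exact mul_le_mul_of_nonneg_right (hk₀ k) (sq_nonneg _)
    _ = hB.eigenvalues k₀ := by rw [← Finset.mul_sum, hrow, mul_one]
  have h2 : |A z j| ≤ Real.sqrt (hB.eigenvalues k₀) := by
    rw [← Real.sqrt_sq_eq_abs]
    exact Real.sqrt_le_sqrt (le_trans hsq hmax)
  rw [specNorm]
  exact h2.trans (le_ciSup (f := fun i => Real.sqrt (hB.eigenvalues i))
    (Set.Finite.bddAbove (Set.finite_range _)) k₀)

lemma exists_factorization {V m d : ℕ} (A : Matrix (Fin V) (Fin m) ℝ) (h : A.rank ≤ d) :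
    ∃ (W : Matrix (Fin V) (Fin d) ℝ) (H : Matrix (Fin d) (Fin m) ℝ), W * H = A := by
  classical
  set f := A.mulVecLin with hf
  set E := LinearMap.range f with hE
  set r := Module.finrank ℝ E with hrdef
  have hr : r ≤ d := h
  let b : Module.Basis (Fin r) ℝ E := Module.finBasis ℝ E
  let ext : (Fin r → ℝ) →ₗ[ℝ] (Fin d → ℝ) :=
    { toFun := fun x i => if hi : (i : ℕ) < r then x ⟨i, hi⟩ else 0
      map_add' := by
        intro x y; funext i; by_cases hi : (i : ℕ) < r <;> simp [hi]
      map_smul' := by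
        intro c x; funext i; by_cases hi : (i : ℕ) < r <;> simp [hi] }
  let res : (Fin d → ℝ) →ₗ[ℝ] (Fin r → ℝ) := LinearMap.funLeft ℝ ℝ (Fin.castLE hr)
  have hre : ∀ x : Fin r → ℝ, res (ext x) = x := by
    intro x; funext i
    simp only [res, ext, LinearMap.funLeft_apply, LinearMap.coe_mk, AddHom.coe_mk]
    rw [dif_pos (by simp [Fin.castLE])]
    exact congrArg x (Fin.ext rfl)
  let g : (Fin m → ℝ) →ₗ[ℝ] (Fin d → ℝ) := ext ∘ₗ (b.equivFun : E →ₗ[ℝ] (Fin r → ℝ)) ∘ₗ f.rangeRestrict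
  let h' : (Fin d → ℝ) →ₗ[ℝ] (Fin V → ℝ) := E.subtype ∘ₗ (b.equivFun.symm : (Fin r → ℝ) →ₗ[ℝ] E) ∘ₗ res
  have hfact : h' ∘ₗ g = f := by
    apply LinearMap.ext
    intro x
    show E.subtype (b.equivFun.symm (res (ext (b.equivFun (f.rangeRestrict x))))) = f x
    rw [hre, LinearEquiv.symm_apply_apply]
    rfl
  refine ⟨LinearMap.toMatrix' h', LinearMap.toMatrix' g, ?_⟩
  rw [← LinearMap.toMatrix'_comp, hfact, hf]
  have : A.mulVecLin = Matrix.toLin' A := rfl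
  rw [this, LinearMap.toMatrix'_toLin']

lemma ce_bounds {V m : ℕ} (hV : 0 < V) (hm : 0 < m)
    (piv : Fin m → ℝ) (hpiv : ∀ j, 0 < piv j) (hpisum : ∑ j, piv j = 1)
    (p : Fin m → Fin V → ℝ) (hp : ∀ j z, 0 ≤ p j z) (hpsum : ∀ j, ∑ z, p j z = 1)
    (L₁ L₂ : Matrix (Fin V) (Fin m) ℝ)
    (hL₁ : ∀ j z z', 0 < p j z → 0 < p j z' →
        L₁ z j - L₁ z' j = Real.log (p j z / p j z'))
    (hL₂ : svmFeasibleP p L₂) (ρ : ℝ) (hρ : 0 < ρ) :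
    entropyH piv p ≤ CEloss piv p (L₁ + ρ • L₂) ∧
    CEloss piv p (L₁ + ρ • L₂) ≤
      entropyH piv p + (V : ℝ) * Real.exp (2 * specNorm L₁) * Real.exp (-ρ) := by
  classical
  set L : Matrix (Fin V) (Fin m) ℝ := L₁ + ρ • L₂ with hLdef
  set B : ℝ := (V : ℝ) * Real.exp (2 * specNorm L₁) * Real.exp (-ρ) with hBdef
  -- per-context difference
  have key : ∀ j : Fin m,
      0 ≤ (∑ z ∈ Finset.univ.filter (fun z => 0 < p j z), p j z * Real.log (p j z))
          - (∑ z ∈ Finset.univ.filter (fun z => 0 < p j z),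
              p j z * Real.log (Real.exp (L z j) / ∑ v, Real.exp (L v j)))
      ∧ (∑ z ∈ Finset.univ.filter (fun z => 0 < p j z), p j z * Real.log (p j z))
          - (∑ z ∈ Finset.univ.filter (fun z => 0 < p j z),
              p j z * Real.log (Real.exp (L z j) / ∑ v, Real.exp (L v j))) ≤ B := by
    intro j
    set S : Finset (Fin V) := Finset.univ.filter (fun z => 0 < p j z) with hSdef
    have hSsum : ∑ v ∈ S, p j v = 1 := by
      rw [← hpsum j]
      apply Finset.sum_subset (Finset.filter_subset _ _)
      intro v _ hv
      simp only [S, Finset.mem_filter, Finset.mem_univ, true_and] at hv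
      exact le_antisymm (not_lt.mp hv) (hp j v)
    set Sig : ℝ := ∑ v, Real.exp (L v j) with hSigdef
    have hSigpos : 0 < Sig := by
      haveI : Nonempty (Fin V) := ⟨⟨0, hV⟩⟩
      exact Finset.sum_pos (fun v _ => Real.exp_pos _) Finset.univ_nonempty
    set R : ℝ := ∑ v ∈ Finset.univ.filter (fun z => ¬ 0 < p j z), Real.exp (L v j) with hRdef
    have hRnn : 0 ≤ R := Finset.sum_nonneg fun v _ => (Real.exp_pos _).le
    have hsplit : Sig = (∑ v ∈ S, Real.exp (L v j)) + R := by
      rw [hSigdef, hRdef, hSdef]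
      exact (Finset.sum_filter_add_sum_filter_not Finset.univ _ _).symm
    -- key identity on support
    have hkey : ∀ z ∈ S, ∑ v ∈ S, Real.exp (L v j) = Real.exp (L z j) / p j z := by
      intro z hz
      have hpz : 0 < p j z := (Finset.mem_filter.mp hz).2
      have : ∀ v ∈ S, Real.exp (L v j) = p j v * (Real.exp (L z j) / p j z) := by
        intro v hv
        have hpv : 0 < p j v := (Finset.mem_filter.mp hv).2
        have h1 : L₁ v j - L₁ z j = Real.log (p j v / p j z) := hL₁ j v z hpv hpz
        have h2 : L₂ v j = L₂ z j := hL₂.1 j v z hpv hpz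
        have hLv : L v j = Real.log (p j v / p j z) + L z j := by
          simp only [hLdef, Matrix.add_apply, Matrix.smul_apply, smul_eq_mul]
          rw [← h1, h2]; ring
        rw [hLv, Real.exp_add, Real.exp_log (div_pos hpv hpz)]
        field_simp
      rw [Finset.sum_congr rfl this, ← Finset.sum_mul, hSsum, one_mul]
    -- per-z bound
    have hterm : ∀ z ∈ S,
        0 ≤ Real.log (p j z) - Real.log (Real.exp (L z j) / Sig)
        ∧ Real.log (p j z) - Real.log (Real.exp (L z j) / Sig) ≤ B := by
      intro z hz
      have hpz : 0 < p j z := (Finset.mem_filter.mp hz).2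
      have hpz1 : p j z ≤ 1 := by
        rw [← hpsum j]
        exact Finset.single_le_sum (fun v _ => hp j v) (Finset.mem_univ z)
      set x : ℝ := p j z * R * Real.exp (-(L z j)) with hxdef
      have hxnn : 0 ≤ x := by positivity
      have hD : Real.log (p j z) - Real.log (Real.exp (L z j) / Sig) = Real.log (1 + x) := by
        rw [Real.log_div (Real.exp_ne_zero _) (ne_of_gt hSigpos), Real.log_exp]
        have h1x : 1 + x = p j z * Sig * Real.exp (-(L z j)) := by
          have he : Real.exp (L z j) * Real.exp (-(L z j)) = 1 := by
            rw [← Real.exp_add]; simp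
          have hexp : p j z * (Real.exp (L z j) / p j z + R) * Real.exp (-(L z j))
              = Real.exp (L z j) * Real.exp (-(L z j)) + p j z * R * Real.exp (-(L z j)) := by
            field_simp
          rw [hsplit, hkey z hz, hxdef, hexp, he]
        rw [h1x, Real.log_mul (by positivity) (Real.exp_ne_zero _),
          Real.log_mul (ne_of_gt hpz) (ne_of_gt hSigpos), Real.log_exp]
        ring
      constructor
      · rw [hD]; exact Real.log_nonneg (by linarith)
      · rw [hD]
        have hlog : Real.log (1 + x) ≤ x := by
          have := Real.log_le_sub_one_of_pos (show (0:ℝ) < 1 + x by linarith)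
          linarith
        refine hlog.trans ?_
        -- bound x
        have hxle : x ≤ B := by
          have hxeq : x = ∑ v ∈ Finset.univ.filter (fun z => ¬ 0 < p j z),
              p j z * (Real.exp (L v j) * Real.exp (-(L z j))) := by
            rw [hxdef, hRdef, Finset.mul_sum, Finset.sum_mul]
            exact Finset.sum_congr rfl fun v _ => by ring
          rw [hxeq]
          have hone : ∀ v ∈ Finset.univ.filter (fun z => ¬ 0 < p j z),
              p j z * (Real.exp (L v j) * Real.exp (-(L z j)))
                ≤ Real.exp (2 * specNorm L₁) * Real.exp (-ρ) := by
            intro v hv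
            have hpv : ¬ 0 < p j v := by
              simpa using (Finset.mem_filter.mp hv).2
            have hmargin : 1 ≤ L₂ z j - L₂ v j := hL₂.2 j z v hpz hpv
            have hb1 : |L₁ v j| ≤ specNorm L₁ := abs_entry_le_specNorm hm L₁ v j
            have hb2 : |L₁ z j| ≤ specNorm L₁ := abs_entry_le_specNorm hm L₁ z j
            have hLd : L v j - L z j ≤ 2 * specNorm L₁ - ρ := by
              simp only [hLdef, Matrix.add_apply, Matrix.smul_apply, smul_eq_mul]
              have h1 : L₁ v j - L₁ z j ≤ 2 * specNorm L₁ := by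
                cases' abs_le.mp hb1 with a1 a2
                cases' abs_le.mp hb2 with b1 b2
                linarith
              have h2 : ρ * L₂ v j - ρ * L₂ z j ≤ -ρ := by
                have := mul_le_mul_of_nonneg_left hmargin hρ.le
                nlinarith
              linarith
            calc p j z * (Real.exp (L v j) * Real.exp (-(L z j)))
                ≤ 1 * (Real.exp (L v j) * Real.exp (-(L z j))) := by
                  apply mul_le_mul_of_nonneg_right hpz1 (by positivity)
              _ = Real.exp (L v j - L z j) := by rw [one_mul, ← Real.exp_add]; ring_nf
              _ ≤ Real.exp (2 * specNorm L₁ - ρ) := Real.exp_le_exp.mpr hLd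
              _ = Real.exp (2 * specNorm L₁) * Real.exp (-ρ) := by
                  rw [← Real.exp_add]; ring_nf
          calc ∑ v ∈ Finset.univ.filter (fun z => ¬ 0 < p j z),
                p j z * (Real.exp (L v j) * Real.exp (-(L z j)))
              ≤ ∑ _v ∈ Finset.univ.filter (fun z => ¬ 0 < p j z),
                Real.exp (2 * specNorm L₁) * Real.exp (-ρ) := Finset.sum_le_sum hone
            _ = ((Finset.univ.filter (fun z => ¬ 0 < p j z)).card : ℝ)
                  * (Real.exp (2 * specNorm L₁) * Real.exp (-ρ)) := by
                  rw [Finset.sum_const, nsmul_eq_mul]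
            _ ≤ (V : ℝ) * (Real.exp (2 * specNorm L₁) * Real.exp (-ρ)) := by
                  apply mul_le_mul_of_nonneg_right _ (by positivity)
                  exact_mod_cast (Finset.card_filter_le _ _).trans_eq (Finset.card_univ.trans (Fintype.card_fin V))
            _ = B := by rw [hBdef]; ring
        exact hxle
    -- assemble per-j
    have hdiff : (∑ z ∈ S, p j z * Real.log (p j z))
        - (∑ z ∈ S, p j z * Real.log (Real.exp (L z j) / Sig))
        = ∑ z ∈ S, p j z * (Real.log (p j z) - Real.log (Real.exp (L z j) / Sig)) := by
      rw [← Finset.sum_sub_distrib]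
      congr 1; funext z; ring
    constructor
    · rw [hdiff]
      apply Finset.sum_nonneg
      intro z hz
      exact mul_nonneg (hp j z) (hterm z hz).1
    · rw [hdiff]
      calc ∑ z ∈ S, p j z * (Real.log (p j z) - Real.log (Real.exp (L z j) / Sig))
          ≤ ∑ z ∈ S, p j z * B := by
            apply Finset.sum_le_sum
            intro z hz
            exact mul_le_mul_of_nonneg_left (hterm z hz).2 (hp j z)
        _ = B := by rw [← Finset.sum_mul, hSsum, one_mul]
  -- assemble over j
  have hmain : CEloss piv p L - entropyH piv p = ∑ j, piv j *
      ((∑ z ∈ Finset.univ.filter (fun z => 0 < p j z), p j z * Real.log (p j z))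
        - (∑ z ∈ Finset.univ.filter (fun z => 0 < p j z),
            p j z * Real.log (Real.exp (L z j) / ∑ v, Real.exp (L v j)))) := by
    simp only [CEloss, entropyH]
    rw [sub_neg_eq_add, neg_add_eq_sub, ← Finset.sum_sub_distrib]
    exact Finset.sum_congr rfl fun j _ => by ring
  constructor
  · have h0 : 0 ≤ CEloss piv p L - entropyH piv p := by
      rw [hmain]
      exact Finset.sum_nonneg fun j _ => mul_nonneg (hpiv j).le (key j).1
    linarith
  · have h1 : CEloss piv p L - entropyH piv p ≤ B := by
      rw [hmain]
      calc ∑ j, piv j * _ ≤ ∑ j, piv j * B := by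
            apply Finset.sum_le_sum
            intro j _
            exact mul_le_mul_of_nonneg_left (key j).2 (hpiv j).le
        _ = B := by rw [← Finset.sum_mul, hpisum, one_mul]
    linarith

/-- if `L₁` is NTP-compatible and `L₂` is NTP-SVM feasible, then
`L_ρ = L₁ + ρ L₂` satisfies `H ≤ CE(L_ρ) ≤ H + V e^{2‖L₁‖₂} e^{−ρ}`, so `CE(L_ρ) → H`;
if moreover `rank(L₁ + ρ L₂) ≤ d` for all ρ > 0, then `L_ρ` admits factorizations
`W_ρ H_ρ = L_ρ` with `CE(W_ρ H_ρ) → H`. -/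
theorem stmt_11 (V m d : ℕ) (hV : 2 ≤ V) (hm : 0 < m) (hd : 0 < d)
    (piv : Fin m → ℝ) (hpiv : ∀ j, 0 < piv j) (hpisum : ∑ j, piv j = 1)
    (p : Fin m → Fin V → ℝ) (hp : ∀ j z, 0 ≤ p j z) (hpsum : ∀ j, ∑ z, p j z = 1)
    (L₁ L₂ : Matrix (Fin V) (Fin m) ℝ)
    (hL₁ : ∀ j z z', 0 < p j z → 0 < p j z' →
        L₁ z j - L₁ z' j = Real.log (p j z / p j z'))
    (hL₂ : svmFeasibleP p L₂) :
    (∀ ρ : ℝ, 0 < ρ →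
        entropyH piv p ≤ CEloss piv p (L₁ + ρ • L₂) ∧
        CEloss piv p (L₁ + ρ • L₂) ≤
          entropyH piv p + (V : ℝ) * Real.exp (2 * specNorm L₁) * Real.exp (-ρ)) ∧
    Tendsto (fun ρ : ℝ => CEloss piv p (L₁ + ρ • L₂)) atTop (𝓝 (entropyH piv p)) ∧
    ((∀ ρ : ℝ, 0 < ρ → (L₁ + ρ • L₂).rank ≤ d) →
      ∃ (W : ℝ → Matrix (Fin V) (Fin d) ℝ) (H : ℝ → Matrix (Fin d) (Fin m) ℝ),
        (∀ ρ : ℝ, 0 < ρ → W ρ * H ρ = L₁ + ρ • L₂) ∧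
        Tendsto (fun ρ : ℝ => CEloss piv p (W ρ * H ρ)) atTop (𝓝 (entropyH piv p))) := by
  have hV0 : 0 < V := lt_of_lt_of_le two_pos hV
  have hbounds : ∀ ρ : ℝ, 0 < ρ →
      entropyH piv p ≤ CEloss piv p (L₁ + ρ • L₂) ∧
      CEloss piv p (L₁ + ρ • L₂) ≤
        entropyH piv p + (V : ℝ) * Real.exp (2 * specNorm L₁) * Real.exp (-ρ) :=
    fun ρ hρ => ce_bounds hV0 hm piv hpiv hpisum p hp hpsum L₁ L₂ hL₁ hL₂ ρ hρ
  have htend : Tendsto (fun ρ : ℝ => CEloss piv p (L₁ + ρ • L₂)) atTop (𝓝 (entropyH piv p)) := by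
    have h0 : Tendsto (fun ρ : ℝ => Real.exp (-ρ)) atTop (𝓝 0) :=
      Real.tendsto_exp_neg_atTop_nhds_zero
    have h1 : Tendsto (fun ρ : ℝ =>
        entropyH piv p + (V : ℝ) * Real.exp (2 * specNorm L₁) * Real.exp (-ρ)) atTop
        (𝓝 (entropyH piv p)) := by
      have h2 := h0.const_mul ((V : ℝ) * Real.exp (2 * specNorm L₁))
      simp only [mul_zero] at h2
      have h3 := tendsto_const_nhds (x := entropyH piv p) (f := atTop (α := ℝ)) |>.add h2
      simpa [mul_assoc] using h3
    apply tendsto_of_tendsto_of_tendsto_of_le_of_le' tendsto_const_nhds h1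
    · filter_upwards [eventually_gt_atTop (0:ℝ)] with ρ hρ using (hbounds ρ hρ).1
    · filter_upwards [eventually_gt_atTop (0:ℝ)] with ρ hρ using (hbounds ρ hρ).2
  refine ⟨hbounds, htend, ?_⟩
  intro hrank
  have hex : ∀ ρ : ℝ, ∃ WH : Matrix (Fin V) (Fin d) ℝ × Matrix (Fin d) (Fin m) ℝ,
      0 < ρ → WH.1 * WH.2 = L₁ + ρ • L₂ := by
    intro ρ
    by_cases hρ : 0 < ρ
    · obtain ⟨W, H, hWH⟩ := exists_factorization (L₁ + ρ • L₂) (hrank ρ hρ)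
      exact ⟨(W, H), fun _ => hWH⟩
    · exact ⟨(0, 0), fun h => absurd h hρ⟩
  choose F hF using hex
  refine ⟨fun ρ => (F ρ).1, fun ρ => (F ρ).2, fun ρ hρ => hF ρ hρ, ?_⟩
  apply htend.congr'
  filter_upwards [eventually_gt_atTop (0:ℝ)] with ρ hρ
  rw [hF ρ hρ]
end
end

section
/- If d ≥ V, then the infimum over W ∈ ℝ^{V×d} and H ∈ ℝ^{d×m} of CE(WH) equals the empirical entropy H. Moreover, under the sparsity ansatz this infimum is not attained: CE(WH) > H for every W ∈ ℝ^{V×d} and H ∈ ℝ^{d×m}. -/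
open Filter Topology Matrix

noncomputable section

/-- Per-column Gibbs-type inequality. -/
lemma col_bound {V : ℕ} (hV : 0 < V) (pj Lj : Fin V → ℝ) (hp : ∀ z, 0 ≤ pj z)
    (hsum : ∑ z, pj z = 1) :
    1 - ∑ z ∈ Finset.univ.filter (fun z => 0 < pj z),
        Real.exp (Lj z) / ∑ v, Real.exp (Lj v)
    ≤ ∑ z ∈ Finset.univ.filter (fun z => 0 < pj z),
        (pj z * Real.log (pj z)
          - pj z * Real.log (Real.exp (Lj z) / ∑ v, Real.exp (Lj v))) := by
  have hne : (Finset.univ : Finset (Fin V)).Nonempty :=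
    Finset.univ_nonempty_iff.mpr ⟨⟨0, hV⟩⟩
  have hD : 0 < ∑ v, Real.exp (Lj v) :=
    Finset.sum_pos (fun v _ => Real.exp_pos _) hne
  set q : Fin V → ℝ := fun z => Real.exp (Lj z) / ∑ v, Real.exp (Lj v) with hq
  have hqpos : ∀ z, 0 < q z := fun z => div_pos (Real.exp_pos _) hD
  have hpF : ∑ z ∈ Finset.univ.filter (fun z => 0 < pj z), pj z = 1 := by
    rw [← hsum]
    exact Finset.sum_subset (Finset.filter_subset _ _)
      (fun x _ hx => le_antisymm (not_lt.mp (by simpa using hx)) (hp x))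
  have step1 : (1 : ℝ) - ∑ z ∈ Finset.univ.filter (fun z => 0 < pj z), q z
      = ∑ z ∈ Finset.univ.filter (fun z => 0 < pj z), (pj z - q z) := by
    rw [Finset.sum_sub_distrib, hpF]
  rw [step1]
  refine Finset.sum_le_sum (fun z hz => ?_)
  have hpz : 0 < pj z := (Finset.mem_filter.mp hz).2
  have h1 : Real.log (q z / pj z) ≤ q z / pj z - 1 :=
    Real.log_le_sub_one_of_pos (div_pos (hqpos z) hpz)
  rw [Real.log_div (hqpos z).ne' hpz.ne'] at h1
  have h2 : pj z * (Real.log (q z) - Real.log (pj z)) ≤ pj z * (q z / pj z - 1) :=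
    mul_le_mul_of_nonneg_left h1 hpz.le
  have h3 : pj z * (q z / pj z - 1) = q z - pj z := by field_simp
  nlinarith [h2, h3]

/-- Key lemma: entropy lower-bounds the CE loss, strictly under sparsity. -/
lemma key {V m : ℕ} (hV : 0 < V) (piv : Fin m → ℝ) (hpiv : ∀ j, 0 < piv j)
    (p : Fin m → Fin V → ℝ) (hp : ∀ j z, 0 ≤ p j z) (hpsum : ∀ j, ∑ z, p j z = 1)
    (L : Matrix (Fin V) (Fin m) ℝ) :
    entropyH piv p ≤ CEloss piv p L ∧
    ((∃ j v, ¬ 0 < p j v) → entropyH piv p < CEloss piv p L) := by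
  have hne : (Finset.univ : Finset (Fin V)).Nonempty :=
    Finset.univ_nonempty_iff.mpr ⟨⟨0, hV⟩⟩
  set q : Fin V → Fin m → ℝ :=
    fun z j => Real.exp (L z j) / ∑ v, Real.exp (L v j) with hq
  have hD : ∀ j, 0 < ∑ v, Real.exp (L v j) :=
    fun j => Finset.sum_pos (fun v _ => Real.exp_pos _) hne
  have hqpos : ∀ z j, 0 < q z j := fun z j => div_pos (Real.exp_pos _) (hD j)
  have hqsum : ∀ j, ∑ z, q z j = 1 := by
    intro j
    rw [hq]
    simp only
    rw [← Finset.sum_div, div_self (hD j).ne']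
  have hqF : ∀ j, ∑ z ∈ Finset.univ.filter (fun z => 0 < p j z), q z j ≤ 1 := by
    intro j
    rw [← hqsum j]
    exact Finset.sum_le_sum_of_subset_of_nonneg (Finset.filter_subset _ _)
      (fun z _ _ => (hqpos z j).le)
  have hdiff : CEloss piv p L - entropyH piv p
      = ∑ j, piv j * ∑ z ∈ Finset.univ.filter (fun z => 0 < p j z),
          (p j z * Real.log (p j z) - p j z * Real.log (q z j)) := by
    rw [CEloss, entropyH]
    rw [neg_sub_neg, ← Finset.sum_sub_distrib]
    refine Finset.sum_congr rfl (fun j _ => ?_)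
    rw [← mul_sub, ← Finset.sum_sub_distrib]
  have hterm : ∀ j, 1 - ∑ z ∈ Finset.univ.filter (fun z => 0 < p j z), q z j
      ≤ ∑ z ∈ Finset.univ.filter (fun z => 0 < p j z),
          (p j z * Real.log (p j z) - p j z * Real.log (q z j)) :=
    fun j => col_bound hV (p j) (fun z => L z j) (hp j) (hpsum j)
  have htnn : ∀ j, 0 ≤ piv j * ∑ z ∈ Finset.univ.filter (fun z => 0 < p j z),
      (p j z * Real.log (p j z) - p j z * Real.log (q z j)) := by
    intro j
    refine mul_nonneg (hpiv j).le ?_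
    have := hterm j
    have := hqF j
    linarith
  constructor
  · have : 0 ≤ CEloss piv p L - entropyH piv p := by
      rw [hdiff]
      exact Finset.sum_nonneg (fun j _ => htnn j)
    linarith
  · rintro ⟨j, v, hv⟩
    have hvF : v ∉ Finset.univ.filter (fun z => 0 < p j z) := by simp [hv]
    have hqFlt : ∑ z ∈ Finset.univ.filter (fun z => 0 < p j z), q z j < 1 := by
      rw [← hqsum j]
      exact Finset.sum_lt_sum_of_subset (Finset.filter_subset _ _)
        (Finset.mem_univ v) hvF (hqpos v j) (fun z _ _ => (hqpos z j).le)
    have hjpos : 0 < piv j * ∑ z ∈ Finset.univ.filter (fun z => 0 < p j z),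
        (p j z * Real.log (p j z) - p j z * Real.log (q z j)) := by
      refine mul_pos (hpiv j) ?_
      have := hterm j
      linarith
    have : 0 < CEloss piv p L - entropyH piv p := by
      rw [hdiff]
      exact Finset.sum_pos' (fun i _ => htnn i) ⟨j, Finset.mem_univ j, hjpos⟩
    linarith

/-- Any logit matrix is achievable when `V ≤ d`. -/
lemma surj {V m d : ℕ} (hdV : V ≤ d) (L : Matrix (Fin V) (Fin m) ℝ) :
    ∃ (W : Matrix (Fin V) (Fin d) ℝ) (H : Matrix (Fin d) (Fin m) ℝ), W * H = L := by
  refine ⟨Matrix.of fun z i => if i = Fin.castLE hdV z then 1 else 0,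
         Matrix.of fun i j => if h : (i : ℕ) < V then L ⟨i, h⟩ j else 0, ?_⟩
  ext z j
  rw [Matrix.mul_apply]
  rw [Finset.sum_eq_single (Fin.castLE hdV z)]
  · simp [z.isLt]
  · intro b _ hb
    simp [hb]
  · intro h
    exact absurd (Finset.mem_univ _) h


/-- CE of the logit matrix `log(p+δ)`. -/
lemma ce_log_eq {V m : ℕ} (piv : Fin m → ℝ) (p : Fin m → Fin V → ℝ)
    (hp : ∀ j z, 0 ≤ p j z) (hpsum : ∀ j, ∑ z, p j z = 1) {δ : ℝ} (hδ : 0 < δ) :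
    CEloss piv p (Matrix.of (fun z j => Real.log (p j z + δ)))
      = -∑ j, piv j * ∑ z ∈ Finset.univ.filter (fun z => 0 < p j z),
          p j z * Real.log ((p j z + δ) / (1 + (V : ℝ) * δ)) := by
  rw [CEloss]
  congr 1
  refine Finset.sum_congr rfl (fun j _ => ?_)
  congr 1
  have hexp : ∀ v, Real.exp (Matrix.of (fun z j => Real.log (p j z + δ)) v j) = p j v + δ := by
    intro v
    simp only [Matrix.of_apply]
    exact Real.exp_log (by linarith [hp j v])
  have hden : (∑ v, Real.exp (Matrix.of (fun z j => Real.log (p j z + δ)) v j)) = 1 + (V : ℝ) * δ := by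
    simp only [hexp]
    rw [Finset.sum_add_distrib, hpsum j, Finset.sum_const, Finset.card_univ,
      Fintype.card_fin, nsmul_eq_mul]
  refine Finset.sum_congr rfl (fun z hz => ?_)
  rw [hden, hexp z]

set_option maxHeartbeats 1000000 in
/-- if `d ≥ V`, the infimum over `W, H` of `CE(WH)` equals the empirical entropy
`H`, and under the sparsity ansatz this infimum is not attained: `CE(WH) > H` always. -/
theorem stmt_12 (V m d : ℕ) (hV : 2 ≤ V) (hm : 0 < m) (hd : 0 < d)
    (piv : Fin m → ℝ) (hpiv : ∀ j, 0 < piv j) (hpisum : ∑ j, piv j = 1)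
    (p : Fin m → Fin V → ℝ) (hp : ∀ j z, 0 ≤ p j z) (hpsum : ∀ j, ∑ z, p j z = 1)
    (hdV : V ≤ d) :
    sInf {c : ℝ | ∃ (W : Matrix (Fin V) (Fin d) ℝ) (H : Matrix (Fin d) (Fin m) ℝ),
        c = CEloss piv p (W * H)} = entropyH piv p ∧
    ((∃ j, ∃ v, ¬ 0 < p j v) →
      ∀ (W : Matrix (Fin V) (Fin d) ℝ) (H : Matrix (Fin d) (Fin m) ℝ),
        entropyH piv p < CEloss piv p (W * H)) := by
  have hV0 : 0 < V := by omega
  have hmem : ∀ L : Matrix (Fin V) (Fin m) ℝ,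
      CEloss piv p L ∈ {c : ℝ | ∃ (W : Matrix (Fin V) (Fin d) ℝ)
        (H : Matrix (Fin d) (Fin m) ℝ), c = CEloss piv p (W * H)} := by
    intro L
    obtain ⟨W, H, hWH⟩ := surj hdV L
    exact ⟨W, H, by rw [hWH]⟩
  have hbdd : BddBelow {c : ℝ | ∃ (W : Matrix (Fin V) (Fin d) ℝ)
      (H : Matrix (Fin d) (Fin m) ℝ), c = CEloss piv p (W * H)} := by
    refine ⟨entropyH piv p, ?_⟩
    rintro c ⟨W, H, rfl⟩
    exact (key hV0 piv hpiv p hp hpsum (W * H)).1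
  have hne : Set.Nonempty {c : ℝ | ∃ (W : Matrix (Fin V) (Fin d) ℝ)
      (H : Matrix (Fin d) (Fin m) ℝ), c = CEloss piv p (W * H)} :=
    ⟨_, hmem 0⟩
  set g : ℝ → ℝ := fun δ => -∑ j, piv j * ∑ z ∈ Finset.univ.filter (fun z => 0 < p j z),
      p j z * Real.log ((p j z + δ) / (1 + V * δ)) with hg
  have hg0 : g 0 = entropyH piv p := by
    rw [hg, entropyH]
    simp
  have htend : Tendsto g (𝓝[>] (0:ℝ)) (𝓝 (entropyH piv p)) := by
    rw [← hg0]
    refine Tendsto.mono_left ?_ nhdsWithin_le_nhds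
    refine Tendsto.neg (tendsto_finset_sum _ (fun j _ => ?_))
    refine Tendsto.const_mul _ (tendsto_finset_sum _ (fun z hz => ?_))
    have hpz : 0 < p j z := (Finset.mem_filter.mp hz).2
    refine Tendsto.const_mul _ ?_
    have h1 : Tendsto (fun δ : ℝ => (p j z + δ) / (1 + V * δ)) (𝓝 0) (𝓝 (p j z)) := by
      have : Tendsto (fun δ : ℝ => (p j z + δ) / (1 + V * δ)) (𝓝 0)
          (𝓝 ((p j z + 0) / (1 + V * 0))) := by
        apply Tendsto.div
        · exact (tendsto_const_nhds.add tendsto_id)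
        · exact (tendsto_const_nhds.add (tendsto_id.const_mul _))
        · norm_num
      simpa using this
    have h2 : ContinuousAt Real.log (p j z) := Real.continuousAt_log hpz.ne'
    have h3 := h2.tendsto.comp h1
    rw [add_zero, mul_zero, add_zero, div_one]
    exact h3
  have hgmem : ∀ δ : ℝ, 0 < δ → g δ ∈ {c : ℝ | ∃ (W : Matrix (Fin V) (Fin d) ℝ)
      (H : Matrix (Fin d) (Fin m) ℝ), c = CEloss piv p (W * H)} := by
    intro δ hδ
    have := hmem (Matrix.of (fun z j => Real.log (p j z + δ)))
    rwa [ce_log_eq piv p hp hpsum hδ] at this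
  constructor
  · refine le_antisymm ?_ (le_csInf hne ?_)
    · refine ge_of_tendsto htend ?_
      filter_upwards [self_mem_nhdsWithin] with δ hδ
      exact csInf_le hbdd (hgmem δ hδ)
    · rintro c ⟨W, H, rfl⟩
      exact (key hV0 piv hpiv p hp hpsum (W * H)).1
  · intro hsp W H
    exact (key hV0 piv hpiv p hp hpsum (W * H)).2 hsp
end
end
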